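/- arXiv:1905.13095 — 5 statements merged into one kernel-verified Lean document; each statement's English description precedes it below -/
import Mathlib

section
/- (Theorem 4.1(i), dual-adversary feasibility form.) Let ℓ, n, m ≥ 1, let D ⊆ [ℓ]^n be a finite set, and let 𝒯 be a generalized decision tree with a G-coloring that is read-once along paths and decides a function f : D → [m]. Suppose every root-to-leaf path of 𝒯 has length at most T and contains at most G red edges, where G, T ≥ 1 are real numbers. Then there exist a finite-dimensional complex inner product space H and vectors u_{x,j}, w_{x,j} ∈ H for x ∈ D and 1 ≤ j ≤ n such that: (a) for all x, y ∈ D, Σ_{j : x_j ≠ y_j} ⟨u_{x,j}, w_{y,j}⟩ = 1 − δ_{f(x), f(y)} (the sum over all j with x_j ≠ y_j of the inner products equals 0 if f(x) = f(y) and 1 otherwise); and (b) for every x ∈ D, Σ_{j=1}^n ‖u_{x,j}‖² ≤ 12·√(G·T) and Σ_{j=1}^n ‖w_{x,j}‖² ≤ 12·√(G·T). -/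
open scoped InnerProductSpace

/-- A generalized decision tree over the alphabet `Fin ℓ`, input length `n` and output
set `Fin m`, together with a G-coloring of its edges (`true` = black, `false` = red).
At a `node J Q color child`: `J` is the query index carried by the vertex, `Q q` is the
representative of the class of the partition of `Fin ℓ` containing `q` (so the classes
are the fibers of `Q`), `color q` is the color of the outgoing edge labeled by the class
of `q`, and `child q` is the child reached along that edge. -/
inductive GDT (ℓ n m : ℕ) : Type where
  | leaf (label : Fin m) : GDT ℓ n m
  | node (J : Fin n) (Q : Fin ℓ → Fin ℓ) (color : Fin ℓ → Bool)
      (child : Fin ℓ → GDT ℓ n m) : GDT ℓ n m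

namespace GDT

variable {ℓ n m : ℕ}

/-- Well-formedness of the partitions: at every vertex, `Q` is idempotent (so it is a
class-representative map for the partition of `Fin ℓ` into the fibers of `Q`), and the
child reached depends only on the class. -/
def TreeWF : GDT ℓ n m → Prop
  | .leaf _ => True
  | .node _ Q _ child =>
      (∀ q, Q (Q q) = Q q) ∧ (∀ q, child (Q q) = child q) ∧ ∀ q, TreeWF (child q)

/-- Well-formedness of the G-coloring: the color of an outgoing edge depends only on the
class, and every vertex has at most one black (`true`) outgoing edge. -/
def ColorWF : GDT ℓ n m → Prop
  | .leaf _ => True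
  | .node _ Q color child =>
      (∀ q, color (Q q) = color q) ∧
      (∀ q q', color q = true → color q' = true → Q q = Q q') ∧
      ∀ q, ColorWF (child q)

/-- The label of the leaf reached by the computation path of input `x`. -/
def output : GDT ℓ n m → (Fin n → Fin ℓ) → Fin m
  | .leaf a, _ => a
  | .node J _ _ child, x => output (child (x J)) x

/-- The length (number of edges) of the computation path of input `x`. -/
def pathLen : GDT ℓ n m → (Fin n → Fin ℓ) → ℕ
  | .leaf _, _ => 0
  | .node J _ _ child, x => pathLen (child (x J)) x + 1

/-- The number of red (`false`) edges on the computation path of input `x`. -/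
def redCount : GDT ℓ n m → (Fin n → Fin ℓ) → ℕ
  | .leaf _, _ => 0
  | .node J _ color child, x =>
      redCount (child (x J)) x + if color (x J) = false then 1 else 0

/-- `t.ReadOnceFrom s`: no query index of `s` occurs in `t`, and no query index is used
twice along a root-to-leaf path of `t`. -/
def ReadOnceFrom : GDT ℓ n m → Finset (Fin n) → Prop
  | .leaf _, _ => True
  | .node J _ _ child, s => J ∉ s ∧ ∀ q, ReadOnceFrom (child q) (insert J s)

/-- The tree is read-once along paths: no query index appears at two vertices of the same
root-to-leaf path. -/
def ReadOnce (t : GDT ℓ n m) : Prop := t.ReadOnceFrom ∅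

end GDT

namespace Aux
open GDT
open scoped Classical
variable {ℓ n m : ℕ}

noncomputable def rep (child : Fin ℓ → GDT ℓ n m) (q : Fin ℓ) : Fin ℓ :=
  (Finset.univ.filter fun q' => child q' = child q).min'
    ⟨q, Finset.mem_filter.2 ⟨Finset.mem_univ q, rfl⟩⟩

lemma child_rep (child : Fin ℓ → GDT ℓ n m) (q : Fin ℓ) : child (rep child q) = child q := by
  have h := Finset.min'_mem (Finset.univ.filter fun q' => child q' = child q)
    ⟨q, Finset.mem_filter.2 ⟨Finset.mem_univ q, rfl⟩⟩
  exact (Finset.mem_filter.1 h).2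

lemma rep_le (child : Fin ℓ → GDT ℓ n m) (q p : Fin ℓ) (hp : child p = child q) :
    rep child q ≤ p := by
  unfold rep
  exact Finset.min'_le _ p (Finset.mem_filter.2 ⟨Finset.mem_univ p, hp⟩)

lemma rep_congr {child : Fin ℓ → GDT ℓ n m} {q q' : Fin ℓ} (h : child q = child q') :
    rep child q = rep child q' :=
  le_antisymm (rep_le child q _ ((child_rep child q').trans h.symm))
    (rep_le child q' _ ((child_rep child q).trans h))

lemma child_of_rep_eq {child : Fin ℓ → GDT ℓ n m} {q q' : Fin ℓ} (h : rep child q = rep child q') :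
    child q = child q' := by
  have h1 := child_rep child q
  have h2 := child_rep child q'
  rw [← h1, h, h2]

/-- index of the base coefficients -/
abbrev Idx (ℓ m : ℕ) := Bool × Option (Fin ℓ) × Option (Fin m)

def oInd {k : ℕ} (r : Fin k) (sgn : ℝ) : Option (Fin k) → ℝ
  | none => 1
  | some c => if c = r then sgn else 0

noncomputable def uslot (β : ℝ) (c : Bool) : Bool → ℝ
  | false => if c then 0 else β
  | true => if c then β⁻¹ else 0

noncomputable def wslot (β : ℝ) (c : Bool) : Bool → ℝ
  | false => β⁻¹
  | true => if c then 0 else β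

noncomputable def ucoef (β : ℝ) (c : Bool) (r : Fin ℓ) (a : Fin m) (b : Idx ℓ m) : ℝ :=
  uslot β c b.1 * oInd r (-1) b.2.1 * oInd a (-1) b.2.2

noncomputable def wcoef (β : ℝ) (c : Bool) (r : Fin ℓ) (a : Fin m) (b : Idx ℓ m) : ℝ :=
  wslot β c b.1 * oInd r 1 b.2.1 * oInd a 1 b.2.2

lemma sum_triple {α β γ : Type*} [Fintype α] [Fintype β] [Fintype γ]
    (f : α → ℝ) (g : β → ℝ) (h : γ → ℝ) :
    ∑ p : α × β × γ, f p.1 * g p.2.1 * h p.2.2 = (∑ a, f a) * (∑ b, g b) * (∑ c, h c) := by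
  simp only [Fintype.sum_prod_type, mul_assoc, ← Finset.mul_sum, ← Finset.sum_mul]

lemma sum_oInd_mul {k : ℕ} (r r' : Fin k) (s s' : ℝ) :
    ∑ o : Option (Fin k), oInd r s o * oInd r' s' o = 1 + (if r = r' then s * s' else 0) := by
  rw [Fintype.sum_option]
  simp only [oInd, one_mul]
  congr 1
  have key : ∀ c : Fin k, (if c = r then s else 0) * (if c = r' then s' else 0)
      = if c = r then (if r = r' then s * s' else 0) else 0 := by
    intro c
    by_cases h1 : c = r <;> by_cases h2 : c = r' <;> subst_eqs <;> simp_all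
  rw [Finset.sum_congr rfl fun c _ => key c]
  rw [Finset.sum_ite_eq' Finset.univ r (fun _ => if r = r' then s * s' else 0)]
  simp

lemma sum_uslot_mul_wslot {β : ℝ} (hβ : β ≠ 0) (cx cy : Bool) :
    ∑ s : Bool, uslot β cx s * wslot β cy s = if cx && cy then 0 else 1 := by
  rw [Fintype.sum_bool]
  cases cx <;> cases cy <;>
    simp [uslot, wslot, mul_inv_cancel₀ hβ, inv_mul_cancel₀ hβ]

lemma sum_uslot_sq {β : ℝ} (c : Bool) :
    ∑ s : Bool, uslot β c s ^ 2 = if c then β⁻¹ ^ 2 else β ^ 2 := by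
  rw [Fintype.sum_bool]; cases c <;> simp [uslot]

lemma sum_wslot_sq {β : ℝ} (c : Bool) :
    ∑ s : Bool, wslot β c s ^ 2 = β⁻¹ ^ 2 + if c then 0 else β ^ 2 := by
  rw [Fintype.sum_bool]; cases c <;> simp [wslot, add_comm]

lemma sum_ucoef_mul_wcoef {β : ℝ} (hβ : β ≠ 0) (cx cy : Bool) (rx ry : Fin ℓ) (ax ay : Fin m)
    (hb : cx = true → cy = true → rx = ry) :
    ∑ b : Idx ℓ m, ucoef β cx rx ax b * wcoef β cy ry ay b
      = (if rx = ry then 0 else 1) * (if ax = ay then 0 else 1) := by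
  have : ∀ b : Idx ℓ m, ucoef β cx rx ax b * wcoef β cy ry ay b
      = (fun s => uslot β cx s * wslot β cy s) b.1 *
        (fun o => oInd rx (-1) o * oInd ry 1 o) b.2.1 *
        (fun o => oInd ax (-1) o * oInd ay 1 o) b.2.2 := by
    intro b; simp only [ucoef, wcoef]; ring
  have h2 := sum_triple (fun s => uslot β cx s * wslot β cy s)
    (fun o => oInd rx (-1) o * oInd ry 1 o) (fun o => oInd ax (-1) o * oInd ay 1 o)
  rw [Finset.sum_congr rfl (fun b _ => this b), h2,
    sum_uslot_mul_wslot hβ, sum_oInd_mul, sum_oInd_mul]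
  by_cases hr : rx = ry <;> by_cases ha : ax = ay <;> cases cx <;> cases cy <;>
    simp_all

lemma sum_ucoef_sq {β : ℝ} (c : Bool) (r : Fin ℓ) (a : Fin m) :
    ∑ b : Idx ℓ m, ucoef β c r a b ^ 2 = (if c then β⁻¹ ^ 2 else β ^ 2) * 4 := by
  have : ∀ b : Idx ℓ m, ucoef β c r a b ^ 2
      = (fun s => uslot β c s ^ 2) b.1 * (fun o => oInd r (-1) o ^ 2) b.2.1 *
        (fun o => oInd a (-1) o ^ 2) b.2.2 := by
    intro b; simp only [ucoef]; ring
  have h2 := sum_triple (fun s => uslot β c s ^ 2)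
    (fun o => oInd r (-1) o ^ 2) (fun o => oInd a (-1) o ^ 2)
  rw [Finset.sum_congr rfl (fun b _ => this b), h2, sum_uslot_sq]
  have h1 : ∀ (k : ℕ) (r : Fin k) (s : ℝ), ∑ o : Option (Fin k), oInd r s o ^ 2 = 1 + s ^ 2 := by
    intro k r s
    have := sum_oInd_mul r r s s
    simpa [sq] using this
  rw [h1, h1]; ring

lemma sum_wcoef_sq {β : ℝ} (c : Bool) (r : Fin ℓ) (a : Fin m) :
    ∑ b : Idx ℓ m, wcoef β c r a b ^ 2 = (β⁻¹ ^ 2 + if c then 0 else β ^ 2) * 4 := by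
  have : ∀ b : Idx ℓ m, wcoef β c r a b ^ 2
      = (fun s => wslot β c s ^ 2) b.1 * (fun o => oInd r 1 o ^ 2) b.2.1 *
        (fun o => oInd a 1 o ^ 2) b.2.2 := by
    intro b; simp only [wcoef]; ring
  have h2 := sum_triple (fun s => wslot β c s ^ 2)
    (fun o => oInd r 1 o ^ 2) (fun o => oInd a 1 o ^ 2)
  rw [Finset.sum_congr rfl (fun b _ => this b), h2, sum_wslot_sq]
  have h1 : ∀ (k : ℕ) (r : Fin k) (s : ℝ), ∑ o : Option (Fin k), oInd r s o ^ 2 = 1 + s ^ 2 := by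
    intro k r s
    have := sum_oInd_mul r r s s
    simpa [sq] using this
  rw [h1, h1]; ring

def bCount : GDT ℓ n m → (Fin n → Fin ℓ) → ℕ
  | .leaf _, _ => 0
  | .node J _ color child, x =>
      bCount (child (x J)) x + (if color (x J) = false then 0 else 1)

lemma bCount_le_pathLen (t : GDT ℓ n m) (x : Fin n → Fin ℓ) : bCount t x ≤ t.pathLen x := by
  induction t with
  | leaf a => simp [bCount, GDT.pathLen]
  | node J Q color child IH =>
    simp only [bCount, GDT.pathLen]
    have := IH (x J)
    split <;> omega

def depth : GDT ℓ n m → ℕ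
  | .leaf _ => 0
  | .node _ _ _ child => (Finset.univ.sup fun q => depth (child q)) + 1

noncomputable def uvec (β : ℝ) : GDT ℓ n m → (Fin n → Fin ℓ) → Fin n → (ℕ → Fin (ℓ + 1)) → Idx ℓ m → ℝ
  | .leaf _, _, _, _, _ => 0
  | .node J _ color child, x, j, s, b =>
      if j = J then
        (if ∀ i, s i = 0 then
          ucoef β (color (x J)) (rep child (x J)) ((child (x J)).output x) b
        else 0)
      else
        if s 0 = (rep child (x J)).succ then
          uvec β (child (x J)) x j (fun i => s (i + 1)) b
        else 0

noncomputable def wvec (β : ℝ) : GDT ℓ n m → (Fin n → Fin ℓ) → Fin n → (ℕ → Fin (ℓ + 1)) → Idx ℓ m → ℝ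
  | .leaf _, _, _, _, _ => 0
  | .node J _ color child, y, j, s, b =>
      if j = J then
        (if ∀ i, s i = 0 then
          wcoef β (color (y J)) (rep child (y J)) ((child (y J)).output y) b
        else 0)
      else
        if s 0 = (rep child (y J)).succ then
          wvec β (child (y J)) y j (fun i => s (i + 1)) b
        else 0

def ext (N : ℕ) (f : Fin N → Fin (ℓ + 1)) : ℕ → Fin (ℓ + 1) :=
  fun i => if h : i < N then f ⟨i, h⟩ else 0

lemma ext_cons_zero (N : ℕ) (a : Fin (ℓ + 1)) (g : Fin N → Fin (ℓ + 1)) :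
    ext (N + 1) (Fin.cons a g) 0 = a := by
  rw [ext, dif_pos (Nat.succ_pos N)]
  exact Fin.cons_zero (α := fun _ => Fin (ℓ + 1)) a g

lemma ext_cons_succ (N : ℕ) (a : Fin (ℓ + 1)) (g : Fin N → Fin (ℓ + 1)) :
    (fun i => ext (N + 1) (Fin.cons a g) (i + 1)) = ext N g := by
  funext i
  simp only [ext]
  by_cases h : i < N
  · rw [dif_pos (by omega : i + 1 < N + 1), dif_pos h]
    exact Fin.cons_succ (α := fun _ => Fin (ℓ + 1)) a g ⟨i, h⟩
  · rw [dif_neg (by omega : ¬ i + 1 < N + 1), dif_neg h]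

lemma ext_allzero_iff (N : ℕ) (f : Fin N → Fin (ℓ + 1)) :
    (∀ i, ext N f i = 0) ↔ f = fun _ => 0 := by
  constructor
  · intro h
    funext i
    have := h i
    rw [ext, dif_pos i.isLt] at this
    simpa using this
  · intro h i
    rw [ext]
    split <;> simp [h]

lemma ext_cons_allzero (N : ℕ) (a : Fin (ℓ + 1)) (g : Fin N → Fin (ℓ + 1)) :
    (∀ i, ext (N + 1) (Fin.cons a g) i = 0) ↔ (a = 0 ∧ g = fun _ => 0) := by
  rw [ext_allzero_iff]
  constructor
  · intro h
    constructor
    · have := congrFun h 0; simpa using this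
    · funext i; have := congrFun h i.succ; simpa using this
  · rintro ⟨rfl, hg⟩
    funext i
    refine Fin.cases ?_ ?_ i
    · simp
    · intro k; simp [hg]

lemma sum_ext_cons (N : ℕ) (F : (Fin (N + 1) → Fin (ℓ + 1)) → ℝ) :
    ∑ sf : Fin (N + 1) → Fin (ℓ + 1), F sf
      = ∑ a : Fin (ℓ + 1), ∑ g : Fin N → Fin (ℓ + 1), F (Fin.cons a g) := by
  rw [← Equiv.sum_comp (Fin.consEquiv fun _ => Fin (ℓ + 1)) F, Fintype.sum_prod_type]
  rfl

lemma sum_ite_prop {α : Type*} [Fintype α] (P : Prop) [Decidable P] (f : α → ℝ) :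
    (∑ b : α, if P then f b else 0) = if P then ∑ b, f b else 0 := by
  split_ifs <;> simp

lemma uvec_eq_zero (β : ℝ) (x : Fin n → Fin ℓ) :
    ∀ (t : GDT ℓ n m) (s : Finset (Fin n)) (j : Fin n), t.ReadOnceFrom s → j ∈ s →
      ∀ sfun b, uvec β t x j sfun b = 0 := by
  intro t
  induction t with
  | leaf a => intro s j _ _ sfun b; rfl
  | node J Q color child IH =>
    intro s j hro hj sfun b
    obtain ⟨hJ, hch⟩ := hro
    have hne : j ≠ J := fun h => hJ (h ▸ hj)
    rw [uvec, if_neg hne]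
    split
    · exact IH (x J) (insert J s) j (hch _) (Finset.mem_insert_of_mem hj) _ _
    · rfl

lemma wvec_eq_zero (β : ℝ) (y : Fin n → Fin ℓ) :
    ∀ (t : GDT ℓ n m) (s : Finset (Fin n)) (j : Fin n), t.ReadOnceFrom s → j ∈ s →
      ∀ sfun b, wvec β t y j sfun b = 0 := by
  intro t
  induction t with
  | leaf a => intro s j _ _ sfun b; rfl
  | node J Q color child IH =>
    intro s j hro hj sfun b
    obtain ⟨hJ, hch⟩ := hro
    have hne : j ≠ J := fun h => hJ (h ▸ hj)
    rw [wvec, if_neg hne]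
    split
    · exact IH (y J) (insert J s) j (hch _) (Finset.mem_insert_of_mem hj) _ _
    · rfl

noncomputable def pairN (β : ℝ) (t : GDT ℓ n m) (x y : Fin n → Fin ℓ) (N : ℕ) (j : Fin n) : ℝ :=
  ∑ sf : Fin N → Fin (ℓ + 1), ∑ b : Idx ℓ m,
    uvec β t x j (ext N sf) b * wvec β t y j (ext N sf) b

noncomputable def unormN (β : ℝ) (t : GDT ℓ n m) (x : Fin n → Fin ℓ) (N : ℕ) (j : Fin n) : ℝ :=
  ∑ sf : Fin N → Fin (ℓ + 1), ∑ b : Idx ℓ m, (uvec β t x j (ext N sf) b) ^ 2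

noncomputable def wnormN (β : ℝ) (t : GDT ℓ n m) (x : Fin n → Fin ℓ) (N : ℕ) (j : Fin n) : ℝ :=
  ∑ sf : Fin N → Fin (ℓ + 1), ∑ b : Idx ℓ m, (wvec β t x j (ext N sf) b) ^ 2

lemma sum_sum_pick (N : ℕ) (C : ℝ) :
    (∑ a : Fin (ℓ + 1), ∑ g : Fin N → Fin (ℓ + 1),
        if a = 0 ∧ g = (fun _ => 0) then C else 0) = C := by
  have h1 : ∀ a : Fin (ℓ + 1), (∑ g : Fin N → Fin (ℓ + 1),
      if a = 0 ∧ g = (fun _ => 0) then C else 0) = if a = 0 then C else 0 := by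
    intro a
    by_cases ha : a = 0
    · simp only [ha, true_and]
      rw [Finset.sum_ite_eq' Finset.univ (fun _ => (0 : Fin (ℓ + 1))) (fun _ => C)]
      simp
    · simp [ha]
  rw [Finset.sum_congr rfl fun a _ => h1 a,
    Finset.sum_ite_eq' Finset.univ (0 : Fin (ℓ + 1)) (fun _ => C)]
  simp

lemma sum_sum_pick' (N : ℕ) (v : Fin (ℓ + 1)) (F : (Fin N → Fin (ℓ + 1)) → ℝ) :
    (∑ a : Fin (ℓ + 1), ∑ g : Fin N → Fin (ℓ + 1), if a = v then F g else 0) = ∑ g, F g := by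
  rw [Finset.sum_congr rfl fun a _ => sum_ite_prop (a = v) F,
    Finset.sum_ite_eq' Finset.univ v (fun _ => ∑ g, F g)]
  simp

lemma pair_main (β : ℝ) (hβ : β ≠ 0) (x y : Fin n → Fin ℓ) :
    ∀ (t : GDT ℓ n m) (N : ℕ) (s : Finset (Fin n)), t.TreeWF → t.ColorWF →
      t.ReadOnceFrom s → depth t ≤ N →
      (∑ j ∈ Finset.univ.filter (fun j => x j ≠ y j), pairN β t x y N j)
        = if t.output x = t.output y then 0 else 1 := by
  intro t
  induction t with
  | leaf a =>
    intro N s _ _ _ _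
    simp [pairN, uvec, wvec, GDT.output]
  | node J Q color child IH =>
    intro N s hWF hCol hro hN
    obtain ⟨hQ, hQchild, hWFc⟩ := hWF
    obtain ⟨hQcol, hblack, hColc⟩ := hCol
    obtain ⟨hJs, hroc⟩ := hro
    have hd1 : depth (GDT.node J Q color child)
        = (Finset.univ.sup fun q => depth (child q)) + 1 := rfl
    obtain ⟨N', rfl⟩ : ∃ N', N = N' + 1 := by
      refine ⟨N - 1, ?_⟩
      rw [hd1] at hN
      omega
    have hdN' : depth (child (x J)) ≤ N' := by
      have h1 : depth (child (x J)) ≤ Finset.univ.sup fun q => depth (child q) :=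
        Finset.le_sup (f := fun q => depth (child q)) (Finset.mem_univ (x J))
      rw [hd1] at hN
      omega
    have hbfact : color (x J) = true → color (y J) = true →
        rep child (x J) = rep child (y J) := by
      intro h1 h2
      have hQeq := hblack _ _ h1 h2
      have : child (x J) = child (y J) := by
        rw [← hQchild (x J), hQeq, hQchild]
      exact rep_congr this
    have hchildJ : pairN β (child (x J)) x y N' J = 0 := by
      rw [pairN]
      refine Finset.sum_eq_zero fun sf _ => Finset.sum_eq_zero fun b _ => ?_
      rw [uvec_eq_zero β x (child (x J)) (insert J s) J (hroc _) (Finset.mem_insert_self J s),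
        zero_mul]
    have hC1 : ∀ j, pairN β (.node J Q color child) x y (N' + 1) j
        = (if j = J then
            ∑ b : Idx ℓ m, ucoef β (color (x J)) (rep child (x J)) ((child (x J)).output x) b *
              wcoef β (color (y J)) (rep child (y J)) ((child (y J)).output y) b
          else 0)
          + (if rep child (x J) = rep child (y J)
              then pairN β (child (x J)) x y N' j else 0) := by
      intro j
      by_cases hj : j = J
      · rw [hj, if_pos rfl]
        have hz2 : (if rep child (x J) = rep child (y J)
            then pairN β (child (x J)) x y N' J else 0) = 0 := by
          rw [hchildJ]; simp
        rw [hz2, add_zero, pairN, sum_ext_cons]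
        have hval : ∀ (a : Fin (ℓ + 1)) (g : Fin N' → Fin (ℓ + 1)),
            (∑ b : Idx ℓ m,
              uvec β (.node J Q color child) x J (ext (N' + 1) (Fin.cons a g)) b *
              wvec β (.node J Q color child) y J (ext (N' + 1) (Fin.cons a g)) b)
            = if a = 0 ∧ g = (fun _ => 0) then
                ∑ b : Idx ℓ m,
                  ucoef β (color (x J)) (rep child (x J)) ((child (x J)).output x) b *
                  wcoef β (color (y J)) (rep child (y J)) ((child (y J)).output y) b
              else 0 := by
          intro a g
          by_cases hzz : ∀ i, ext (N' + 1) (Fin.cons a g) i = 0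
          · rw [if_pos ((ext_cons_allzero _ _ _).1 hzz)]
            refine Finset.sum_congr rfl fun b _ => ?_
            simp only [uvec, wvec, if_pos rfl, if_pos hzz, eq_self_iff_true, if_true]
          · rw [if_neg (fun hc => hzz ((ext_cons_allzero _ _ _).2 hc))]
            refine Finset.sum_eq_zero fun b _ => ?_
            simp only [uvec, wvec, if_pos rfl, if_neg hzz, eq_self_iff_true, if_true, zero_mul]
        rw [Finset.sum_congr rfl fun a _ => Finset.sum_congr rfl fun g _ => hval a g,
          sum_sum_pick]
      · rw [if_neg hj, zero_add, pairN, sum_ext_cons]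
        have hval : ∀ (a : Fin (ℓ + 1)) (g : Fin N' → Fin (ℓ + 1)),
            (∑ b : Idx ℓ m,
              uvec β (.node J Q color child) x j (ext (N' + 1) (Fin.cons a g)) b *
              wvec β (.node J Q color child) y j (ext (N' + 1) (Fin.cons a g)) b)
            = if a = (rep child (x J)).succ ∧ a = (rep child (y J)).succ then
                ∑ b : Idx ℓ m, uvec β (child (x J)) x j (ext N' g) b *
                  wvec β (child (y J)) y j (ext N' g) b
              else 0 := by
          intro a g
          simp only [uvec, wvec, if_neg hj, ext_cons_zero, ext_cons_succ]
          by_cases h1 : a = (rep child (x J)).succ <;>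
            by_cases h2 : a = (rep child (y J)).succ <;>
            simp [h1, h2]
        rw [Finset.sum_congr rfl fun a _ => Finset.sum_congr rfl fun g _ => hval a g]
        by_cases hr : rep child (x J) = rep child (y J)
        · rw [if_pos hr]
          have hcc : child (x J) = child (y J) := child_of_rep_eq hr
          have hcond : ∀ (a : Fin (ℓ + 1)) (g : Fin N' → Fin (ℓ + 1)),
              (if a = (rep child (x J)).succ ∧ a = (rep child (y J)).succ then
                ∑ b : Idx ℓ m, uvec β (child (x J)) x j (ext N' g) b *
                  wvec β (child (y J)) y j (ext N' g) b
              else 0)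
              = if a = (rep child (x J)).succ then
                  ∑ b : Idx ℓ m, uvec β (child (x J)) x j (ext N' g) b *
                    wvec β (child (x J)) y j (ext N' g) b
                else 0 := by
            intro a g
            simp only [← hr, and_self, ← hcc]
          rw [Finset.sum_congr rfl fun a _ => Finset.sum_congr rfl fun g _ => hcond a g,
            sum_sum_pick']
          rfl
        · rw [if_neg hr]
          have hcond : ∀ (a : Fin (ℓ + 1)) (g : Fin N' → Fin (ℓ + 1)),
              (if a = (rep child (x J)).succ ∧ a = (rep child (y J)).succ then
                ∑ b : Idx ℓ m, uvec β (child (x J)) x j (ext N' g) b *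
                  wvec β (child (y J)) y j (ext N' g) b
              else 0) = 0 := by
            intro a g
            rw [if_neg]
            rintro ⟨rfl, h2⟩
            exact hr (Fin.succ_injective _ h2)
          rw [Finset.sum_congr rfl fun a _ => Finset.sum_congr rfl fun g _ => hcond a g]
          simp
    rw [Finset.sum_congr rfl fun j _ => hC1 j, Finset.sum_add_distrib,
      Finset.sum_ite_eq' (Finset.univ.filter fun j => x j ≠ y j) J
        (fun _ => ∑ b : Idx ℓ m,
          ucoef β (color (x J)) (rep child (x J)) ((child (x J)).output x) b *
          wcoef β (color (y J)) (rep child (y J)) ((child (y J)).output y) b)]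
    by_cases hr : rep child (x J) = rep child (y J)
    · simp only [if_pos hr]
      have hcc : child (x J) = child (y J) := child_of_rep_eq hr
      have hIH := IH (x J) N' (insert J s) (hWFc _) (hColc _) (hroc _) hdN'
      rw [hIH]
      have hR0 : (∑ b : Idx ℓ m,
          ucoef β (color (x J)) (rep child (x J)) ((child (x J)).output x) b *
          wcoef β (color (y J)) (rep child (y J)) ((child (y J)).output y) b) = 0 := by
        rw [sum_ucoef_mul_wcoef hβ _ _ _ _ _ _ hbfact, if_pos hr, zero_mul]
      rw [hR0, ite_self, zero_add]
      simp only [GDT.output, ← hcc]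
    · simp only [if_neg hr]
      have hxy : x J ≠ y J := fun h => hr (by rw [h])
      have hmem : J ∈ Finset.univ.filter (fun j => x j ≠ y j) :=
        Finset.mem_filter.2 ⟨Finset.mem_univ _, hxy⟩
      rw [if_pos hmem, Finset.sum_const_zero, add_zero,
        sum_ucoef_mul_wcoef hβ _ _ _ _ _ _ hbfact, if_neg hr, one_mul]
      rfl

lemma unorm_main (β : ℝ) (x : Fin n → Fin ℓ) :
    ∀ (t : GDT ℓ n m) (N : ℕ) (s : Finset (Fin n)), t.ReadOnceFrom s → depth t ≤ N →
      (∑ j : Fin n, unormN β t x N j)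
        = (β ^ 2 * (t.redCount x : ℝ) + β⁻¹ ^ 2 * (bCount t x : ℝ)) * 4 := by
  intro t
  induction t with
  | leaf a =>
    intro N s _ _
    simp [unormN, uvec, GDT.redCount, bCount]
  | node J Q color child IH =>
    intro N s hro hN
    obtain ⟨hJs, hroc⟩ := hro
    have hd1 : depth (GDT.node J Q color child)
        = (Finset.univ.sup fun q => depth (child q)) + 1 := rfl
    obtain ⟨N', rfl⟩ : ∃ N', N = N' + 1 := by
      refine ⟨N - 1, ?_⟩
      rw [hd1] at hN
      omega
    have hdN' : depth (child (x J)) ≤ N' := by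
      have h1 : depth (child (x J)) ≤ Finset.univ.sup fun q => depth (child q) :=
        Finset.le_sup (f := fun q => depth (child q)) (Finset.mem_univ (x J))
      rw [hd1] at hN
      omega
    have hC1 : ∀ j, unormN β (.node J Q color child) x (N' + 1) j
        = (if j = J then (if color (x J) then β⁻¹ ^ 2 else β ^ 2) * 4 else 0)
          + unormN β (child (x J)) x N' j := by
      intro j
      by_cases hj : j = J
      · rw [hj, if_pos rfl]
        have hz : unormN β (child (x J)) x N' J = 0 := by
          rw [unormN]
          refine Finset.sum_eq_zero fun sf _ => Finset.sum_eq_zero fun b _ => ?_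
          rw [uvec_eq_zero β x (child (x J)) (insert J s) J (hroc _)
            (Finset.mem_insert_self J s)]
          ring
        rw [hz, add_zero, unormN, sum_ext_cons]
        have hval : ∀ (a : Fin (ℓ + 1)) (g : Fin N' → Fin (ℓ + 1)),
            (∑ b : Idx ℓ m,
              (uvec β (.node J Q color child) x J (ext (N' + 1) (Fin.cons a g)) b) ^ 2)
            = if a = 0 ∧ g = (fun _ => 0) then (if color (x J) then β⁻¹ ^ 2 else β ^ 2) * 4
              else 0 := by
          intro a g
          by_cases hzz : ∀ i, ext (N' + 1) (Fin.cons a g) i = 0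
          · rw [if_pos ((ext_cons_allzero _ _ _).1 hzz)]
            have hcb : ∀ b : Idx ℓ m,
                (uvec β (.node J Q color child) x J (ext (N' + 1) (Fin.cons a g)) b) ^ 2
                = (ucoef β (color (x J)) (rep child (x J)) ((child (x J)).output x) b) ^ 2 :=
              fun b => by simp only [uvec, if_pos hzz, eq_self_iff_true, if_true]
            rw [Finset.sum_congr rfl fun b _ => hcb b, sum_ucoef_sq]
          · rw [if_neg (fun hc => hzz ((ext_cons_allzero _ _ _).2 hc))]
            refine Finset.sum_eq_zero fun b _ => ?_
            simp only [uvec, if_neg hzz, eq_self_iff_true, if_true]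
            ring
        rw [Finset.sum_congr rfl fun a _ => Finset.sum_congr rfl fun g _ => hval a g,
          sum_sum_pick]
      · rw [if_neg hj, zero_add, unormN, sum_ext_cons]
        have hval : ∀ (a : Fin (ℓ + 1)) (g : Fin N' → Fin (ℓ + 1)),
            (∑ b : Idx ℓ m,
              (uvec β (.node J Q color child) x j (ext (N' + 1) (Fin.cons a g)) b) ^ 2)
            = if a = (rep child (x J)).succ then
                ∑ b : Idx ℓ m, (uvec β (child (x J)) x j (ext N' g) b) ^ 2
              else 0 := by
          intro a g
          simp only [uvec, if_neg hj, ext_cons_zero, ext_cons_succ]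
          by_cases h1 : a = (rep child (x J)).succ <;> simp [h1]
        rw [Finset.sum_congr rfl fun a _ => Finset.sum_congr rfl fun g _ => hval a g,
          sum_sum_pick']
        rfl
    rw [Finset.sum_congr rfl fun j _ => hC1 j, Finset.sum_add_distrib,
      Finset.sum_ite_eq' Finset.univ J
        (fun _ => (if color (x J) then β⁻¹ ^ 2 else β ^ 2) * 4),
      if_pos (Finset.mem_univ J), IH (x J) N' (insert J s) (hroc _) hdN']
    have hrc : (GDT.node J Q color child).redCount x
        = (child (x J)).redCount x + (if color (x J) = false then 1 else 0) := rfl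
    have hbc : bCount (GDT.node J Q color child) x
        = bCount (child (x J)) x + (if color (x J) = false then 0 else 1) := rfl
    rw [hrc, hbc]
    cases hcol : color (x J) <;> simp only [hcol, if_true, if_false] <;> push_cast <;> ring

lemma wnorm_main (β : ℝ) (x : Fin n → Fin ℓ) :
    ∀ (t : GDT ℓ n m) (N : ℕ) (s : Finset (Fin n)), t.ReadOnceFrom s → depth t ≤ N →
      (∑ j : Fin n, wnormN β t x N j)
        = (β⁻¹ ^ 2 * (t.pathLen x : ℝ) + β ^ 2 * (t.redCount x : ℝ)) * 4 := by
  intro t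
  induction t with
  | leaf a =>
    intro N s _ _
    simp [wnormN, wvec, GDT.redCount, GDT.pathLen]
  | node J Q color child IH =>
    intro N s hro hN
    obtain ⟨hJs, hroc⟩ := hro
    have hd1 : depth (GDT.node J Q color child)
        = (Finset.univ.sup fun q => depth (child q)) + 1 := rfl
    obtain ⟨N', rfl⟩ : ∃ N', N = N' + 1 := by
      refine ⟨N - 1, ?_⟩
      rw [hd1] at hN
      omega
    have hdN' : depth (child (x J)) ≤ N' := by
      have h1 : depth (child (x J)) ≤ Finset.univ.sup fun q => depth (child q) :=
        Finset.le_sup (f := fun q => depth (child q)) (Finset.mem_univ (x J))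
      rw [hd1] at hN
      omega
    have hC1 : ∀ j, wnormN β (.node J Q color child) x (N' + 1) j
        = (if j = J then (β⁻¹ ^ 2 + if color (x J) then 0 else β ^ 2) * 4 else 0)
          + wnormN β (child (x J)) x N' j := by
      intro j
      by_cases hj : j = J
      · rw [hj, if_pos rfl]
        have hz : wnormN β (child (x J)) x N' J = 0 := by
          rw [wnormN]
          refine Finset.sum_eq_zero fun sf _ => Finset.sum_eq_zero fun b _ => ?_
          rw [wvec_eq_zero β x (child (x J)) (insert J s) J (hroc _)
            (Finset.mem_insert_self J s)]
          ring
        rw [hz, add_zero, wnormN, sum_ext_cons]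
        have hval : ∀ (a : Fin (ℓ + 1)) (g : Fin N' → Fin (ℓ + 1)),
            (∑ b : Idx ℓ m,
              (wvec β (.node J Q color child) x J (ext (N' + 1) (Fin.cons a g)) b) ^ 2)
            = if a = 0 ∧ g = (fun _ => 0) then (β⁻¹ ^ 2 + if color (x J) then 0 else β ^ 2) * 4
              else 0 := by
          intro a g
          by_cases hzz : ∀ i, ext (N' + 1) (Fin.cons a g) i = 0
          · rw [if_pos ((ext_cons_allzero _ _ _).1 hzz)]
            have hcb : ∀ b : Idx ℓ m,
                (wvec β (.node J Q color child) x J (ext (N' + 1) (Fin.cons a g)) b) ^ 2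
                = (wcoef β (color (x J)) (rep child (x J)) ((child (x J)).output x) b) ^ 2 :=
              fun b => by simp only [wvec, if_pos hzz, eq_self_iff_true, if_true]
            rw [Finset.sum_congr rfl fun b _ => hcb b, sum_wcoef_sq]
          · rw [if_neg (fun hc => hzz ((ext_cons_allzero _ _ _).2 hc))]
            refine Finset.sum_eq_zero fun b _ => ?_
            simp only [wvec, if_neg hzz, eq_self_iff_true, if_true]
            ring
        rw [Finset.sum_congr rfl fun a _ => Finset.sum_congr rfl fun g _ => hval a g,
          sum_sum_pick]
      · rw [if_neg hj, zero_add, wnormN, sum_ext_cons]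
        have hval : ∀ (a : Fin (ℓ + 1)) (g : Fin N' → Fin (ℓ + 1)),
            (∑ b : Idx ℓ m,
              (wvec β (.node J Q color child) x j (ext (N' + 1) (Fin.cons a g)) b) ^ 2)
            = if a = (rep child (x J)).succ then
                ∑ b : Idx ℓ m, (wvec β (child (x J)) x j (ext N' g) b) ^ 2
              else 0 := by
          intro a g
          simp only [wvec, if_neg hj, ext_cons_zero, ext_cons_succ]
          by_cases h1 : a = (rep child (x J)).succ <;> simp [h1]
        rw [Finset.sum_congr rfl fun a _ => Finset.sum_congr rfl fun g _ => hval a g,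
          sum_sum_pick']
        rfl
    rw [Finset.sum_congr rfl fun j _ => hC1 j, Finset.sum_add_distrib,
      Finset.sum_ite_eq' Finset.univ J
        (fun _ => (β⁻¹ ^ 2 + if color (x J) then 0 else β ^ 2) * 4),
      if_pos (Finset.mem_univ J), IH (x J) N' (insert J s) (hroc _) hdN']
    have hrc : (GDT.node J Q color child).redCount x
        = (child (x J)).redCount x + (if color (x J) = false then 1 else 0) := rfl
    have hpl : (GDT.node J Q color child).pathLen x = (child (x J)).pathLen x + 1 := rfl
    rw [hrc, hpl]
    cases hcol : color (x J) <;> simp only [hcol, if_true, if_false] <;> push_cast <;> ring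

end Aux

/-- **Theorem 4.1(i), dual-adversary feasibility form.**  Given a generalized decision
tree with a G-coloring, read-once along paths, deciding `f : D → Fin m`, whose
root-to-leaf paths have length at most `T` and contain at most `G` red edges, there is a
feasible solution of the dual adversary SDP for `f` with objective value at most
`12 * √(G * T)`. -/
theorem stmt0 {ℓ n m : ℕ} (hl : 1 ≤ ℓ) (hn : 1 ≤ n) (hm : 1 ≤ m)
    (D : Finset (Fin n → Fin ℓ)) (f : (Fin n → Fin ℓ) → Fin m)
    (t : GDT ℓ n m) (htree : t.TreeWF) (hcol : t.ColorWF) (hro : t.ReadOnce)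
    (hdec : ∀ x ∈ D, t.output x = f x)
    (T G : ℝ) (hT1 : 1 ≤ T) (hG1 : 1 ≤ G)
    (hT : ∀ x : Fin n → Fin ℓ, (t.pathLen x : ℝ) ≤ T)
    (hG : ∀ x : Fin n → Fin ℓ, (t.redCount x : ℝ) ≤ G) :
    ∃ (d : ℕ) (u w : (Fin n → Fin ℓ) → Fin n → EuclideanSpace ℂ (Fin d)),
      (∀ x ∈ D, ∀ y ∈ D,
          ∑ j ∈ Finset.univ.filter (fun j => x j ≠ y j), ⟪u x j, w y j⟫_ℂ
            = if f x = f y then 0 else 1) ∧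
      (∀ x ∈ D, ∑ j, ‖u x j‖ ^ 2 ≤ 12 * Real.sqrt (G * T)) ∧
      (∀ x ∈ D, ∑ j, ‖w x j‖ ^ 2 ≤ 12 * Real.sqrt (G * T)) := by
  classical
  have hGpos : (0 : ℝ) < G := lt_of_lt_of_le one_pos hG1
  have hTpos : (0 : ℝ) < T := lt_of_lt_of_le one_pos hT1
  have hTG : (0 : ℝ) < T / G := div_pos hTpos hGpos
  set β : ℝ := Real.sqrt (Real.sqrt (T / G)) with hβdef
  have hβpos : 0 < β := Real.sqrt_pos.2 (Real.sqrt_pos.2 hTG)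
  have hβ : β ≠ 0 := ne_of_gt hβpos
  have hβ2 : β ^ 2 = Real.sqrt (T / G) := Real.sq_sqrt (Real.sqrt_nonneg _)
  have hβi2 : β⁻¹ ^ 2 = Real.sqrt (G / T) := by
    rw [inv_pow, hβ2, ← Real.sqrt_inv, inv_div]
  set N := Aux.depth t with hNdef
  set I := (Fin N → Fin (ℓ + 1)) × Aux.Idx ℓ m with hIdef
  set d := Fintype.card I with hddef
  set e : Fin d ≃ I := (Fintype.equivFin I).symm with hedef
  set U : (Fin n → Fin ℓ) → Fin n → EuclideanSpace ℂ (Fin d) := fun x j =>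
    (WithLp.equiv 2 (Fin d → ℂ)).symm
      (fun i => ((Aux.uvec β t x j (Aux.ext N (e i).1) (e i).2 : ℝ) : ℂ)) with hU
  set W : (Fin n → Fin ℓ) → Fin n → EuclideanSpace ℂ (Fin d) := fun x j =>
    (WithLp.equiv 2 (Fin d → ℂ)).symm
      (fun i => ((Aux.wvec β t x j (Aux.ext N (e i).1) (e i).2 : ℝ) : ℂ)) with hW
  have e1 : Real.sqrt (T / G) * G = Real.sqrt (G * T) := by
    have h2 : T / G * G ^ 2 = G * T := by field_simp
    calc Real.sqrt (T / G) * G = Real.sqrt (T / G) * Real.sqrt (G ^ 2) := by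
          rw [Real.sqrt_sq hGpos.le]
      _ = Real.sqrt (T / G * G ^ 2) := (Real.sqrt_mul hTG.le _).symm
      _ = Real.sqrt (G * T) := by rw [h2]
  have e2 : Real.sqrt (G / T) * T = Real.sqrt (G * T) := by
    have h2 : G / T * T ^ 2 = G * T := by field_simp
    calc Real.sqrt (G / T) * T = Real.sqrt (G / T) * Real.sqrt (T ^ 2) := by
          rw [Real.sqrt_sq hTpos.le]
      _ = Real.sqrt (G / T * T ^ 2) := (Real.sqrt_mul (div_pos hGpos hTpos).le _).symm
      _ = Real.sqrt (G * T) := by rw [h2]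
  refine ⟨d, U, W, ?_, ?_, ?_⟩
  · -- inner product identity
    intro x hx y hy
    have hinner : ∀ j : Fin n,
        (⟪U x j, W y j⟫_ℂ) = ((Aux.pairN β t x y N j : ℝ) : ℂ) := by
      intro j
      rw [hU, hW, PiLp.inner_apply]
      have h1 : ∀ i : Fin d,
          (⟪(WithLp.equiv 2 (Fin d → ℂ)).symm
              (fun i => ((Aux.uvec β t x j (Aux.ext N (e i).1) (e i).2 : ℝ) : ℂ)) i,
            (WithLp.equiv 2 (Fin d → ℂ)).symm
              (fun i => ((Aux.wvec β t y j (Aux.ext N (e i).1) (e i).2 : ℝ) : ℂ)) i⟫_ℂ)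
          = ((Aux.uvec β t x j (Aux.ext N (e i).1) (e i).2 *
              Aux.wvec β t y j (Aux.ext N (e i).1) (e i).2 : ℝ) : ℂ) := by
        intro i
        rw [WithLp.equiv_symm_apply, PiLp.toLp_apply, PiLp.toLp_apply,
          RCLike.inner_apply, Complex.conj_ofReal, ← Complex.ofReal_mul, mul_comm]
      rw [Finset.sum_congr rfl fun i _ => h1 i, ← Complex.ofReal_sum]
      congr 1
      rw [Equiv.sum_comp e (fun q : I =>
        Aux.uvec β t x j (Aux.ext N q.1) q.2 * Aux.wvec β t y j (Aux.ext N q.1) q.2)]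
      rw [Aux.pairN, Fintype.sum_prod_type]
    rw [Finset.sum_congr rfl fun j _ => hinner j, ← Complex.ofReal_sum,
      Aux.pair_main β hβ x y t N ∅ htree hcol hro (le_refl N),
      hdec x hx, hdec y hy]
    split_ifs <;> simp
  · -- u norms
    intro x hx
    have hnorm : ∀ j : Fin n, ‖U x j‖ ^ 2 = Aux.unormN β t x N j := by
      intro j
      rw [hU, EuclideanSpace.norm_eq,
        Real.sq_sqrt (Finset.sum_nonneg fun i _ => sq_nonneg _)]
      have h1 : ∀ i : Fin d,
          ‖(WithLp.equiv 2 (Fin d → ℂ)).symm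
              (fun i => ((Aux.uvec β t x j (Aux.ext N (e i).1) (e i).2 : ℝ) : ℂ)) i‖ ^ 2
          = (Aux.uvec β t x j (Aux.ext N (e i).1) (e i).2) ^ 2 := by
        intro i
        rw [WithLp.equiv_symm_apply, PiLp.toLp_apply, Complex.norm_real, Real.norm_eq_abs, sq_abs]
      rw [Finset.sum_congr rfl fun i _ => h1 i,
        Equiv.sum_comp e (fun q : I => (Aux.uvec β t x j (Aux.ext N q.1) q.2) ^ 2),
        Aux.unormN, Fintype.sum_prod_type]
    rw [Finset.sum_congr rfl fun j _ => hnorm j,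
      Aux.unorm_main β x t N ∅ hro (le_refl N)]
    have hrc : (t.redCount x : ℝ) ≤ G := hG x
    have hbc : (Aux.bCount t x : ℝ) ≤ T := by
      refine le_trans ?_ (hT x)
      exact_mod_cast Aux.bCount_le_pathLen t x
    have hs1 : β ^ 2 * (t.redCount x : ℝ) ≤ Real.sqrt (G * T) := by
      rw [hβ2, ← e1]
      exact mul_le_mul_of_nonneg_left hrc (Real.sqrt_nonneg _)
    have hs2 : β⁻¹ ^ 2 * (Aux.bCount t x : ℝ) ≤ Real.sqrt (G * T) := by
      rw [hβi2, ← e2]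
      exact mul_le_mul_of_nonneg_left hbc (Real.sqrt_nonneg _)
    nlinarith [Real.sqrt_nonneg (G * T)]
  · -- w norms
    intro x hx
    have hnorm : ∀ j : Fin n, ‖W x j‖ ^ 2 = Aux.wnormN β t x N j := by
      intro j
      rw [hW, EuclideanSpace.norm_eq,
        Real.sq_sqrt (Finset.sum_nonneg fun i _ => sq_nonneg _)]
      have h1 : ∀ i : Fin d,
          ‖(WithLp.equiv 2 (Fin d → ℂ)).symm
              (fun i => ((Aux.wvec β t x j (Aux.ext N (e i).1) (e i).2 : ℝ) : ℂ)) i‖ ^ 2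
          = (Aux.wvec β t x j (Aux.ext N (e i).1) (e i).2) ^ 2 := by
        intro i
        rw [WithLp.equiv_symm_apply, PiLp.toLp_apply, Complex.norm_real, Real.norm_eq_abs, sq_abs]
      rw [Finset.sum_congr rfl fun i _ => h1 i,
        Equiv.sum_comp e (fun q : I => (Aux.wvec β t x j (Aux.ext N q.1) q.2) ^ 2),
        Aux.wnormN, Fintype.sum_prod_type]
    rw [Finset.sum_congr rfl fun j _ => hnorm j,
      Aux.wnorm_main β x t N ∅ hro (le_refl N)]
    have hrc : (t.redCount x : ℝ) ≤ G := hG x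
    have hpl : (t.pathLen x : ℝ) ≤ T := hT x
    have hs1 : β ^ 2 * (t.redCount x : ℝ) ≤ Real.sqrt (G * T) := by
      rw [hβ2, ← e1]
      exact mul_le_mul_of_nonneg_left hrc (Real.sqrt_nonneg _)
    have hs2 : β⁻¹ ^ 2 * (t.pathLen x : ℝ) ≤ Real.sqrt (G * T) := by
      rw [hβi2, ← e2]
      exact mul_le_mul_of_nonneg_left hpl (Real.sqrt_nonneg _)
    nlinarith [Real.sqrt_nonneg (G * T)]
end

section
/- (Theorem 4.1(ii), dual-adversary feasibility form for randomized decision trees.) Let ℓ, n, m, K ≥ 1, let D ⊆ [ℓ]^n be a finite set, and for each ζ ∈ {1, …, K} let 𝒯_ζ be a generalized decision tree with a G-coloring that is read-once along paths and decides a function f_ζ : D → [m]. For x ∈ D let T_x^ζ be the length of the computation path of x in 𝒯_ζ and G_x^ζ the number of red edges on it, and set T = max_{x ∈ D} (1/K)·Σ_{ζ=1}^K T_x^ζ and G = max_{x ∈ D} (1/K)·Σ_{ζ=1}^K G_x^ζ; assume T > 0 and G > 0. Then there exist a finite-dimensional complex inner product space H and vectors u_{x,j}, w_{x,j} ∈ H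 for x ∈ D and 1 ≤ j ≤ n such that: (a) for all x, y ∈ D, Σ_{j : x_j ≠ y_j} ⟨u_{x,j}, w_{y,j}⟩ = 1 − (1/K)·|{ζ : f_ζ(x) = f_ζ(y)}|; and (b) for every x ∈ D, Σ_{j=1}^n ‖u_{x,j}‖² ≤ 12·√(G·T) and Σ_{j=1}^n ‖w_{x,j}‖² ≤ 12·√(G·T). -/
open scoped InnerProductSpace

namespace GDTAux

open GDT

variable {ℓ n m : ℕ}

/-- Local component index: two scalar slots (Bool) plus an `(ℓ+1)`-dim block. -/
abbrev Comp (ℓ : ℕ) := Bool ⊕ Fin (ℓ + 1)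

/-- Whether `x` and `y` follow the same root-to-leaf path. -/
def sameLeaf : GDT ℓ n m → (Fin n → Fin ℓ) → (Fin n → Fin ℓ) → Prop
  | .leaf _, _, _ => True
  | .node J Q _ child, x, y => Q (x J) = Q (y J) ∧ sameLeaf (child (x J)) x y

/-- The set of addresses (sequences of partition-class representatives) of vertices. -/
def addrs : GDT ℓ n m → Finset (List (Fin ℓ))
  | .leaf _ => {[]}
  | .node _ Q _ child =>
      insert [] ((Finset.image Q Finset.univ).biUnion fun r =>
        (addrs (child r)).image (List.cons r))

/-- local `u`-vector at a vertex with class rep `r`, edge color `b`. -/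
noncomputable def uloc (s : ℝ) (r : Fin ℓ) (b : Bool) : Comp ℓ → ℝ
  | .inl true => if b then 0 else s
  | .inl false => if b then s⁻¹ else 0
  | .inr k => if b then 0 else (if k = 0 then 1 else 0) + (if k = r.succ then 1 else 0)

/-- local `w`-vector at a vertex with class rep `r`, edge color `b`. -/
noncomputable def wloc (s : ℝ) (r : Fin ℓ) (b : Bool) : Comp ℓ → ℝ
  | .inl true => if b then s⁻¹ else 0
  | .inl false => if b then 0 else s
  | .inr k => if b then 0 else (if k = 0 then 1 else 0) - (if k = r.succ then 1 else 0)

/-- output-distinguishing vector, `u` side. -/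
def fvU (a : Fin m) (k : Fin (m + 1)) : ℝ :=
  (if k = 0 then 1 else 0) + (if k = a.succ then 1 else 0)

/-- output-distinguishing vector, `w` side. -/
def fvW (a : Fin m) (k : Fin (m + 1)) : ℝ :=
  (if k = 0 then 1 else 0) - (if k = a.succ then 1 else 0)

/-- The entry of the `u`-vector of input `x`, query index `j`, at the vertex with
address `l` and component `c`. -/
noncomputable def entryU (x : Fin n → Fin ℓ) (j : Fin n) (s : ℝ) :
    GDT ℓ n m → List (Fin ℓ) → Comp ℓ → ℝ
  | .leaf _, _, _ => 0
  | .node J Q color child, [], c =>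
      if J = j then uloc s (Q (x J)) (color (Q (x J))) c else 0
  | .node J Q _ child, a :: l', c =>
      if a = Q (x J) then entryU x j s (child (x J)) l' c else 0

/-- The entry of the `w`-vector. -/
noncomputable def entryW (x : Fin n → Fin ℓ) (j : Fin n) (s : ℝ) :
    GDT ℓ n m → List (Fin ℓ) → Comp ℓ → ℝ
  | .leaf _, _, _ => 0
  | .node J Q color child, [], c =>
      if J = j then wloc s (Q (x J)) (color (Q (x J))) c else 0
  | .node J Q _ child, a :: l', c =>
      if a = Q (x J) then entryW x j s (child (x J)) l' c else 0

end GDTAux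

namespace GDTAux

variable {ℓ n m N : ℕ}

lemma sum_delta_mul (a b : Fin (N + 1)) (c d : ℝ) :
    ∑ k : Fin (N + 1), (if k = a then c else 0) * (if k = b then d else 0)
      = if a = b then c * d else 0 := by
  have h : ∀ k : Fin (N + 1),
      (if k = a then c else 0) * (if k = b then d else 0)
        = if k = a then (if a = b then c * d else 0) else 0 := by
    intro k; split_ifs with h1 h2 h3 <;> simp_all <;> tauto
  rw [Finset.sum_congr rfl fun k _ => h k, Finset.sum_ite_eq']
  simp

lemma sum_inr (r r' : Fin N) :
    ∑ k : Fin (N + 1),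
      ((if k = 0 then (1:ℝ) else 0) + (if k = r.succ then 1 else 0)) *
      ((if k = 0 then (1:ℝ) else 0) - (if k = r'.succ then 1 else 0))
      = 1 - (if r = r' then 1 else 0) := by
  simp only [add_mul, mul_sub, Finset.sum_add_distrib, Finset.sum_sub_distrib,
    sum_delta_mul]
  rw [if_neg (Ne.symm (Fin.succ_ne_zero r')), if_neg (Fin.succ_ne_zero r)]
  simp only [Fin.succ_inj]
  simp

lemma sum_sq_add (r : Fin N) :
    ∑ k : Fin (N + 1),
      ((if k = 0 then (1:ℝ) else 0) + (if k = r.succ then 1 else 0)) ^ 2 = 2 := by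
  have h : ∀ k : Fin (N + 1),
      ((if k = 0 then (1:ℝ) else 0) + (if k = r.succ then 1 else 0)) ^ 2
        = (if k = 0 then 1 else 0) + (if k = r.succ then 1 else 0) := by
    intro k
    have := Fin.succ_ne_zero r
    split_ifs with h1 h2 <;> simp_all
  rw [Finset.sum_congr rfl fun k _ => h k, Finset.sum_add_distrib,
    Finset.sum_ite_eq', Finset.sum_ite_eq']
  norm_num

lemma sum_sq_sub (r : Fin N) :
    ∑ k : Fin (N + 1),
      ((if k = 0 then (1:ℝ) else 0) - (if k = r.succ then 1 else 0)) ^ 2 = 2 := by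
  have h : ∀ k : Fin (N + 1),
      ((if k = 0 then (1:ℝ) else 0) - (if k = r.succ then 1 else 0)) ^ 2
        = (if k = 0 then 1 else 0) + (if k = r.succ then 1 else 0) := by
    intro k
    have := Fin.succ_ne_zero r
    split_ifs with h1 h2 <;> simp_all
  rw [Finset.sum_congr rfl fun k _ => h k, Finset.sum_add_distrib,
    Finset.sum_ite_eq', Finset.sum_ite_eq']
  norm_num

lemma sum_fvU_mul_fvW (a b : Fin m) :
    ∑ k : Fin (m + 1), fvU a k * fvW b k = 1 - (if a = b then 1 else 0) := by
  simpa [fvU, fvW] using sum_inr a b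

lemma sum_fvU_sq (a : Fin m) : ∑ k : Fin (m + 1), fvU a k ^ 2 = 2 := by
  simpa [fvU] using sum_sq_add a

lemma sum_fvW_sq (a : Fin m) : ∑ k : Fin (m + 1), fvW a k ^ 2 = 2 := by
  simpa [fvW] using sum_sq_sub a

lemma sum_uloc_mul_wloc_same (s : ℝ) (r : Fin ℓ) (b : Bool) :
    ∑ c, uloc s r b c * wloc s r b c = 0 := by
  rw [Fintype.sum_sum_type, Fintype.sum_bool]
  have := sum_inr r r
  cases b <;> simp [uloc, wloc] <;> rw [this] <;> simp

lemma sum_uloc_mul_wloc_ne {s : ℝ} (hs : s ≠ 0) {r r' : Fin ℓ} (hrr : r ≠ r')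
    {b b' : Bool} (hbb : ¬(b = true ∧ b' = true)) :
    ∑ c, uloc s r b c * wloc s r' b' c = 1 := by
  rw [Fintype.sum_sum_type, Fintype.sum_bool]
  have h := sum_inr r r'
  rw [if_neg hrr] at h
  cases b <;> cases b' <;> simp_all [uloc, wloc] <;> rw [h] <;> ring_nf <;>
    simp [hs]

lemma sum_uloc_sq (s : ℝ) (r : Fin ℓ) (b : Bool) :
    ∑ c, uloc s r b c ^ 2 = if b then s⁻¹ ^ 2 else s ^ 2 + 2 := by
  rw [Fintype.sum_sum_type, Fintype.sum_bool]
  have := sum_sq_add r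
  cases b <;> simp [uloc] <;> rw [this] <;> ring

lemma sum_wloc_sq (s : ℝ) (r : Fin ℓ) (b : Bool) :
    ∑ c, wloc s r b c ^ 2 = if b then s⁻¹ ^ 2 else s ^ 2 + 2 := by
  rw [Fintype.sum_sum_type, Fintype.sum_bool]
  have := sum_sq_sub r
  cases b <;> simp [wloc] <;> rw [this] <;> ring

end GDTAux

namespace GDTAux

open GDT

variable {ℓ n m : ℕ}

lemma entryU_eq_zero (x : Fin n → Fin ℓ) (j : Fin n) (s : ℝ) :
    ∀ t : GDT ℓ n m, t.TreeWF → ∀ l, l ∉ addrs t → ∀ c, entryU x j s t l c = 0 := by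
  intro t
  induction t with
  | leaf a => intro _ l _ c; rfl
  | node J Q color child ih =>
      intro ht l hl c
      match l with
      | [] => exact absurd (Finset.mem_insert_self _ _) hl
      | a :: l' =>
          show (if a = Q (x J) then entryU x j s (child (x J)) l' c else 0) = 0
          by_cases ha : a = Q (x J)
          · rw [if_pos ha]
            refine ih (x J) (ht.2.2 (x J)) l' (fun hmem => hl ?_) c
            refine Finset.mem_insert_of_mem (Finset.mem_biUnion.2
              ⟨Q (x J), Finset.mem_image_of_mem Q (Finset.mem_univ _), ?_⟩)
            refine Finset.mem_image.2 ⟨l', ?_, by rw [ha]⟩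
            rwa [ht.2.1 (x J)]
          · rw [if_neg ha]

lemma entryW_eq_zero (x : Fin n → Fin ℓ) (j : Fin n) (s : ℝ) :
    ∀ t : GDT ℓ n m, t.TreeWF → ∀ l, l ∉ addrs t → ∀ c, entryW x j s t l c = 0 := by
  intro t
  induction t with
  | leaf a => intro _ l _ c; rfl
  | node J Q color child ih =>
      intro ht l hl c
      match l with
      | [] => exact absurd (Finset.mem_insert_self _ _) hl
      | a :: l' =>
          show (if a = Q (x J) then entryW x j s (child (x J)) l' c else 0) = 0
          by_cases ha : a = Q (x J)
          · rw [if_pos ha]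
            refine ih (x J) (ht.2.2 (x J)) l' (fun hmem => hl ?_) c
            refine Finset.mem_insert_of_mem (Finset.mem_biUnion.2
              ⟨Q (x J), Finset.mem_image_of_mem Q (Finset.mem_univ _), ?_⟩)
            refine Finset.mem_image.2 ⟨l', ?_, by rw [ha]⟩
            rwa [ht.2.1 (x J)]
          · rw [if_neg ha]

lemma sum_addrs_node (J : Fin n) (Q : Fin ℓ → Fin ℓ) (color : Fin ℓ → Bool)
    (child : Fin ℓ → GDT ℓ n m) (F : List (Fin ℓ) → ℝ) :
    ∑ l ∈ addrs (GDT.node J Q color child), F l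
      = F [] + ∑ r ∈ Finset.image Q Finset.univ, ∑ l' ∈ addrs (child r), F (r :: l') := by
  show ∑ l ∈ insert [] _, F l = _
  rw [Finset.sum_insert, Finset.sum_biUnion]
  · congr 1
    refine Finset.sum_congr rfl fun r _ => ?_
    rw [Finset.sum_image]
    intro a _ b _ h
    exact List.cons_injective h
  · intro r hr r' hr' hne
    simp only [Finset.disjoint_left, Finset.mem_image]
    rintro _ ⟨a, _, rfl⟩ ⟨b, _, hb⟩
    exact hne (by injection hb with h1 _; exact h1.symm ▸ rfl)
  · simp

end GDTAux

namespace GDTAux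

open GDT

variable {ℓ n m : ℕ}

@[simp] lemma entryU_node_nil (x : Fin n → Fin ℓ) (j : Fin n) (s : ℝ) (J : Fin n)
    (Q : Fin ℓ → Fin ℓ) (color : Fin ℓ → Bool) (child : Fin ℓ → GDT ℓ n m) (c : Comp ℓ) :
    entryU x j s (GDT.node J Q color child) [] c
      = if J = j then uloc s (Q (x J)) (color (Q (x J))) c else 0 := rfl

@[simp] lemma entryU_node_cons (x : Fin n → Fin ℓ) (j : Fin n) (s : ℝ) (J : Fin n)
    (Q : Fin ℓ → Fin ℓ) (color : Fin ℓ → Bool) (child : Fin ℓ → GDT ℓ n m)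
    (a : Fin ℓ) (l' : List (Fin ℓ)) (c : Comp ℓ) :
    entryU x j s (GDT.node J Q color child) (a :: l') c
      = if a = Q (x J) then entryU x j s (child (x J)) l' c else 0 := rfl

@[simp] lemma entryW_node_nil (x : Fin n → Fin ℓ) (j : Fin n) (s : ℝ) (J : Fin n)
    (Q : Fin ℓ → Fin ℓ) (color : Fin ℓ → Bool) (child : Fin ℓ → GDT ℓ n m) (c : Comp ℓ) :
    entryW x j s (GDT.node J Q color child) [] c
      = if J = j then wloc s (Q (x J)) (color (Q (x J))) c else 0 := rfl

@[simp] lemma entryW_node_cons (x : Fin n → Fin ℓ) (j : Fin n) (s : ℝ) (J : Fin n)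
    (Q : Fin ℓ → Fin ℓ) (color : Fin ℓ → Bool) (child : Fin ℓ → GDT ℓ n m)
    (a : Fin ℓ) (l' : List (Fin ℓ)) (c : Comp ℓ) :
    entryW x j s (GDT.node J Q color child) (a :: l') c
      = if a = Q (x J) then entryW x j s (child (x J)) l' c else 0 := rfl

open Classical in
lemma key {s : ℝ} (hs : s ≠ 0) :
    ∀ t : GDT ℓ n m, t.TreeWF → t.ColorWF → ∀ x y : Fin n → Fin ℓ,
    ∑ j ∈ Finset.univ.filter (fun j => x j ≠ y j),
      ∑ l ∈ addrs t, ∑ c, entryU x j s t l c * entryW y j s t l c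
      = if sameLeaf t x y then 0 else 1 := by
  intro t
  induction t with
  | leaf a =>
      intro _ _ x y
      have : sameLeaf (GDT.leaf a : GDT ℓ n m) x y := trivial
      simp only [if_pos this]
      refine Finset.sum_eq_zero fun j _ => Finset.sum_eq_zero fun l _ =>
        Finset.sum_eq_zero fun c _ => ?_
      show (0 : ℝ) * entryW y j s (GDT.leaf a) l c = 0
      rw [zero_mul]
  | node J Q color child ih =>
      intro ht hc x y
      have step1 : ∀ j : Fin n,
          (∑ l ∈ addrs (GDT.node J Q color child),
            ∑ c, entryU x j s (GDT.node J Q color child) l c *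
                 entryW y j s (GDT.node J Q color child) l c)
          = (if J = j then ∑ c, uloc s (Q (x J)) (color (Q (x J))) c *
                wloc s (Q (y J)) (color (Q (y J))) c else 0)
            + ∑ r ∈ Finset.image Q Finset.univ,
                (if r = Q (x J) ∧ r = Q (y J) then
                  ∑ l' ∈ addrs (child r), ∑ c,
                    entryU x j s (child (x J)) l' c * entryW y j s (child (y J)) l' c
                 else 0) := by
        intro j
        rw [sum_addrs_node]
        congr 1
        · by_cases h : J = j <;> simp [h]
        · refine Finset.sum_congr rfl fun r hr => ?_
          by_cases hx : r = Q (x J)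
          · by_cases hy : r = Q (y J)
            · rw [if_pos ⟨hx, hy⟩]
              refine Finset.sum_congr rfl fun l' _ =>
                Finset.sum_congr rfl fun c _ => ?_
              rw [entryU_node_cons, entryW_node_cons, if_pos hx, if_pos hy]
            · rw [if_neg (fun hh => hy hh.2)]
              refine Finset.sum_eq_zero fun l' _ => Finset.sum_eq_zero fun c _ => ?_
              rw [entryW_node_cons, if_neg hy, mul_zero]
          · rw [if_neg (fun hh => hx hh.1)]
            refine Finset.sum_eq_zero fun l' _ => Finset.sum_eq_zero fun c _ => ?_
            rw [entryU_node_cons, if_neg hx, zero_mul]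
      rw [Finset.sum_congr rfl fun j _ => step1 j, Finset.sum_add_distrib]
      by_cases hQ : Q (x J) = Q (y J)
      · -- classes agree at the root
        have hcol : color (Q (x J)) = color (Q (y J)) := by rw [hQ]
        have hroot : ∀ j : Fin n, (if J = j then ∑ c, uloc s (Q (x J)) (color (Q (x J))) c *
                wloc s (Q (y J)) (color (Q (y J))) c else 0) = 0 := by
          intro j
          rw [← hQ, sum_uloc_mul_wloc_same, ite_self]
        rw [Finset.sum_congr rfl fun j _ => hroot j, Finset.sum_const_zero, zero_add]
        have hchx : child (Q (x J)) = child (x J) := ht.2.1 (x J)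
        have hchy : child (y J) = child (x J) := by
          rw [← ht.2.1 (y J), ← hQ, ht.2.1]
        have hsub : ∀ j : Fin n,
            (∑ r ∈ Finset.image Q Finset.univ,
                (if r = Q (x J) ∧ r = Q (y J) then
                  ∑ l' ∈ addrs (child r), ∑ c,
                    entryU x j s (child (x J)) l' c * entryW y j s (child (y J)) l' c
                 else 0))
            = ∑ l' ∈ addrs (child (x J)), ∑ c,
                entryU x j s (child (x J)) l' c * entryW y j s (child (x J)) l' c := by
          intro j
          have : ∀ r ∈ Finset.image Q Finset.univ,
              (if r = Q (x J) ∧ r = Q (y J) then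
                  ∑ l' ∈ addrs (child r), ∑ c,
                    entryU x j s (child (x J)) l' c * entryW y j s (child (y J)) l' c
                 else 0)
              = (if r = Q (x J) then
                  ∑ l' ∈ addrs (child r), ∑ c,
                    entryU x j s (child (x J)) l' c * entryW y j s (child (y J)) l' c
                 else 0) := by
            intro r _
            by_cases hx : r = Q (x J)
            · rw [if_pos ⟨hx, hQ ▸ hx⟩, if_pos hx]
            · rw [if_neg (fun hh => hx hh.1), if_neg hx]
          rw [Finset.sum_congr rfl this, Finset.sum_ite_eq',
            if_pos (Finset.mem_image_of_mem Q (Finset.mem_univ (x J))), hchx, hchy]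
        rw [Finset.sum_congr rfl fun j _ => hsub j,
          ih (x J) (ht.2.2 (x J)) (hc.2.2 (x J)) x y]
        have : sameLeaf (GDT.node J Q color child) x y ↔ sameLeaf (child (x J)) x y := by
          constructor
          · exact fun h => h.2
          · exact fun h => ⟨hQ, h⟩
        by_cases hsl : sameLeaf (child (x J)) x y
        · rw [if_pos hsl, if_pos (this.2 hsl)]
        · rw [if_neg hsl, if_neg (fun h => hsl (this.1 h))]
      · -- classes differ at the root: paths diverge here
        have hxy : x J ≠ y J := fun h => hQ (by rw [h])
        have hbb : ¬(color (Q (x J)) = true ∧ color (Q (y J)) = true) := by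
          rintro ⟨h1, h2⟩
          have := hc.2.1 (Q (x J)) (Q (y J)) h1 h2
          rw [ht.1 (x J), ht.1 (y J)] at this
          exact hQ this
        have hsub : ∀ j : Fin n,
            (∑ r ∈ Finset.image Q Finset.univ,
                (if r = Q (x J) ∧ r = Q (y J) then
                  ∑ l' ∈ addrs (child r), ∑ c,
                    entryU x j s (child (x J)) l' c * entryW y j s (child (y J)) l' c
                 else 0)) = 0 := by
          intro j
          refine Finset.sum_eq_zero fun r _ => ?_
          rw [if_neg]
          rintro ⟨rfl, h2⟩
          exact hQ h2
        rw [Finset.sum_congr rfl fun j _ => hsub j, Finset.sum_const_zero, add_zero]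
        rw [Finset.sum_ite_eq]
        have hmem : J ∈ Finset.univ.filter (fun j => x j ≠ y j) := by
          simp [hxy]
        rw [if_pos hmem, sum_uloc_mul_wloc_ne hs hQ hbb]
        rw [if_neg (fun h => hQ h.1)]

lemma sameLeaf_output : ∀ t : GDT ℓ n m, t.TreeWF → ∀ x y : Fin n → Fin ℓ,
    sameLeaf t x y → t.output x = t.output y := by
  intro t
  induction t with
  | leaf a => intro _ x y _; rfl
  | node J Q color child ih =>
      intro ht x y hsl
      show (child (x J)).output x = (child (y J)).output y
      have hch : child (y J) = child (x J) := by
        rw [← ht.2.1 (y J), ← hsl.1, ht.2.1]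
      rw [hch]
      exact ih (x J) (ht.2.2 (x J)) x y hsl.2

end GDTAux

namespace GDTAux

open GDT

variable {ℓ n m : ℕ}

lemma normU {s : ℝ} (hs : 0 < s) :
    ∀ t : GDT ℓ n m, t.TreeWF → t.ColorWF → ∀ x : Fin n → Fin ℓ,
    ∑ j : Fin n, ∑ l ∈ addrs t, ∑ c, entryU x j s t l c ^ 2
      ≤ (s ^ 2 + 2) * (t.redCount x : ℝ) + s⁻¹ ^ 2 * (t.pathLen x : ℝ) := by
  intro t
  induction t with
  | leaf a =>
      intro _ _ x
      have : ∑ j : Fin n, ∑ l ∈ addrs (GDT.leaf a : GDT ℓ n m),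
          ∑ c, entryU x j s (GDT.leaf a) l c ^ 2 = 0 := by
        refine Finset.sum_eq_zero fun j _ => Finset.sum_eq_zero fun l _ =>
          Finset.sum_eq_zero fun c _ => ?_
        show (0 : ℝ) ^ 2 = 0
        rw [zero_pow two_ne_zero]
      rw [this]
      show (0:ℝ) ≤ (s ^ 2 + 2) * ((0:ℕ) : ℝ) + s⁻¹ ^ 2 * ((0:ℕ) : ℝ)
      simp
  | node J Q color child ih =>
      intro ht hc x
      have hchx : child (Q (x J)) = child (x J) := ht.2.1 (x J)
      have step1 : ∀ j : Fin n,
          (∑ l ∈ addrs (GDT.node J Q color child),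
            ∑ c, entryU x j s (GDT.node J Q color child) l c ^ 2)
          = (if J = j then ∑ c, uloc s (Q (x J)) (color (Q (x J))) c ^ 2 else 0)
            + ∑ l' ∈ addrs (child (x J)), ∑ c, entryU x j s (child (x J)) l' c ^ 2 := by
        intro j
        rw [sum_addrs_node]
        congr 1
        · by_cases h : J = j <;> simp [h]
        · have : ∀ r ∈ Finset.image Q Finset.univ,
              (∑ l' ∈ addrs (child r), ∑ c,
                entryU x j s (GDT.node J Q color child) (r :: l') c ^ 2)
              = (if r = Q (x J) then
                  ∑ l' ∈ addrs (child r), ∑ c, entryU x j s (child (x J)) l' c ^ 2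
                 else 0) := by
            intro r _
            by_cases hx : r = Q (x J)
            · rw [if_pos hx]
              refine Finset.sum_congr rfl fun l' _ =>
                Finset.sum_congr rfl fun c _ => ?_
              rw [entryU_node_cons, if_pos hx]
            · rw [if_neg hx]
              refine Finset.sum_eq_zero fun l' _ => Finset.sum_eq_zero fun c _ => ?_
              rw [entryU_node_cons, if_neg hx, zero_pow two_ne_zero]
          rw [Finset.sum_congr rfl this, Finset.sum_ite_eq',
            if_pos (Finset.mem_image_of_mem Q (Finset.mem_univ (x J))), hchx]
      rw [Finset.sum_congr rfl fun j _ => step1 j, Finset.sum_add_distrib,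
        Finset.sum_ite_eq, if_pos (Finset.mem_univ J), sum_uloc_sq]
      have hsub := ih (x J) (ht.2.2 (x J)) (hc.2.2 (x J)) x
      have hcol : color (Q (x J)) = color (x J) := hc.1 (x J)
      have hs2 : (0:ℝ) ≤ s⁻¹ ^ 2 := sq_nonneg _
      have hs3 : (0:ℝ) ≤ s ^ 2 + 2 := by positivity
      show _ ≤ (s ^ 2 + 2) * (((child (x J)).redCount x
          + if color (x J) = false then 1 else 0 : ℕ) : ℝ)
        + s⁻¹ ^ 2 * (((child (x J)).pathLen x + 1 : ℕ) : ℝ)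
      rw [hcol]
      cases hb : color (x J) <;> simp only [hb, if_pos, if_neg, Bool.false_eq_true,
        if_false, if_true] <;> push_cast <;> nlinarith [hsub]
  
lemma normW {s : ℝ} (hs : 0 < s) :
    ∀ t : GDT ℓ n m, t.TreeWF → t.ColorWF → ∀ x : Fin n → Fin ℓ,
    ∑ j : Fin n, ∑ l ∈ addrs t, ∑ c, entryW x j s t l c ^ 2
      ≤ (s ^ 2 + 2) * (t.redCount x : ℝ) + s⁻¹ ^ 2 * (t.pathLen x : ℝ) := by
  intro t
  induction t with
  | leaf a =>
      intro _ _ x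
      have : ∑ j : Fin n, ∑ l ∈ addrs (GDT.leaf a : GDT ℓ n m),
          ∑ c, entryW x j s (GDT.leaf a) l c ^ 2 = 0 := by
        refine Finset.sum_eq_zero fun j _ => Finset.sum_eq_zero fun l _ =>
          Finset.sum_eq_zero fun c _ => ?_
        show (0 : ℝ) ^ 2 = 0
        rw [zero_pow two_ne_zero]
      rw [this]
      show (0:ℝ) ≤ (s ^ 2 + 2) * ((0:ℕ) : ℝ) + s⁻¹ ^ 2 * ((0:ℕ) : ℝ)
      simp
  | node J Q color child ih =>
      intro ht hc x
      have hchx : child (Q (x J)) = child (x J) := ht.2.1 (x J)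
      have step1 : ∀ j : Fin n,
          (∑ l ∈ addrs (GDT.node J Q color child),
            ∑ c, entryW x j s (GDT.node J Q color child) l c ^ 2)
          = (if J = j then ∑ c, wloc s (Q (x J)) (color (Q (x J))) c ^ 2 else 0)
            + ∑ l' ∈ addrs (child (x J)), ∑ c, entryW x j s (child (x J)) l' c ^ 2 := by
        intro j
        rw [sum_addrs_node]
        congr 1
        · by_cases h : J = j <;> simp [h]
        · have : ∀ r ∈ Finset.image Q Finset.univ,
              (∑ l' ∈ addrs (child r), ∑ c,
                entryW x j s (GDT.node J Q color child) (r :: l') c ^ 2)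
              = (if r = Q (x J) then
                  ∑ l' ∈ addrs (child r), ∑ c, entryW x j s (child (x J)) l' c ^ 2
                 else 0) := by
            intro r _
            by_cases hx : r = Q (x J)
            · rw [if_pos hx]
              refine Finset.sum_congr rfl fun l' _ =>
                Finset.sum_congr rfl fun c _ => ?_
              rw [entryW_node_cons, if_pos hx]
            · rw [if_neg hx]
              refine Finset.sum_eq_zero fun l' _ => Finset.sum_eq_zero fun c _ => ?_
              rw [entryW_node_cons, if_neg hx, zero_pow two_ne_zero]
          rw [Finset.sum_congr rfl this, Finset.sum_ite_eq',
            if_pos (Finset.mem_image_of_mem Q (Finset.mem_univ (x J))), hchx]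
      rw [Finset.sum_congr rfl fun j _ => step1 j, Finset.sum_add_distrib,
        Finset.sum_ite_eq, if_pos (Finset.mem_univ J), sum_wloc_sq]
      have hsub := ih (x J) (ht.2.2 (x J)) (hc.2.2 (x J)) x
      have hcol : color (Q (x J)) = color (x J) := hc.1 (x J)
      have hs2 : (0:ℝ) ≤ s⁻¹ ^ 2 := sq_nonneg _
      have hs3 : (0:ℝ) ≤ s ^ 2 + 2 := by positivity
      show _ ≤ (s ^ 2 + 2) * (((child (x J)).redCount x
          + if color (x J) = false then 1 else 0 : ℕ) : ℝ)
        + s⁻¹ ^ 2 * (((child (x J)).pathLen x + 1 : ℕ) : ℝ)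
      rw [hcol]
      cases hb : color (x J) <;> simp only [hb, if_pos, if_neg, Bool.false_eq_true,
        if_false, if_true] <;> push_cast <;> nlinarith [hsub]

lemma redCount_le_pathLen : ∀ (t : GDT ℓ n m) (x : Fin n → Fin ℓ),
    t.redCount x ≤ t.pathLen x := by
  intro t
  induction t with
  | leaf a => intro x; exact le_rfl
  | node J Q color child ih =>
      intro x
      show (child (x J)).redCount x + _ ≤ (child (x J)).pathLen x + 1
      have := ih (x J) x
      split_ifs <;> omega

end GDTAux

namespace GDTAux

open GDT

variable {ℓ n m : ℕ}

lemma gram_tree {s : ℝ} (hs : s ≠ 0) (tr : GDT ℓ n m) (ht : tr.TreeWF) (hc : tr.ColorWF)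
    (A : Finset (List (Fin ℓ))) (hA : addrs tr ⊆ A) (x y : Fin n → Fin ℓ) :
    ∑ j ∈ Finset.univ.filter (fun j => x j ≠ y j), ∑ l ∈ A, ∑ c, ∑ k : Fin (m + 1),
      (entryU x j s tr l c * fvU (tr.output x) k) *
      (entryW y j s tr l c * fvW (tr.output y) k)
      = if tr.output x = tr.output y then 0 else 1 := by
  classical
  have step1 : ∀ j l c,
      (∑ k : Fin (m + 1), (entryU x j s tr l c * fvU (tr.output x) k) *
        (entryW y j s tr l c * fvW (tr.output y) k))
      = (∑ k : Fin (m + 1), fvU (tr.output x) k * fvW (tr.output y) k) *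
          (entryU x j s tr l c * entryW y j s tr l c) := by
    intro j l c
    rw [Finset.sum_mul]
    exact Finset.sum_congr rfl fun k _ => by ring
  have step2 : ∀ j,
      (∑ l ∈ A, ∑ c, ∑ k : Fin (m + 1), (entryU x j s tr l c * fvU (tr.output x) k) *
        (entryW y j s tr l c * fvW (tr.output y) k))
      = (∑ k : Fin (m + 1), fvU (tr.output x) k * fvW (tr.output y) k) *
          ∑ l ∈ addrs tr, ∑ c, entryU x j s tr l c * entryW y j s tr l c := by
    intro j
    rw [Finset.mul_sum]
    rw [← Finset.sum_subset hA (fun l _ hl => Finset.sum_eq_zero fun c _ =>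
      Finset.sum_eq_zero fun k _ => by
        rw [entryU_eq_zero x j s tr ht l hl c, zero_mul, zero_mul])]
    refine Finset.sum_congr rfl fun l _ => ?_
    rw [Finset.mul_sum]
    exact Finset.sum_congr rfl fun c _ => step1 j l c
  rw [Finset.sum_congr rfl fun j _ => step2 j, ← Finset.mul_sum,
    key hs tr ht hc x y, sum_fvU_mul_fvW]
  by_cases ho : tr.output x = tr.output y
  · rw [if_pos ho, if_pos ho]; ring
  · have hsl : ¬ sameLeaf tr x y := fun h => ho (sameLeaf_output tr ht x y h)
    rw [if_neg ho, if_neg ho, if_neg hsl]; ring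

lemma norm_tree_U {s : ℝ} (hs : 0 < s) (tr : GDT ℓ n m) (ht : tr.TreeWF)
    (hc : tr.ColorWF) (A : Finset (List (Fin ℓ))) (hA : addrs tr ⊆ A)
    (x : Fin n → Fin ℓ) :
    ∑ j : Fin n, ∑ l ∈ A, ∑ c, ∑ k : Fin (m + 1),
      (entryU x j s tr l c * fvU (tr.output x) k) ^ 2
      ≤ 2 * ((s ^ 2 + 2) * (tr.redCount x : ℝ) + s⁻¹ ^ 2 * (tr.pathLen x : ℝ)) := by
  classical
  have step2 : ∀ j,
      (∑ l ∈ A, ∑ c, ∑ k : Fin (m + 1),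
        (entryU x j s tr l c * fvU (tr.output x) k) ^ 2)
      = 2 * ∑ l ∈ addrs tr, ∑ c, entryU x j s tr l c ^ 2 := by
    intro j
    rw [Finset.mul_sum]
    rw [← Finset.sum_subset hA (fun l _ hl => Finset.sum_eq_zero fun c _ =>
      Finset.sum_eq_zero fun k _ => by
        rw [entryU_eq_zero x j s tr ht l hl c, zero_mul, zero_pow two_ne_zero])]
    refine Finset.sum_congr rfl fun l _ => ?_
    rw [Finset.mul_sum]
    refine Finset.sum_congr rfl fun c _ => ?_
    have : ∀ k : Fin (m + 1), (entryU x j s tr l c * fvU (tr.output x) k) ^ 2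
        = entryU x j s tr l c ^ 2 * fvU (tr.output x) k ^ 2 := fun k => by ring
    rw [Finset.sum_congr rfl fun k _ => this k, ← Finset.mul_sum,
      sum_fvU_sq (tr.output x)]
    ring
  rw [Finset.sum_congr rfl fun j _ => step2 j, ← Finset.mul_sum]
  have := normU hs tr ht hc x
  nlinarith [this]

lemma norm_tree_W {s : ℝ} (hs : 0 < s) (tr : GDT ℓ n m) (ht : tr.TreeWF)
    (hc : tr.ColorWF) (A : Finset (List (Fin ℓ))) (hA : addrs tr ⊆ A)
    (x : Fin n → Fin ℓ) :
    ∑ j : Fin n, ∑ l ∈ A, ∑ c, ∑ k : Fin (m + 1),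
      (entryW x j s tr l c * fvW (tr.output x) k) ^ 2
      ≤ 2 * ((s ^ 2 + 2) * (tr.redCount x : ℝ) + s⁻¹ ^ 2 * (tr.pathLen x : ℝ)) := by
  classical
  have step2 : ∀ j,
      (∑ l ∈ A, ∑ c, ∑ k : Fin (m + 1),
        (entryW x j s tr l c * fvW (tr.output x) k) ^ 2)
      = 2 * ∑ l ∈ addrs tr, ∑ c, entryW x j s tr l c ^ 2 := by
    intro j
    rw [Finset.mul_sum]
    rw [← Finset.sum_subset hA (fun l _ hl => Finset.sum_eq_zero fun c _ =>
      Finset.sum_eq_zero fun k _ => by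
        rw [entryW_eq_zero x j s tr ht l hl c, zero_mul, zero_pow two_ne_zero])]
    refine Finset.sum_congr rfl fun l _ => ?_
    rw [Finset.mul_sum]
    refine Finset.sum_congr rfl fun c _ => ?_
    have : ∀ k : Fin (m + 1), (entryW x j s tr l c * fvW (tr.output x) k) ^ 2
        = entryW x j s tr l c ^ 2 * fvW (tr.output x) k ^ 2 := fun k => by ring
    rw [Finset.sum_congr rfl fun k _ => this k, ← Finset.mul_sum,
      sum_fvW_sq (tr.output x)]
    ring
  rw [Finset.sum_congr rfl fun j _ => step2 j, ← Finset.mul_sum]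
  have := normW hs tr ht hc x
  nlinarith [this]

end GDTAux

namespace GDTAux

open GDT

/-- Package a real-valued coordinate function as a vector in `EuclideanSpace ℂ (Fin d)`. -/
noncomputable def mkE {d : ℕ} (a : Fin d → ℝ) : EuclideanSpace ℂ (Fin d) :=
  (WithLp.equiv 2 _).symm (fun i => ((a i : ℝ) : ℂ))

lemma inner_euc {d : ℕ} (a b : Fin d → ℝ) :
    (inner (𝕜 := ℂ) (mkE a) (mkE b)) = ((∑ i, a i * b i : ℝ) : ℂ) := by
  rw [PiLp.inner_apply, Complex.ofReal_sum]
  refine Finset.sum_congr rfl fun i _ => ?_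
  rw [show (mkE a) i = ((a i : ℝ) : ℂ) from rfl, show (mkE b) i = ((b i : ℝ) : ℂ) from rfl,
    RCLike.inner_apply, Complex.conj_ofReal, ← Complex.ofReal_mul]
  rw [mul_comm]

lemma norm_euc {d : ℕ} (a : Fin d → ℝ) :
    ‖mkE a‖ ^ 2 = ∑ i, a i ^ 2 := by
  rw [EuclideanSpace.norm_eq, Real.sq_sqrt (by positivity)]
  refine Finset.sum_congr rfl fun i _ => ?_
  rw [show (mkE a) i = ((a i : ℝ) : ℂ) from rfl, Complex.norm_real,
    Real.norm_eq_abs, sq_abs]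

lemma final_arith {T G s : ℝ} (hT : 0 < T) (hG : 0 < G) (hGT : G ≤ T)
    (hs : s ^ 2 = Real.sqrt (T / G)) :
    2 * (s ^ 2 + 2) * G + 2 * s⁻¹ ^ 2 * T ≤ 12 * Real.sqrt (G * T) := by
  have hq : 0 < Real.sqrt (T / G) := Real.sqrt_pos.2 (div_pos hT hG)
  have hinv : s⁻¹ ^ 2 = (Real.sqrt (T / G))⁻¹ := by rw [inv_pow, hs]
  rw [hs, hinv]
  have e1 : Real.sqrt (G * T) = Real.sqrt (T / G) * G := by
    rw [show G * T = (T / G) * G ^ 2 by field_simp,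
      Real.sqrt_mul (le_of_lt (div_pos hT hG)), Real.sqrt_sq hG.le]
  have e2 : Real.sqrt (G * T) = (Real.sqrt (T / G))⁻¹ * T := by
    rw [← Real.sqrt_inv, inv_div,
      show G * T = (G / T) * T ^ 2 by field_simp,
      Real.sqrt_mul (le_of_lt (div_pos hG hT)), Real.sqrt_sq hT.le]
  have e3 : G ≤ Real.sqrt (G * T) := by
    have h := Real.sqrt_le_sqrt (show G * G ≤ G * T by nlinarith)
    rwa [Real.sqrt_mul_self hG.le] at h
  nlinarith [e1, e2, e3]

end GDTAux

namespace GDTAux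

open GDT

variable {ℓ n m K : ℕ}

/-- Package a real coordinate function on a finite index type as a vector in
`EuclideanSpace ℂ (Fin (card ι))`. -/
noncomputable def mkE' {ι : Type*} [Fintype ι] (a : ι → ℝ) :
    EuclideanSpace ℂ (Fin (Fintype.card ι)) :=
  mkE (fun i => a ((Fintype.equivFin ι).symm i))

lemma inner_euc' {ι : Type*} [Fintype ι] (a b : ι → ℝ) :
    (inner (𝕜 := ℂ) (mkE' a) (mkE' b)) = ((∑ p : ι, a p * b p : ℝ) : ℂ) := by
  rw [mkE', mkE', inner_euc]
  exact congrArg _ (Equiv.sum_comp (Fintype.equivFin ι).symm fun p => a p * b p)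

lemma norm_euc' {ι : Type*} [Fintype ι] (a : ι → ℝ) :
    ‖mkE' a‖ ^ 2 = ∑ p : ι, a p ^ 2 := by
  rw [mkE', norm_euc]
  exact Equiv.sum_comp (Fintype.equivFin ι).symm fun p => a p ^ 2

lemma sum_strip (A : Finset (List (Fin ℓ)))
    (F : Fin K × (List (Fin ℓ) × (Comp ℓ × Fin (m + 1))) → ℝ) :
    ∑ p : Fin K × ({l // l ∈ A} × (Comp ℓ × Fin (m + 1))),
      F (p.1, ((p.2.1 : List (Fin ℓ)), p.2.2))
    = ∑ ζ : Fin K, ∑ l ∈ A, ∑ c : Comp ℓ, ∑ k : Fin (m + 1), F (ζ, (l, (c, k))) := by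
  rw [Fintype.sum_prod_type]
  refine Finset.sum_congr rfl fun ζ _ => ?_
  rw [Fintype.sum_prod_type,
    ← Finset.sum_coe_sort A (fun l => ∑ c : Comp ℓ, ∑ k : Fin (m + 1), F (ζ, (l, (c, k))))]
  exact Finset.sum_congr rfl fun l _ => Fintype.sum_prod_type _

/-- The final `u`-vectors. -/
noncomputable def UU (t : Fin K → GDT ℓ n m) (s sK : ℝ) (A : Finset (List (Fin ℓ)))
    (x : Fin n → Fin ℓ) (j : Fin n) :
    EuclideanSpace ℂ (Fin (Fintype.card (Fin K × ({l // l ∈ A} × (Comp ℓ × Fin (m + 1)))))) :=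
  mkE' (fun p => sK * (entryU x j s (t p.1) (p.2.1 : List (Fin ℓ)) p.2.2.1 *
    fvU ((t p.1).output x) p.2.2.2))

/-- The final `w`-vectors. -/
noncomputable def WW (t : Fin K → GDT ℓ n m) (s sK : ℝ) (A : Finset (List (Fin ℓ)))
    (y : Fin n → Fin ℓ) (j : Fin n) :
    EuclideanSpace ℂ (Fin (Fintype.card (Fin K × ({l // l ∈ A} × (Comp ℓ × Fin (m + 1)))))) :=
  mkE' (fun p => sK * (entryW y j s (t p.1) (p.2.1 : List (Fin ℓ)) p.2.2.1 *
    fvW ((t p.1).output y) p.2.2.2))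

lemma gram_full (t : Fin K → GDT ℓ n m) (ht : ∀ ζ, (t ζ).TreeWF) (hc : ∀ ζ, (t ζ).ColorWF)
    {s : ℝ} (hs : s ≠ 0) (sK : ℝ) (A : Finset (List (Fin ℓ)))
    (hA : ∀ ζ, addrs (t ζ) ⊆ A) (x y : Fin n → Fin ℓ) :
    ∑ j ∈ Finset.univ.filter (fun j => x j ≠ y j),
      (inner (𝕜 := ℂ) (UU t s sK A x j) (WW t s sK A y j))
    = ((sK ^ 2 * ∑ ζ : Fin K,
        (if (t ζ).output x = (t ζ).output y then (0:ℝ) else 1) : ℝ) : ℂ) := by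
  have h1 : ∀ j : Fin n, (inner (𝕜 := ℂ) (UU t s sK A x j) (WW t s sK A y j))
      = ((∑ ζ : Fin K, ∑ l ∈ A, ∑ c : Comp ℓ, ∑ k : Fin (m + 1),
          (sK * (entryU x j s (t ζ) l c * fvU ((t ζ).output x) k)) *
          (sK * (entryW y j s (t ζ) l c * fvW ((t ζ).output y) k)) : ℝ) : ℂ) := by
    intro j
    rw [UU, WW, inner_euc']
    exact congrArg _ (sum_strip A (fun q =>
      (sK * (entryU x j s (t q.1) q.2.1 q.2.2.1 * fvU ((t q.1).output x) q.2.2.2)) *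
      (sK * (entryW y j s (t q.1) q.2.1 q.2.2.1 * fvW ((t q.1).output y) q.2.2.2))))
  rw [Finset.sum_congr rfl fun j _ => h1 j, ← Complex.ofReal_sum]
  refine congrArg _ ?_
  simp only [show ∀ a b : ℝ, (sK * a) * (sK * b) = sK ^ 2 * (a * b) from
    fun a b => by ring]
  simp only [← Finset.mul_sum]
  rw [Finset.sum_comm]
  exact congrArg (fun z => sK ^ 2 * z) (Finset.sum_congr rfl fun ζ _ =>
    gram_tree hs (t ζ) (ht ζ) (hc ζ) A (hA ζ) x y)

lemma norm_full_U (t : Fin K → GDT ℓ n m) (ht : ∀ ζ, (t ζ).TreeWF)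
    (hc : ∀ ζ, (t ζ).ColorWF) {s : ℝ} (hs : 0 < s) (sK : ℝ)
    (A : Finset (List (Fin ℓ))) (hA : ∀ ζ, addrs (t ζ) ⊆ A) (x : Fin n → Fin ℓ) :
    ∑ j : Fin n, ‖UU t s sK A x j‖ ^ 2
      ≤ sK ^ 2 * ∑ ζ : Fin K,
          2 * ((s ^ 2 + 2) * ((t ζ).redCount x : ℝ) + s⁻¹ ^ 2 * ((t ζ).pathLen x : ℝ)) := by
  have h1 : ∀ j : Fin n, ‖UU t s sK A x j‖ ^ 2
      = ∑ ζ : Fin K, ∑ l ∈ A, ∑ c : Comp ℓ, ∑ k : Fin (m + 1),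
          (sK * (entryU x j s (t ζ) l c * fvU ((t ζ).output x) k)) ^ 2 := by
    intro j
    rw [UU, norm_euc']
    exact sum_strip A (fun q =>
      (sK * (entryU x j s (t q.1) q.2.1 q.2.2.1 * fvU ((t q.1).output x) q.2.2.2)) ^ 2)
  rw [Finset.sum_congr rfl fun j _ => h1 j]
  simp only [show ∀ a : ℝ, (sK * a) ^ 2 = sK ^ 2 * a ^ 2 from fun a => by ring]
  simp only [← Finset.mul_sum]
  rw [Finset.sum_comm]
  refine le_trans (mul_le_mul_of_nonneg_left (Finset.sum_le_sum fun ζ _ =>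
    norm_tree_U hs (t ζ) (ht ζ) (hc ζ) A (hA ζ) x) (sq_nonneg sK))
    (le_of_eq (by simp only [Finset.mul_sum]))

lemma norm_full_W (t : Fin K → GDT ℓ n m) (ht : ∀ ζ, (t ζ).TreeWF)
    (hc : ∀ ζ, (t ζ).ColorWF) {s : ℝ} (hs : 0 < s) (sK : ℝ)
    (A : Finset (List (Fin ℓ))) (hA : ∀ ζ, addrs (t ζ) ⊆ A) (x : Fin n → Fin ℓ) :
    ∑ j : Fin n, ‖WW t s sK A x j‖ ^ 2
      ≤ sK ^ 2 * ∑ ζ : Fin K,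
          2 * ((s ^ 2 + 2) * ((t ζ).redCount x : ℝ) + s⁻¹ ^ 2 * ((t ζ).pathLen x : ℝ)) := by
  have h1 : ∀ j : Fin n, ‖WW t s sK A x j‖ ^ 2
      = ∑ ζ : Fin K, ∑ l ∈ A, ∑ c : Comp ℓ, ∑ k : Fin (m + 1),
          (sK * (entryW x j s (t ζ) l c * fvW ((t ζ).output x) k)) ^ 2 := by
    intro j
    rw [WW, norm_euc']
    exact sum_strip A (fun q =>
      (sK * (entryW x j s (t q.1) q.2.1 q.2.2.1 * fvW ((t q.1).output x) q.2.2.2)) ^ 2)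
  rw [Finset.sum_congr rfl fun j _ => h1 j]
  simp only [show ∀ a : ℝ, (sK * a) ^ 2 = sK ^ 2 * a ^ 2 from fun a => by ring]
  simp only [← Finset.mul_sum]
  rw [Finset.sum_comm]
  refine le_trans (mul_le_mul_of_nonneg_left (Finset.sum_le_sum fun ζ _ =>
    norm_tree_W hs (t ζ) (ht ζ) (hc ζ) A (hA ζ) x) (sq_nonneg sK))
    (le_of_eq (by simp only [Finset.mul_sum]))

end GDTAux

/-- **Theorem 4.1(ii), dual-adversary feasibility form for randomized decision trees.**
Given `K` generalized decision trees with G-colorings, read-once along paths, tree `ζ`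
deciding `f ζ : D → Fin m`, with `T` the maximum over `x ∈ D` of the average path length
and `G` the maximum over `x ∈ D` of the average number of red edges, there is a feasible
solution of the dual adversary SDP for the gram matrix
`(1 - (1/K)·|{ζ : f ζ x = f ζ y}|)_{x,y}` with objective value at most `12 * √(G * T)`. -/
theorem stmt1 {ℓ n m K : ℕ} (hl : 1 ≤ ℓ) (hn : 1 ≤ n) (hm : 1 ≤ m) (hK : 1 ≤ K)
    (D : Finset (Fin n → Fin ℓ)) (hD : D.Nonempty)
    (t : Fin K → GDT ℓ n m) (f : Fin K → (Fin n → Fin ℓ) → Fin m)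
    (htree : ∀ ζ, (t ζ).TreeWF) (hcol : ∀ ζ, (t ζ).ColorWF) (hro : ∀ ζ, (t ζ).ReadOnce)
    (hdec : ∀ ζ, ∀ x ∈ D, (t ζ).output x = f ζ x)
    (T G : ℝ)
    (hT : T = D.sup' hD fun x => (∑ ζ, ((t ζ).pathLen x : ℝ)) / K)
    (hG : G = D.sup' hD fun x => (∑ ζ, ((t ζ).redCount x : ℝ)) / K)
    (hTpos : 0 < T) (hGpos : 0 < G) :
    ∃ (d : ℕ) (u w : (Fin n → Fin ℓ) → Fin n → EuclideanSpace ℂ (Fin d)),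
      (∀ x ∈ D, ∀ y ∈ D,
          ∑ j ∈ Finset.univ.filter (fun j => x j ≠ y j), ⟪u x j, w y j⟫_ℂ
            = 1 - ((Finset.univ.filter fun ζ : Fin K => f ζ x = f ζ y).card : ℂ) / K) ∧
      (∀ x ∈ D, ∑ j, ‖u x j‖ ^ 2 ≤ 12 * Real.sqrt (G * T)) ∧
      (∀ x ∈ D, ∑ j, ‖w x j‖ ^ 2 ≤ 12 * Real.sqrt (G * T)) := by
  classical
  have hK0 : (0:ℝ) < K := by exact_mod_cast Nat.lt_of_lt_of_le Nat.zero_lt_one hK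
  have hKne : (K:ℝ) ≠ 0 := hK0.ne'
  set s : ℝ := Real.sqrt (Real.sqrt (T / G)) with hsdef
  have hTG : 0 < T / G := div_pos hTpos hGpos
  have hspos : 0 < s := Real.sqrt_pos.2 (Real.sqrt_pos.2 hTG)
  have hs2 : s ^ 2 = Real.sqrt (T / G) := Real.sq_sqrt (Real.sqrt_nonneg _)
  set sK : ℝ := (Real.sqrt K)⁻¹ with hsK
  have hsK2 : sK ^ 2 = (K:ℝ)⁻¹ := by rw [hsK, inv_pow, Real.sq_sqrt hK0.le]
  set A : Finset (List (Fin ℓ)) :=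
    Finset.univ.biUnion (fun ζ : Fin K => GDTAux.addrs (t ζ)) with hA
  have hA' : ∀ ζ : Fin K, GDTAux.addrs (t ζ) ⊆ A := fun ζ => by
    rw [hA]
    exact Finset.subset_biUnion_of_mem (fun ζ : Fin K => GDTAux.addrs (t ζ))
      (Finset.mem_univ ζ)
  have hGT : G ≤ T := by
    rw [hG, hT]
    refine Finset.sup'_le _ _ fun z hz => le_trans ?_ (Finset.le_sup' _ hz)
    refine (div_le_div_iff_of_pos_right hK0).2 ?_
    exact Finset.sum_le_sum fun ζ _ =>
      Nat.cast_le.2 (GDTAux.redCount_le_pathLen (t ζ) z)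
  refine ⟨_, fun x j => GDTAux.UU t s sK A x j, fun y j => GDTAux.WW t s sK A y j,
    ?_, ?_, ?_⟩
  · -- Gram matrix identity
    intro x hx y hy
    refine Eq.trans (GDTAux.gram_full t htree hcol hspos.ne' sK A hA' x y) ?_
    rw [show (1:ℂ) - ((Finset.univ.filter fun ζ : Fin K => f ζ x = f ζ y).card : ℂ)/(K:ℂ)
        = (((1:ℝ) - ((Finset.univ.filter fun ζ : Fin K => f ζ x = f ζ y).card : ℝ)/(K:ℝ) : ℝ) : ℂ) by
      push_cast; ring]
    rw [Complex.ofReal_inj]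
    rw [Finset.sum_congr rfl fun ζ (_ : ζ ∈ Finset.univ) => (by
      rw [hdec ζ x hx, hdec ζ y hy] :
        (if (t ζ).output x = (t ζ).output y then (0:ℝ) else 1)
          = if f ζ x = f ζ y then (0:ℝ) else 1)]
    rw [Finset.sum_congr rfl fun ζ (_ : ζ ∈ Finset.univ) => (by split_ifs <;> ring :
        (if f ζ x = f ζ y then (0:ℝ) else 1)
          = 1 - (if f ζ x = f ζ y then (1:ℝ) else 0))]
    rw [Finset.sum_sub_distrib, Finset.sum_const, Finset.card_univ, Fintype.card_fin,
      Finset.sum_boole, hsK2, nsmul_eq_mul, mul_one]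
    field_simp
  · -- norm bound for u
    intro x hx
    refine le_trans (GDTAux.norm_full_U t htree hcol hspos sK A hA' x) ?_
    rw [Finset.sum_congr rfl fun ζ (_ : ζ ∈ Finset.univ) => (by ring :
        2 * ((s ^ 2 + 2) * ((t ζ).redCount x : ℝ) + s⁻¹ ^ 2 * ((t ζ).pathLen x : ℝ))
          = (2 * (s ^ 2 + 2)) * ((t ζ).redCount x : ℝ)
            + (2 * s⁻¹ ^ 2) * ((t ζ).pathLen x : ℝ))]
    rw [Finset.sum_add_distrib, ← Finset.mul_sum, ← Finset.mul_sum, hsK2]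
    have hRx : (∑ ζ : Fin K, ((t ζ).redCount x : ℝ))/K ≤ G :=
      hG ▸ Finset.le_sup' (fun z => (∑ ζ, ((t ζ).redCount z : ℝ)) / K) hx
    have hPx : (∑ ζ : Fin K, ((t ζ).pathLen x : ℝ))/K ≤ T :=
      hT ▸ Finset.le_sup' (fun z => (∑ ζ, ((t ζ).pathLen z : ℝ)) / K) hx
    calc (K:ℝ)⁻¹ * ((2 * (s ^ 2 + 2)) * (∑ ζ : Fin K, ((t ζ).redCount x : ℝ))
            + (2 * s⁻¹ ^ 2) * (∑ ζ : Fin K, ((t ζ).pathLen x : ℝ)))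
        = 2 * (s ^ 2 + 2) * ((∑ ζ : Fin K, ((t ζ).redCount x : ℝ))/K)
          + 2 * s⁻¹ ^ 2 * ((∑ ζ : Fin K, ((t ζ).pathLen x : ℝ))/K) := by
          field_simp
      _ ≤ 2 * (s ^ 2 + 2) * G + 2 * s⁻¹ ^ 2 * T :=
          add_le_add (mul_le_mul_of_nonneg_left hRx (by positivity))
            (mul_le_mul_of_nonneg_left hPx (by positivity))
      _ ≤ 12 * Real.sqrt (G * T) := GDTAux.final_arith hTpos hGpos hGT hs2
  · -- norm bound for w
    intro x hx
    refine le_trans (GDTAux.norm_full_W t htree hcol hspos sK A hA' x) ?_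
    rw [Finset.sum_congr rfl fun ζ (_ : ζ ∈ Finset.univ) => (by ring :
        2 * ((s ^ 2 + 2) * ((t ζ).redCount x : ℝ) + s⁻¹ ^ 2 * ((t ζ).pathLen x : ℝ))
          = (2 * (s ^ 2 + 2)) * ((t ζ).redCount x : ℝ)
            + (2 * s⁻¹ ^ 2) * ((t ζ).pathLen x : ℝ))]
    rw [Finset.sum_add_distrib, ← Finset.mul_sum, ← Finset.mul_sum, hsK2]
    have hRx : (∑ ζ : Fin K, ((t ζ).redCount x : ℝ))/K ≤ G :=
      hG ▸ Finset.le_sup' (fun z => (∑ ζ, ((t ζ).redCount z : ℝ)) / K) hx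
    have hPx : (∑ ζ : Fin K, ((t ζ).pathLen x : ℝ))/K ≤ T :=
      hT ▸ Finset.le_sup' (fun z => (∑ ζ, ((t ζ).pathLen z : ℝ)) / K) hx
    calc (K:ℝ)⁻¹ * ((2 * (s ^ 2 + 2)) * (∑ ζ : Fin K, ((t ζ).redCount x : ℝ))
            + (2 * s⁻¹ ^ 2) * (∑ ζ : Fin K, ((t ζ).pathLen x : ℝ)))
        = 2 * (s ^ 2 + 2) * ((∑ ζ : Fin K, ((t ζ).redCount x : ℝ))/K)
          + 2 * s⁻¹ ^ 2 * ((∑ ζ : Fin K, ((t ζ).pathLen x : ℝ))/K) := by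
          field_simp
      _ ≤ 2 * (s ^ 2 + 2) * G + 2 * s⁻¹ ^ 2 * T :=
          add_le_add (mul_le_mul_of_nonneg_left hRx (by positivity))
            (mul_le_mul_of_nonneg_left hPx (by positivity))
      _ ≤ 12 * Real.sqrt (G * T) := GDTAux.final_arith hTpos hGpos hGT hs2
end

section
/- (Theorem 4.2, dual-adversary feasibility form with segment-dependent weights.) Let ℓ, n, m, K ≥ 1, let D ⊆ [ℓ]^n be a finite set, and for each ζ ∈ {1, …, K} let 𝒯_ζ be a generalized decision tree with a G-coloring that is read-once along paths and decides a function f_ζ : D → [m]. For x ∈ D let G_x^ζ be the number of red edges on the computation path P_x^ζ of x in 𝒯_ζ; for 1 ≤ g ≤ G_x^ζ let T_{g,x}^ζ be the number of black edges of P_x^ζ strictly after the g-th red edge and before the (g+1)-st red edge, let T_{0,x}^ζ be the number of black edges before the first red edge, and set T_{g,x}^ζ = 0 for g > G_x^ζ. Let G = max_{x,ζ} G_x^ζ and T_g = max_{x ∈ D} (1/K)·Σ_{ζ=1}^K T_{g,x}^ζ for 0 ≤ g ≤ G. Then there exist a finite-dimensional complex inner product space H and vectors u_{x,j}, w_{x,j}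 ∈ H for x ∈ D and 1 ≤ j ≤ n such that: (a) for all x, y ∈ D, Σ_{j : x_j ≠ y_j} ⟨u_{x,j}, w_{y,j}⟩ = 1 − (1/K)·|{ζ : f_ζ(x) = f_ζ(y)}|; and (b) for every x ∈ D, Σ_{j=1}^n ‖u_{x,j}‖² ≤ 12·Σ_{g=0}^G (1 + √(T_g)) and Σ_{j=1}^n ‖w_{x,j}‖² ≤ 12·Σ_{g=0}^G (1 + √(T_g)). -/
open scoped InnerProductSpace

namespace GDT

variable {ℓ n m : ℕ}

/-- The list of colors of the edges of the computation path of input `x`, from the root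
to the leaf (`true` = black, `false` = red). -/
def pathColors : GDT ℓ n m → (Fin n → Fin ℓ) → List Bool
  | .leaf _, _ => []
  | .node J _ color child, x => color (x J) :: pathColors (child (x J)) x

end GDT

/-- Given the list of colors of a path (`true` = black, `false` = red), `segBlack L g`
is the number of black edges strictly after the `g`-th red edge and before the
`(g+1)`-st red edge (`segBlack L 0` is the number of black edges before the first red
edge); it is `0` when `g` exceeds the number of red edges. -/
def segBlack : List Bool → ℕ → ℕ
  | [], _ => 0
  | true :: L, 0 => segBlack L 0 + 1
  | true :: L, g + 1 => segBlack L (g + 1)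
  | false :: _, 0 => 0
  | false :: L, g + 1 => segBlack L g


namespace Stmt2Aux

open GDT

variable {ℓ n m : ℕ}

/-- The record of the query of coordinate `j` along the path of `x`:
(class history key, red count, color, class representative). -/
def qrec : GDT ℓ n m → (Fin n → Fin ℓ) → List (Fin ℓ) → ℕ → Fin n →
    Option (List (Fin ℓ) × ℕ × Bool × Fin ℓ)
  | .leaf _, _, _, _, _ => none
  | .node J Q color child, x, κ, g, j =>
    if j = J then some (κ, g, color (x J), Q (x J))
    else qrec (child (x J)) x (κ ++ [Q (x J)]) (g + if color (x J) then 0 else 1) j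

lemma qrec_none {t : GDT ℓ n m} {s : Finset (Fin n)} {j : Fin n}
    (hro : t.ReadOnceFrom s) (hj : j ∈ s) (x : Fin n → Fin ℓ) (κ : List (Fin ℓ)) (g : ℕ) :
    qrec t x κ g j = none := by
  induction t generalizing s κ g with
  | leaf a => rfl
  | node J Q color child ih =>
    have hne : j ≠ J := fun h => hro.1 (h ▸ hj)
    simp only [qrec, if_neg hne]
    exact ih (x J) (hro.2 (x J)) (Finset.mem_insert_of_mem hj) _ _

lemma qrec_prefix {t : GDT ℓ n m} {x κ g j κ' g' c q}
    (h : qrec t x κ g j = some (κ', g', c, q)) : κ <+: κ' := by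
  induction t generalizing κ g with
  | leaf a => simp [qrec] at h
  | node J Q color child ih =>
    by_cases hj : j = J
    · simp only [qrec, if_pos hj] at h
      obtain ⟨rfl, rfl, rfl, rfl⟩ := by simpa using h
      exact List.prefix_refl κ
    · simp only [qrec, if_neg hj] at h
      exact ((κ.prefix_append _).trans (ih (x J) h))

lemma qrec_bound {t : GDT ℓ n m} {x κ g j κ' g' c q}
    (h : qrec t x κ g j = some (κ', g', c, q)) :
    κ'.length < κ.length + t.pathLen x ∧ g' < g + t.pathLen x := by
  induction t generalizing κ g with
  | leaf a => simp [qrec] at h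
  | node J Q color child ih =>
    by_cases hj : j = J
    · simp only [qrec, if_pos hj] at h
      obtain ⟨rfl, rfl, rfl, rfl⟩ := by simpa using h
      constructor <;> simp [GDT.pathLen] <;> omega
    · simp only [qrec, if_neg hj] at h
      have hf : (if color (x J) = true then 0 else 1) ≤ 1 := by split <;> omega
      have := ih (x J) h
      simp only [List.length_append, List.length_singleton] at this
      constructor <;> simp [GDT.pathLen] <;> [skip; skip] <;> omega

end Stmt2Aux

namespace Stmt2Aux

/-- fourth root -/
noncomputable def fr (M : ℝ) : ℝ := Real.sqrt (Real.sqrt M)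

lemma fr_sq {M : ℝ} (hM : 1 ≤ M) : fr M ^ 2 = Real.sqrt M := by
  have : (0:ℝ) ≤ Real.sqrt M := Real.sqrt_nonneg M
  rw [fr, Real.sq_sqrt this]

lemma fr_pos {M : ℝ} (hM : 1 ≤ M) : 0 < fr M := by
  have h0 : (0:ℝ) < M := lt_of_lt_of_le one_pos hM
  exact Real.sqrt_pos.2 (Real.sqrt_pos.2 h0)

lemma fr_mul_inv {M : ℝ} (hM : 1 ≤ M) : fr M * (fr M)⁻¹ = 1 :=
  mul_inv_cancel₀ (ne_of_gt (fr_pos hM))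

lemma sum_ind {α : Type*} [Fintype α] [DecidableEq α] (a b : ℝ) (qx qy : α) :
    ∑ q', (if q' = qx then a else 0) * (if q' = qy then b else 0)
      = if qx = qy then a * b else 0 := by
  rw [Finset.sum_eq_single qx]
  · simp only [if_pos rfl]
    by_cases h : qx = qy <;> simp [h]
  · intro b' _ hb; simp [hb]
  · simp

variable {ℓ n m : ℕ}

noncomputable def usel (M : ℝ) (c : Bool) (q : Fin ℓ) : Fin 3 ⊕ Fin ℓ → ℝ :=
  Sum.elim ![if c then 0 else fr M, if c then (fr M)⁻¹ else 0, if c then 0 else 1]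
    (fun q' => if c then 0 else if q' = q then 1 else 0)

noncomputable def wsel (M : ℝ) (c : Bool) (q : Fin ℓ) : Fin 3 ⊕ Fin ℓ → ℝ :=
  Sum.elim ![if c then (fr M)⁻¹ else 0, if c then 0 else fr M, if c then 0 else 1]
    (fun q' => if c then 0 else if q' = q then -1 else 0)

def lblu (o : Fin m) : Fin (m+1) → ℝ := fun r => if r = 0 then 1 else if r = o.succ then 1 else 0

def lblw (o : Fin m) : Fin (m+1) → ℝ := fun r => if r = 0 then 1 else if r = o.succ then -1 else 0

lemma sum_usel_wsel {M : ℝ} (hM : 1 ≤ M) (cx cy : Bool) (qx qy : Fin ℓ)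
    (hqc : qx = qy → cx = cy) (hbb : cx = true → cy = true → qx = qy) :
    ∑ tag : Fin 3 ⊕ Fin ℓ, usel M cx qx tag * wsel M cy qy tag
      = if qx = qy then 0 else 1 := by
  rw [Fintype.sum_sum_type]
  cases cx
  · cases cy
    · -- both red
      simp only [usel, wsel, Sum.elim_inl, Sum.elim_inr, if_false, Bool.false_eq_true,
        Fin.sum_univ_three, sum_ind]
      by_cases h : qx = qy <;>
        simp [h, Matrix.cons_val_zero, Matrix.cons_val_one, Matrix.head_cons]
    · -- x red, y black
      have h : qx ≠ qy := fun h => by simpa using hqc h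
      simp only [usel, wsel, Sum.elim_inl, Sum.elim_inr, if_false, if_true,
        Bool.false_eq_true, Fin.sum_univ_three]
      simp [if_neg h, fr_mul_inv hM]
  · cases cy
    · -- x black, y red
      have h : qx ≠ qy := fun h => by simpa using hqc h
      simp only [usel, wsel, Sum.elim_inl, Sum.elim_inr, if_false, if_true,
        Bool.false_eq_true, Fin.sum_univ_three]
      simp only [if_neg h]
      simp [inv_mul_eq_one₀ (ne_of_gt (fr_pos hM))]
    · -- both black
      have h : qx = qy := hbb rfl rfl
      simp [usel, wsel, Fin.sum_univ_three, if_pos h, h]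

lemma sum_lblu_lblw (ox oy : Fin m) :
    ∑ r, lblu ox r * lblw oy r = if ox = oy then 0 else 1 := by
  rw [Fin.sum_univ_succ]
  have h2 : ∑ i : Fin m, lblu ox i.succ * lblw oy i.succ
      = if ox = oy then -1 else 0 := by
    have h3 : ∀ i : Fin m, lblu ox i.succ * lblw oy i.succ
        = (if i = ox then 1 else 0) * (if i = oy then -1 else 0) := by
      intro i
      simp [lblu, lblw, Fin.succ_ne_zero, Fin.succ_inj]
    rw [Finset.sum_congr rfl fun i _ => h3 i, sum_ind]
    by_cases h : ox = oy <;> simp [h]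
  rw [h2]
  simp only [lblu, lblw, if_pos rfl]
  by_cases h : ox = oy <;> simp [h]

lemma sum_usel_sq {M : ℝ} (hM : 1 ≤ M) (c : Bool) (q : Fin ℓ) :
    ∑ tag : Fin 3 ⊕ Fin ℓ, usel M c q tag ^ 2
      = if c then (Real.sqrt M)⁻¹ else Real.sqrt M + 2 := by
  rw [Fintype.sum_sum_type]
  have hq : ∑ q' : Fin ℓ, usel M c q (Sum.inr q') ^ 2 = if c then 0 else 1 := by
    cases c
    · simp only [usel, Sum.elim_inr, Bool.false_eq_true, if_false]
      have h3 : ∀ q' : Fin ℓ, (if q' = q then (1:ℝ) else 0) ^ 2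
          = (if q' = q then (1:ℝ) else 0) * (if q' = q then 1 else 0) := fun q' => sq _
      rw [Finset.sum_congr rfl fun q' _ => h3 q', sum_ind]; simp
    · simp [usel]
  rw [hq]
  cases c
  · simp [usel, Fin.sum_univ_three, fr_sq hM]; ring
  · simp [usel, Fin.sum_univ_three, inv_pow, fr_sq hM]

lemma sum_wsel_sq {M : ℝ} (hM : 1 ≤ M) (c : Bool) (q : Fin ℓ) :
    ∑ tag : Fin 3 ⊕ Fin ℓ, wsel M c q tag ^ 2
      = if c then (Real.sqrt M)⁻¹ else Real.sqrt M + 2 := by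
  rw [Fintype.sum_sum_type]
  have hq : ∑ q' : Fin ℓ, wsel M c q (Sum.inr q') ^ 2 = if c then 0 else 1 := by
    cases c
    · simp only [wsel, Sum.elim_inr, Bool.false_eq_true, if_false]
      have h3 : ∀ q' : Fin ℓ, (if q' = q then (-1:ℝ) else 0) ^ 2
          = (if q' = q then (-1:ℝ) else 0) * (if q' = q then -1 else 0) := fun q' => sq _
      rw [Finset.sum_congr rfl fun q' _ => h3 q', sum_ind]; simp
    · simp [wsel]
  rw [hq]
  cases c
  · simp [wsel, Fin.sum_univ_three, fr_sq hM]; ring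
  · simp [wsel, Fin.sum_univ_three, inv_pow, fr_sq hM]

lemma sum_lblu_sq (o : Fin m) : ∑ r, lblu o r ^ 2 = 2 := by
  rw [Fin.sum_univ_succ]
  have h2 : ∑ i : Fin m, lblu o i.succ ^ 2 = 1 := by
    have h3 : ∀ i : Fin m, lblu o i.succ ^ 2
        = (if i = o then (1:ℝ) else 0) * (if i = o then 1 else 0) := by
      intro i
      simp only [lblu, Fin.succ_ne_zero, if_false, Fin.succ_inj]
      by_cases h : i = o <;> simp [h]
    rw [Finset.sum_congr rfl fun i _ => h3 i, sum_ind]; simp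
  rw [h2]; simp [lblu]; norm_num
lemma sum_lblw_sq (o : Fin m) : ∑ r, lblw o r ^ 2 = 2 := by
  rw [Fin.sum_univ_succ]
  have h2 : ∑ i : Fin m, lblw o i.succ ^ 2 = 1 := by
    have h3 : ∀ i : Fin m, lblw o i.succ ^ 2
        = (if i = o then (-1:ℝ) else 0) * (if i = o then -1 else 0) := by
      intro i
      simp only [lblw, Fin.succ_ne_zero, if_false, Fin.succ_inj]
      by_cases h : i = o <;> simp [h]
    rw [Finset.sum_congr rfl fun i _ => h3 i, sum_ind]; simp
  rw [h2]; simp [lblw]; norm_num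

end Stmt2Aux

namespace Stmt2Aux

variable {ℓ n m : ℕ}

/-- record-level inner product -/
noncomputable def gdot (Mf : ℕ → ℝ) (ox oy : Fin m) :
    Option (List (Fin ℓ) × ℕ × Bool × Fin ℓ) → Option (List (Fin ℓ) × ℕ × Bool × Fin ℓ) → ℝ
  | some (κx, gx, cx, qx), some (κy, gy, cy, qy) =>
      if κx = κy ∧ gx = gy then
        (∑ tag : Fin 3 ⊕ Fin ℓ, usel (Mf gx) cx qx tag * wsel (Mf gy) cy qy tag) *
          (∑ r, lblu ox r * lblw oy r)
      else 0
  | _, _ => 0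

lemma gdot_none_left (Mf : ℕ → ℝ) (ox oy : Fin m)
    (a : Option (List (Fin ℓ) × ℕ × Bool × Fin ℓ)) :
    gdot Mf ox oy none a = 0 := by cases a <;> rfl

lemma gdot_none_right (Mf : ℕ → ℝ) (ox oy : Fin m)
    (a : Option (List (Fin ℓ) × ℕ × Bool × Fin ℓ)) :
    gdot Mf ox oy a none = 0 := by cases a <;> rfl

/-- The core identity. -/
lemma core (Mf : ℕ → ℝ) (hMf : ∀ g, 1 ≤ Mf g) (x y : Fin n → Fin ℓ) (ox oy : Fin m) :
    ∀ (t : GDT ℓ n m) (s : Finset (Fin n)) (κ : List (Fin ℓ)) (g : ℕ),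
    t.TreeWF → t.ColorWF → t.ReadOnceFrom s →
    t.output x = ox → t.output y = oy →
    ∑ j ∈ Finset.univ.filter (fun j => x j ≠ y j),
        gdot Mf ox oy (qrec t x κ g j) (qrec t y κ g j)
      = if t.output x = t.output y then 0 else 1 := by
  intro t
  induction t with
  | leaf a =>
    intro s κ g _ _ _ _ _
    simp [qrec, gdot, GDT.output]
  | node J Q color child ih =>
    intro s κ g hwf hc hro hox hoy
    have houtx : (GDT.node J Q color child).output x = (child (x J)).output x := rfl
    have houty : (GDT.node J Q color child).output y = (child (y J)).output y := rfl
    by_cases hxy : x J = y J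
    · -- J not in the filter; both recurse into the same child
      have hJnot : J ∉ Finset.univ.filter (fun j => x j ≠ y j) := by
        simp [hxy]
      have hcongr : ∀ j ∈ Finset.univ.filter (fun j => x j ≠ y j),
          gdot Mf ox oy (qrec (GDT.node J Q color child) x κ g j)
            (qrec (GDT.node J Q color child) y κ g j)
          = gdot Mf ox oy
              (qrec (child (x J)) x (κ ++ [Q (x J)]) (g + if color (x J) then 0 else 1) j)
              (qrec (child (x J)) y (κ ++ [Q (x J)]) (g + if color (x J) then 0 else 1) j) := by
        intro j hj
        have hjne : j ≠ J := by
          intro h; subst h; exact hJnot hj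
        simp only [qrec, if_neg hjne, hxy]
      rw [Finset.sum_congr rfl hcongr]
      have := ih (x J) (insert J s) (κ ++ [Q (x J)]) (g + if color (x J) then 0 else 1)
        (hwf.2.2 (x J)) (hc.2.2 (x J)) (hro.2 (x J)) hox (by rw [hxy]; exact hoy)
      rw [this]
      rw [houtx, houty, hxy]
    · -- x J ≠ y J : J is in the filter
      have hJmem : J ∈ Finset.univ.filter (fun j => x j ≠ y j) := by
        simp [hxy]
      rw [← Finset.add_sum_erase _ _ hJmem]
      have hbb : color (x J) = true → color (y J) = true → Q (x J) = Q (y J) :=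
        hc.2.1 (x J) (y J)
      have hqc : Q (x J) = Q (y J) → color (x J) = color (y J) := by
        intro h
        have h1 := hc.1 (x J)
        have h2 := hc.1 (y J)
        rw [← h1, ← h2, h]
      have hJterm : gdot Mf ox oy (qrec (GDT.node J Q color child) x κ g J)
          (qrec (GDT.node J Q color child) y κ g J)
          = (if Q (x J) = Q (y J) then 0 else 1) * (if ox = oy then 0 else 1) := by
        simp only [qrec, if_pos rfl, gdot, and_self, if_pos]
        rw [sum_usel_wsel (hMf g) _ _ _ _ hqc hbb, sum_lblu_lblw]
      by_cases hq : Q (x J) = Q (y J)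
      · -- no divergence at this vertex
        have hcoleq : color (x J) = color (y J) := hqc hq
        have hchild : child (x J) = child (y J) := by
          have h1 := hwf.2.1 (x J)
          have h2 := hwf.2.1 (y J)
          rw [← h1, ← h2, hq]
        have hcongr : ∀ j ∈ (Finset.univ.filter (fun j => x j ≠ y j)).erase J,
            gdot Mf ox oy (qrec (GDT.node J Q color child) x κ g j)
              (qrec (GDT.node J Q color child) y κ g j)
            = gdot Mf ox oy
                (qrec (child (x J)) x (κ ++ [Q (x J)]) (g + if color (x J) then 0 else 1) j)
                (qrec (child (x J)) y (κ ++ [Q (x J)]) (g + if color (x J) then 0 else 1) j) := by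
          intro j hj
          have hjne : j ≠ J := Finset.ne_of_mem_erase hj
          simp only [qrec, if_neg hjne]
          rw [← hchild, ← hq, ← hcoleq]
        rw [Finset.sum_congr rfl hcongr]
        have hsub : ∑ j ∈ (Finset.univ.filter (fun j => x j ≠ y j)).erase J,
            gdot Mf ox oy
              (qrec (child (x J)) x (κ ++ [Q (x J)]) (g + if color (x J) then 0 else 1) j)
              (qrec (child (x J)) y (κ ++ [Q (x J)]) (g + if color (x J) then 0 else 1) j)
            = ∑ j ∈ Finset.univ.filter (fun j => x j ≠ y j),
            gdot Mf ox oy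
              (qrec (child (x J)) x (κ ++ [Q (x J)]) (g + if color (x J) then 0 else 1) j)
              (qrec (child (x J)) y (κ ++ [Q (x J)]) (g + if color (x J) then 0 else 1) j) := by
          rw [← Finset.add_sum_erase _ _ hJmem]
          rw [qrec_none (hro.2 (x J)) (Finset.mem_insert_self J s) x _ _]
          rw [gdot_none_left]
          ring
        rw [hsub]
        have := ih (x J) (insert J s) (κ ++ [Q (x J)]) (g + if color (x J) then 0 else 1)
          (hwf.2.2 (x J)) (hc.2.2 (x J)) (hro.2 (x J)) hox ?hy
        · rw [this, hJterm, if_pos hq, houtx, houty, hchild]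
          ring
        · rw [← hoy, houty, hchild]
      · -- divergence at this vertex
        have hzero : ∀ j ∈ (Finset.univ.filter (fun j => x j ≠ y j)).erase J,
            gdot Mf ox oy (qrec (GDT.node J Q color child) x κ g j)
              (qrec (GDT.node J Q color child) y κ g j) = 0 := by
          intro j hj
          have hjne : j ≠ J := Finset.ne_of_mem_erase hj
          simp only [qrec, if_neg hjne]
          rcases hxo : qrec (child (x J)) x (κ ++ [Q (x J)])
              (g + if color (x J) then 0 else 1) j with _ | ⟨κx, gx, cx, qqx⟩
          · rw [gdot_none_left]
          · rcases hyo : qrec (child (y J)) y (κ ++ [Q (y J)])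
                (g + if color (y J) then 0 else 1) j with _ | ⟨κy, gy, cy, qqy⟩
            · rw [gdot_none_right]
            · have hpx : (κ ++ [Q (x J)]) <+: κx := qrec_prefix hxo
              have hpy : (κ ++ [Q (y J)]) <+: κy := qrec_prefix hyo
              simp only [gdot]
              rw [if_neg]
              rintro ⟨h1, -⟩
              rw [h1] at hpx
              have heq : (κ ++ [Q (x J)]) = (κ ++ [Q (y J)]) := by
                have hlen : (κ ++ [Q (x J)]).length = (κ ++ [Q (y J)]).length := by simp
                rcases List.prefix_of_prefix_length_le hpx hpy (le_of_eq hlen) with h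
                exact List.IsPrefix.eq_of_length h hlen
              exact hq (by simpa using heq)
        rw [Finset.sum_eq_zero hzero, hJterm, if_neg hq, ← hox, ← hoy, houtx, houty]
        ring

end Stmt2Aux

namespace Stmt2Aux

variable {ℓ n m : ℕ}

/-- record-level squared norm contribution -/
noncomputable def ucostR (Mf : ℕ → ℝ) : Option (List (Fin ℓ) × ℕ × Bool × Fin ℓ) → ℝ
  | none => 0
  | some (_, g, c, _) => 2 * if c then (Real.sqrt (Mf g))⁻¹ else Real.sqrt (Mf g) + 2

/-- path cost along a color list -/
noncomputable def pcost (Mf : ℕ → ℝ) : List Bool → ℕ → ℝ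
  | [], _ => 0
  | c :: L, g =>
      (2 * if c then (Real.sqrt (Mf g))⁻¹ else Real.sqrt (Mf g) + 2)
        + pcost Mf L (g + if c then 0 else 1)

lemma sum_ucostR (Mf : ℕ → ℝ) (x : Fin n → Fin ℓ) :
    ∀ (t : GDT ℓ n m) (s : Finset (Fin n)) (κ : List (Fin ℓ)) (g : ℕ),
      t.ReadOnceFrom s →
      ∑ j, ucostR Mf (qrec t x κ g j) = pcost Mf (t.pathColors x) g := by
  intro t
  induction t with
  | leaf a =>
    intro s κ g _
    simp [qrec, ucostR, GDT.pathColors, pcost]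
  | node J Q color child ih =>
    intro s κ g hro
    have hJu : J ∈ (Finset.univ : Finset (Fin n)) := Finset.mem_univ J
    rw [← Finset.add_sum_erase _ _ hJu]
    have hJ : ucostR Mf (qrec (GDT.node J Q color child) x κ g J)
        = 2 * if color (x J) then (Real.sqrt (Mf g))⁻¹ else Real.sqrt (Mf g) + 2 := by
      simp [qrec, ucostR]
    have hcongr : ∀ j ∈ Finset.univ.erase J,
        ucostR Mf (qrec (GDT.node J Q color child) x κ g j)
        = ucostR Mf (qrec (child (x J)) x (κ ++ [Q (x J)])
            (g + if color (x J) then 0 else 1) j) := by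
      intro j hj
      have hjne : j ≠ J := Finset.ne_of_mem_erase hj
      simp only [qrec, if_neg hjne]
    rw [Finset.sum_congr rfl hcongr, hJ]
    have hsub : ∑ j ∈ Finset.univ.erase J,
        ucostR Mf (qrec (child (x J)) x (κ ++ [Q (x J)])
          (g + if color (x J) then 0 else 1) j)
        = ∑ j, ucostR Mf (qrec (child (x J)) x (κ ++ [Q (x J)])
          (g + if color (x J) then 0 else 1) j) := by
      rw [← Finset.add_sum_erase _ _ hJu,
        qrec_none (hro.2 (x J)) (Finset.mem_insert_self J s) x _ _]
      simp [ucostR]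
    rw [hsub, ih (x J) (insert J s) _ _ (hro.2 (x J))]
    rfl

/-- number of red edges in a color list -/
def nred : List Bool → ℕ
  | [] => 0
  | c :: L => (if c then 0 else 1) + nred L

lemma nred_pathColors (x : Fin n → Fin ℓ) :
    ∀ t : GDT ℓ n m, nred (t.pathColors x) = t.redCount x := by
  intro t
  induction t with
  | leaf a => rfl
  | node J Q color child ih =>
    simp only [GDT.pathColors, GDT.redCount, nred, ih (x J)]
    cases h : color (x J) <;> simp [h] <;> omega

lemma pcost_le (Mf : ℕ → ℝ) (hMf : ∀ g, 1 ≤ Mf g) (G : ℕ) :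
    ∀ (L : List Bool) (g0 : ℕ), g0 + nred L ≤ G →
      pcost Mf L g0 ≤ ∑ i ∈ Finset.range (G + 1 - g0),
        (2 * (segBlack L i : ℝ) * (Real.sqrt (Mf (g0 + i)))⁻¹
          + (2 * Real.sqrt (Mf (g0 + i)) + 4)) := by
  have hsqrt1 : ∀ g, (1:ℝ) ≤ Real.sqrt (Mf g) := fun g => by
    rw [show (1:ℝ) = Real.sqrt 1 by simp]
    exact Real.sqrt_le_sqrt (hMf g)
  have hsqrtpos : ∀ g, (0:ℝ) < Real.sqrt (Mf g) := fun g =>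
    lt_of_lt_of_le one_pos (hsqrt1 g)
  intro L
  induction L with
  | nil =>
    intro g0 _
    simp only [pcost]
    apply Finset.sum_nonneg
    intro i _
    have h1 := (hsqrtpos (g0 + i)).le
    have : (segBlack ([] : List Bool) i : ℝ) = 0 := by
      simp [segBlack]
    rw [this]
    nlinarith
  | cons c L ihL =>
    intro g0 hg0
    cases c with
    | true =>
      have hnr : nred (true :: L) = nred L := by simp [nred]
      rw [hnr] at hg0
      have hg0' : g0 + nred L ≤ G := by omega
      have hle : g0 ≤ G := by omega
      have hrange : G + 1 - g0 = (G - g0) + 1 := by omega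
      simp only [pcost, if_true, Nat.add_zero]
      have key : ∑ i ∈ Finset.range (G + 1 - g0),
          (2 * (segBlack (true :: L) i : ℝ) * (Real.sqrt (Mf (g0 + i)))⁻¹
            + (2 * Real.sqrt (Mf (g0 + i)) + 4))
          = (∑ i ∈ Finset.range (G + 1 - g0),
            (2 * (segBlack L i : ℝ) * (Real.sqrt (Mf (g0 + i)))⁻¹
              + (2 * Real.sqrt (Mf (g0 + i)) + 4)))
            + 2 * (Real.sqrt (Mf g0))⁻¹ := by
        rw [hrange, Finset.sum_range_succ', Finset.sum_range_succ']
        have e1 : ∀ i : ℕ, (segBlack (true :: L) (i + 1) : ℝ) = segBlack L (i + 1) := by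
          intro i; rfl
        have e0 : (segBlack (true :: L) 0 : ℝ) = (segBlack L 0 : ℝ) + 1 := by
          simp [segBlack]
        simp only [e1, e0, Nat.add_zero]
        ring
      rw [key]
      have := ihL g0 hg0'
      linarith [this]
    | false =>
      have hnr : nred (false :: L) = 1 + nred L := by simp [nred]
      rw [hnr] at hg0
      have hg0' : (g0 + 1) + nred L ≤ G := by omega
      have hle : g0 ≤ G := by omega
      have hrange : G + 1 - g0 = (G + 1 - (g0 + 1)) + 1 := by omega
      simp only [pcost, if_false, Bool.false_eq_true]
      have key : ∑ i ∈ Finset.range (G + 1 - g0),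
          (2 * (segBlack (false :: L) i : ℝ) * (Real.sqrt (Mf (g0 + i)))⁻¹
            + (2 * Real.sqrt (Mf (g0 + i)) + 4))
          = (∑ i ∈ Finset.range (G + 1 - (g0 + 1)),
            (2 * (segBlack L i : ℝ) * (Real.sqrt (Mf (g0 + 1 + i)))⁻¹
              + (2 * Real.sqrt (Mf (g0 + 1 + i)) + 4)))
            + (2 * Real.sqrt (Mf g0) + 4) := by
        rw [hrange, Finset.sum_range_succ']
        have hterm : ∀ i : ℕ,
            (2 * (segBlack (false :: L) (i + 1) : ℝ) * (Real.sqrt (Mf (g0 + (i + 1))))⁻¹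
              + (2 * Real.sqrt (Mf (g0 + (i + 1))) + 4))
            = (2 * (segBlack L i : ℝ) * (Real.sqrt (Mf (g0 + 1 + i)))⁻¹
              + (2 * Real.sqrt (Mf (g0 + 1 + i)) + 4)) := by
          intro i
          have h1 : segBlack (false :: L) (i + 1) = segBlack L i := rfl
          have h2 : g0 + (i + 1) = g0 + 1 + i := by omega
          rw [h1, h2]
        rw [Finset.sum_congr rfl fun i _ => hterm i]
        have h0 : segBlack (false :: L) 0 = 0 := rfl
        rw [Nat.add_zero, h0]
        push_cast
        simp
      rw [key]
      have := ihL (g0 + 1) hg0'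
      linarith [this]

end Stmt2Aux

namespace Stmt2Aux

variable {ℓ n m : ℕ}

/-- encoding of a bounded-length key and counter into a finite type -/
def encK (N : ℕ) (q0 : Fin ℓ) (κ : List (Fin ℓ)) (g : ℕ) :
    (Fin N → Fin ℓ) × Fin (N+1) × Fin (N+1) :=
  (fun i => κ.getD i q0,
    ⟨κ.length % (N+1), Nat.mod_lt _ (Nat.succ_pos N)⟩,
    ⟨g % (N+1), Nat.mod_lt _ (Nat.succ_pos N)⟩)

lemma encK_inj {N : ℕ} (q0 : Fin ℓ) {κ1 κ2 : List (Fin ℓ)} {g1 g2 : ℕ}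
    (h1 : κ1.length ≤ N) (h2 : κ2.length ≤ N) (hg1 : g1 ≤ N) (hg2 : g2 ≤ N) :
    encK N q0 κ1 g1 = encK N q0 κ2 g2 ↔ (κ1 = κ2 ∧ g1 = g2) := by
  constructor
  · intro h
    simp only [encK, Prod.mk.injEq, Fin.mk.injEq] at h
    obtain ⟨hfun, hlen, hg⟩ := h
    have hlen' : κ1.length = κ2.length := by
      rw [Nat.mod_eq_of_lt (by omega), Nat.mod_eq_of_lt (by omega)] at hlen
      exact hlen
    have hgg : g1 = g2 := by
      rw [Nat.mod_eq_of_lt (by omega), Nat.mod_eq_of_lt (by omega)] at hg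
      exact hg
    refine ⟨?_, hgg⟩
    apply List.ext_getElem hlen'
    intro i hi1 hi2
    have hiN : i < N := lt_of_lt_of_le hi1 h1
    have := congrFun hfun ⟨i, hiN⟩
    simpa [List.getD_eq_getElem, hi1, hi2] using this
  · rintro ⟨rfl, rfl⟩; rfl

variable (EK : Type*) [Fintype EK] [DecidableEq EK]

noncomputable def Ufun (Mf : ℕ → ℝ) (enc : List (Fin ℓ) → ℕ → EK) (t : GDT ℓ n m)
    (x : Fin n → Fin ℓ) (j : Fin n) : EK × (Fin 3 ⊕ Fin ℓ) × Fin (m+1) → ℝ :=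
  fun p => match qrec t x [] 0 j with
  | none => 0
  | some (κ, g, c, q) =>
      (if p.1 = enc κ g then 1 else 0) * (usel (Mf g) c q p.2.1 * lblu (t.output x) p.2.2)

noncomputable def Wfun (Mf : ℕ → ℝ) (enc : List (Fin ℓ) → ℕ → EK) (t : GDT ℓ n m)
    (y : Fin n → Fin ℓ) (j : Fin n) : EK × (Fin 3 ⊕ Fin ℓ) × Fin (m+1) → ℝ :=
  fun p => match qrec t y [] 0 j with
  | none => 0
  | some (κ, g, c, q) =>
      (if p.1 = enc κ g then 1 else 0) * (wsel (Mf g) c q p.2.1 * lblw (t.output y) p.2.2)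

lemma sum_triple (F : EK → ℝ) (B : Fin 3 ⊕ Fin ℓ → ℝ) (C : Fin (m+1) → ℝ) :
    ∑ p : EK × (Fin 3 ⊕ Fin ℓ) × Fin (m+1), F p.1 * (B p.2.1 * C p.2.2)
      = (∑ e, F e) * ((∑ tag, B tag) * (∑ r, C r)) := by
  rw [Fintype.sum_prod_type]
  simp only [← Finset.mul_sum]
  rw [← Finset.sum_mul]
  congr 1
  rw [Fintype.sum_prod_type]
  simp only [← Finset.mul_sum]
  rw [← Finset.sum_mul]

lemma sum_ind_one (a b : EK) :
    ∑ e, (if e = a then (1:ℝ) else 0) * (if e = b then 1 else 0)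
      = if a = b then 1 else 0 := by
  rw [sum_ind]; by_cases h : a = b <;> simp [h]

lemma sum_ind_one_sq (a : EK) :
    ∑ e, (if e = a then (1:ℝ) else 0) ^ 2 = 1 := by
  have : ∀ e : EK, (if e = a then (1:ℝ) else 0) ^ 2
      = (if e = a then (1:ℝ) else 0) * (if e = a then 1 else 0) := fun e => sq _
  rw [Finset.sum_congr rfl fun e _ => this e, sum_ind]
  simp

lemma sum_Ufun_Wfun (Mf : ℕ → ℝ) (enc : List (Fin ℓ) → ℕ → EK) (t : GDT ℓ n m)
    (x y : Fin n → Fin ℓ) (j : Fin n)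
    (hinj : ∀ κ1 g1 c1 q1 κ2 g2 c2 q2, qrec t x [] 0 j = some (κ1, g1, c1, q1) →
      qrec t y [] 0 j = some (κ2, g2, c2, q2) →
      (enc κ1 g1 = enc κ2 g2 ↔ (κ1 = κ2 ∧ g1 = g2))) :
    ∑ p : EK × (Fin 3 ⊕ Fin ℓ) × Fin (m+1),
        Ufun EK Mf enc t x j p * Wfun EK Mf enc t y j p
      = gdot Mf (t.output x) (t.output y) (qrec t x [] 0 j) (qrec t y [] 0 j) := by
  rcases hx : qrec t x [] 0 j with _ | ⟨κ1, g1, c1, q1⟩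
  · rw [gdot_none_left]
    apply Finset.sum_eq_zero
    intro p _
    simp [Ufun, hx]
  · rcases hy : qrec t y [] 0 j with _ | ⟨κ2, g2, c2, q2⟩
    · rw [gdot_none_right]
      apply Finset.sum_eq_zero
      intro p _
      simp [Wfun, hy]
    · have hterm : ∀ p : EK × (Fin 3 ⊕ Fin ℓ) × Fin (m+1),
          Ufun EK Mf enc t x j p * Wfun EK Mf enc t y j p
          = ((if p.1 = enc κ1 g1 then (1:ℝ) else 0) * (if p.1 = enc κ2 g2 then 1 else 0))
            * ((usel (Mf g1) c1 q1 p.2.1 * wsel (Mf g2) c2 q2 p.2.1)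
              * (lblu (t.output x) p.2.2 * lblw (t.output y) p.2.2)) := by
        intro p
        simp only [Ufun, Wfun, hx, hy]
        ring
      calc ∑ p : EK × (Fin 3 ⊕ Fin ℓ) × Fin (m+1),
              Ufun EK Mf enc t x j p * Wfun EK Mf enc t y j p
          = (∑ e, (if e = enc κ1 g1 then (1:ℝ) else 0) * (if e = enc κ2 g2 then 1 else 0))
            * ((∑ tag, usel (Mf g1) c1 q1 tag * wsel (Mf g2) c2 q2 tag)
              * (∑ r, lblu (t.output x) r * lblw (t.output y) r)) := by
            rw [Finset.sum_congr rfl fun p _ => hterm p]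
            exact sum_triple EK
              (fun e => (if e = enc κ1 g1 then (1:ℝ) else 0) * (if e = enc κ2 g2 then 1 else 0))
              (fun tag => usel (Mf g1) c1 q1 tag * wsel (Mf g2) c2 q2 tag)
              (fun r => lblu (t.output x) r * lblw (t.output y) r)
        _ = gdot Mf (t.output x) (t.output y) (some (κ1, g1, c1, q1))
              (some (κ2, g2, c2, q2)) := by
            rw [sum_ind_one EK (enc κ1 g1) (enc κ2 g2)]
            simp only [hinj κ1 g1 c1 q1 κ2 g2 c2 q2 hx hy]
            simp only [gdot]
            by_cases h : κ1 = κ2 ∧ g1 = g2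
            · rw [if_pos h, if_pos h, one_mul]
            · rw [if_neg h, if_neg h, zero_mul]

lemma sum_Ufun_sq (Mf : ℕ → ℝ) (hMf : ∀ g, 1 ≤ Mf g) (enc : List (Fin ℓ) → ℕ → EK)
    (t : GDT ℓ n m) (x : Fin n → Fin ℓ) (j : Fin n) :
    ∑ p : EK × (Fin 3 ⊕ Fin ℓ) × Fin (m+1), Ufun EK Mf enc t x j p ^ 2
      = ucostR Mf (qrec t x [] 0 j) := by
  rcases hx : qrec t x [] 0 j with _ | ⟨κ, g, c, q⟩
  · simp only [ucostR]
    apply Finset.sum_eq_zero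
    intro p _
    simp [Ufun, hx]
  · have hterm : ∀ p : EK × (Fin 3 ⊕ Fin ℓ) × Fin (m+1),
        Ufun EK Mf enc t x j p ^ 2
        = ((if p.1 = enc κ g then (1:ℝ) else 0) ^ 2)
          * ((usel (Mf g) c q p.2.1 ^ 2) * (lblu (t.output x) p.2.2 ^ 2)) := by
      intro p
      simp only [Ufun, hx]
      ring
    calc ∑ p : EK × (Fin 3 ⊕ Fin ℓ) × Fin (m+1), Ufun EK Mf enc t x j p ^ 2
        = (∑ e, (if e = enc κ g then (1:ℝ) else 0) ^ 2)
          * ((∑ tag, usel (Mf g) c q tag ^ 2) * (∑ r, lblu (t.output x) r ^ 2)) := by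
          rw [Finset.sum_congr rfl fun p _ => hterm p]
          exact sum_triple EK (fun e => (if e = enc κ g then (1:ℝ) else 0) ^ 2)
            (fun tag => usel (Mf g) c q tag ^ 2) (fun r => lblu (t.output x) r ^ 2)
      _ = ucostR Mf (some (κ, g, c, q)) := by
          rw [sum_ind_one_sq EK (enc κ g), sum_usel_sq (hMf g) c q, sum_lblu_sq]
          simp only [ucostR]
          ring
lemma sum_Wfun_sq (Mf : ℕ → ℝ) (hMf : ∀ g, 1 ≤ Mf g) (enc : List (Fin ℓ) → ℕ → EK)
    (t : GDT ℓ n m) (x : Fin n → Fin ℓ) (j : Fin n) :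
    ∑ p : EK × (Fin 3 ⊕ Fin ℓ) × Fin (m+1), Wfun EK Mf enc t x j p ^ 2
      = ucostR Mf (qrec t x [] 0 j) := by
  rcases hx : qrec t x [] 0 j with _ | ⟨κ, g, c, q⟩
  · simp only [ucostR]
    apply Finset.sum_eq_zero
    intro p _
    simp [Wfun, hx]
  · have hterm : ∀ p : EK × (Fin 3 ⊕ Fin ℓ) × Fin (m+1),
        Wfun EK Mf enc t x j p ^ 2
        = ((if p.1 = enc κ g then (1:ℝ) else 0) ^ 2)
          * ((wsel (Mf g) c q p.2.1 ^ 2) * (lblw (t.output x) p.2.2 ^ 2)) := by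
      intro p
      simp only [Wfun, hx]
      ring
    calc ∑ p : EK × (Fin 3 ⊕ Fin ℓ) × Fin (m+1), Wfun EK Mf enc t x j p ^ 2
        = (∑ e, (if e = enc κ g then (1:ℝ) else 0) ^ 2)
          * ((∑ tag, wsel (Mf g) c q tag ^ 2) * (∑ r, lblw (t.output x) r ^ 2)) := by
          rw [Finset.sum_congr rfl fun p _ => hterm p]
          exact sum_triple EK (fun e => (if e = enc κ g then (1:ℝ) else 0) ^ 2)
            (fun tag => wsel (Mf g) c q tag ^ 2) (fun r => lblw (t.output x) r ^ 2)
      _ = ucostR Mf (some (κ, g, c, q)) := by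
          rw [sum_ind_one_sq EK (enc κ g), sum_wsel_sq (hMf g) c q, sum_lblw_sq]
          simp only [ucostR]
          ring

end Stmt2Aux

namespace Stmt2Aux

lemma sc1 {T : ℝ} (hT : 0 ≤ T) : Real.sqrt (max T 1) ≤ 1 + Real.sqrt T := by
  rcases le_total T 1 with h | h
  · rw [max_eq_right h]
    simpa using Real.sqrt_nonneg T
  · rw [max_eq_left h]
    linarith [Real.sqrt_nonneg T]

lemma sc2 {T : ℝ} (hT : 0 ≤ T) : T * (Real.sqrt (max T 1))⁻¹ ≤ 1 + Real.sqrt T := by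
  rcases le_total T 1 with h | h
  · rw [max_eq_right h]
    simpa using le_trans h (by linarith [Real.sqrt_nonneg T])
  · rw [max_eq_left h]
    have h0 : (0:ℝ) ≤ T := hT
    have hsq : Real.sqrt T * Real.sqrt T = T := Real.mul_self_sqrt h0
    have hne : Real.sqrt T ≠ 0 := by
      have : (1:ℝ) ≤ Real.sqrt T := by
        rw [show (1:ℝ) = Real.sqrt 1 by simp]
        exact Real.sqrt_le_sqrt h
      linarith
    have : T * (Real.sqrt T)⁻¹ = Real.sqrt T := by
      rw [← hsq]
      field_simp
      rw [Real.sqrt_sq (Real.sqrt_nonneg T)]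
    rw [this]
    linarith [Real.sqrt_nonneg T]

lemma cost_bound {K G : ℕ} (hK : 1 ≤ K) (Tg : ℕ → ℝ) (hTnn : ∀ g ≤ G, 0 ≤ Tg g)
    (P : Fin K → ℝ) (S : Fin K → ℕ → ℕ)
    (hP : ∀ ζ, P ζ ≤ ∑ i ∈ Finset.range (G+1),
      (2 * (S ζ i : ℝ) * (Real.sqrt (max (Tg i) 1))⁻¹
        + (2 * Real.sqrt (max (Tg i) 1) + 4)))
    (hS : ∀ i ≤ G, (∑ ζ, (S ζ i : ℝ)) / K ≤ Tg i) :
    (K:ℝ)⁻¹ * ∑ ζ, P ζ ≤ 12 * ∑ i ∈ Finset.range (G+1), (1 + Real.sqrt (Tg i)) := by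
  have hK0 : (0:ℝ) < K := by exact_mod_cast hK
  have step1 : (K:ℝ)⁻¹ * ∑ ζ, P ζ
      ≤ (K:ℝ)⁻¹ * ∑ ζ, ∑ i ∈ Finset.range (G+1),
        (2 * (S ζ i : ℝ) * (Real.sqrt (max (Tg i) 1))⁻¹
          + (2 * Real.sqrt (max (Tg i) 1) + 4)) := by
    apply mul_le_mul_of_nonneg_left _ (by positivity)
    exact Finset.sum_le_sum fun ζ _ => hP ζ
  refine le_trans step1 ?_
  rw [Finset.sum_comm, Finset.mul_sum, Finset.mul_sum]
  apply Finset.sum_le_sum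
  intro i hi
  have hiG : i ≤ G := by
    simp only [Finset.mem_range] at hi; omega
  have hT := hTnn i hiG
  have hsplit : ∑ ζ : Fin K, (2 * (S ζ i : ℝ) * (Real.sqrt (max (Tg i) 1))⁻¹
      + (2 * Real.sqrt (max (Tg i) 1) + 4))
      = 2 * (∑ ζ, (S ζ i : ℝ)) * (Real.sqrt (max (Tg i) 1))⁻¹
        + (K:ℝ) * (2 * Real.sqrt (max (Tg i) 1) + 4) := by
    rw [Finset.sum_add_distrib, Finset.sum_const, Finset.card_univ, Fintype.card_fin]
    rw [← Finset.sum_mul, ← Finset.mul_sum]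
    ring_nf
    try simp [nsmul_eq_mul]
    try ring
  rw [hsplit]
  have hsum0 : (0:ℝ) ≤ ∑ ζ, (S ζ i : ℝ) :=
    Finset.sum_nonneg fun ζ _ => by positivity
  have hinv0 : (0:ℝ) ≤ (Real.sqrt (max (Tg i) 1))⁻¹ := by positivity
  have havg := hS i hiG
  have h1 : (K:ℝ)⁻¹ * (2 * (∑ ζ, (S ζ i : ℝ)) * (Real.sqrt (max (Tg i) 1))⁻¹
      + (K:ℝ) * (2 * Real.sqrt (max (Tg i) 1) + 4))
      = 2 * ((∑ ζ, (S ζ i : ℝ)) / K) * (Real.sqrt (max (Tg i) 1))⁻¹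
        + (2 * Real.sqrt (max (Tg i) 1) + 4) := by
    field_simp
  rw [h1]
  have h2 : 2 * ((∑ ζ, (S ζ i : ℝ)) / K) * (Real.sqrt (max (Tg i) 1))⁻¹
      ≤ 2 * Tg i * (Real.sqrt (max (Tg i) 1))⁻¹ := by
    apply mul_le_mul_of_nonneg_right _ hinv0
    linarith
  have h3 : 2 * Tg i * (Real.sqrt (max (Tg i) 1))⁻¹ ≤ 2 * (1 + Real.sqrt (Tg i)) := by
    have := sc2 hT
    nlinarith
  have h4 : 2 * Real.sqrt (max (Tg i) 1) ≤ 2 * (1 + Real.sqrt (Tg i)) := by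
    have := sc1 hT
    linarith
  have h5 : (0:ℝ) ≤ Real.sqrt (Tg i) := Real.sqrt_nonneg _
  linarith

lemma inner_ofReal {d : ℕ} (a b : Fin d → ℝ) :
    (inner ℂ ((WithLp.equiv 2 (Fin d → ℂ)).symm fun i => (a i : ℂ))
      ((WithLp.equiv 2 (Fin d → ℂ)).symm fun i => (b i : ℂ)) : ℂ)
      = ((∑ i, a i * b i : ℝ) : ℂ) := by
  rw [PiLp.inner_apply]
  push_cast
  apply Finset.sum_congr rfl
  intro i _
  simp [WithLp.equiv_symm_apply, PiLp.toLp_apply, Complex.conj_ofReal, mul_comm]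

lemma norm_sq_ofReal {d : ℕ} (a : Fin d → ℝ) :
    ‖((WithLp.equiv 2 (Fin d → ℂ)).symm fun i => (a i : ℂ) :
        EuclideanSpace ℂ (Fin d))‖ ^ 2 = ∑ i, a i ^ 2 := by
  rw [EuclideanSpace.norm_eq, Real.sq_sqrt (Finset.sum_nonneg fun i _ => sq_nonneg _)]
  apply Finset.sum_congr rfl
  intro i _
  simp [WithLp.equiv_symm_apply, PiLp.toLp_apply, sq_abs]

end Stmt2Aux

open Stmt2Aux in
/-- **Theorem 4.2, dual-adversary feasibility form with segment-dependent weights.** -/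
theorem stmt2 {ℓ n m K : ℕ} (hl : 1 ≤ ℓ) (hn : 1 ≤ n) (hm : 1 ≤ m) (hK : 1 ≤ K)
    (D : Finset (Fin n → Fin ℓ)) (hD : D.Nonempty)
    (t : Fin K → GDT ℓ n m) (f : Fin K → (Fin n → Fin ℓ) → Fin m)
    (htree : ∀ ζ, (t ζ).TreeWF) (hcol : ∀ ζ, (t ζ).ColorWF) (hro : ∀ ζ, (t ζ).ReadOnce)
    (hdec : ∀ ζ, ∀ x ∈ D, (t ζ).output x = f ζ x)
    (G : ℕ) (hG : G = D.sup fun x => Finset.univ.sup fun ζ : Fin K => (t ζ).redCount x)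
    (Tg : ℕ → ℝ)
    (hTg : ∀ g ≤ G,
      Tg g = D.sup' hD fun x => (∑ ζ, (segBlack ((t ζ).pathColors x) g : ℝ)) / K) :
    ∃ (d : ℕ) (u w : (Fin n → Fin ℓ) → Fin n → EuclideanSpace ℂ (Fin d)),
      (∀ x ∈ D, ∀ y ∈ D,
          ∑ j ∈ Finset.univ.filter (fun j => x j ≠ y j), ⟪u x j, w y j⟫_ℂ
            = 1 - ((Finset.univ.filter fun ζ : Fin K => f ζ x = f ζ y).card : ℂ) / K) ∧
      (∀ x ∈ D, ∑ j, ‖u x j‖ ^ 2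
          ≤ 12 * ∑ g ∈ Finset.range (G + 1), (1 + Real.sqrt (Tg g))) ∧
      (∀ x ∈ D, ∑ j, ‖w x j‖ ^ 2
          ≤ 12 * ∑ g ∈ Finset.range (G + 1), (1 + Real.sqrt (Tg g))) := by
  classical
  set q0 : Fin ℓ := ⟨0, hl⟩ with hq0
  set N : ℕ := D.sup fun x => Finset.univ.sup fun ζ : Fin K => (t ζ).pathLen x with hN
  have hPL : ∀ x ∈ D, ∀ ζ : Fin K, (t ζ).pathLen x ≤ N := by
    intro x hx ζ
    calc (t ζ).pathLen x ≤ Finset.univ.sup fun ζ : Fin K => (t ζ).pathLen x :=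
        Finset.le_sup (f := fun ζ : Fin K => (t ζ).pathLen x) (Finset.mem_univ ζ)
      _ ≤ N := Finset.le_sup (f := fun x => Finset.univ.sup fun ζ : Fin K => (t ζ).pathLen x) hx
  have hRC : ∀ x ∈ D, ∀ ζ : Fin K, nred ((t ζ).pathColors x) ≤ G := by
    intro x hx ζ
    rw [nred_pathColors, hG]
    calc (t ζ).redCount x ≤ Finset.univ.sup fun ζ : Fin K => (t ζ).redCount x :=
        Finset.le_sup (f := fun ζ : Fin K => (t ζ).redCount x) (Finset.mem_univ ζ)
      _ ≤ _ := Finset.le_sup (f := fun x => Finset.univ.sup fun ζ : Fin K => (t ζ).redCount x) hx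
  set Mf : ℕ → ℝ := fun g => max (Tg g) 1 with hMfdef
  have hMf : ∀ g, 1 ≤ Mf g := fun g => le_max_right _ _
  have hTnn : ∀ g ≤ G, 0 ≤ Tg g := by
    intro g hg
    obtain ⟨x0, hx0⟩ := hD
    rw [hTg g hg]
    refine le_trans ?_ (Finset.le_sup' _ hx0)
    positivity
  have hK0 : (0:ℝ) < K := by exact_mod_cast hK
  have hKC : ((K:ℕ):ℂ) ≠ 0 := Nat.cast_ne_zero.mpr (by omega)
  set d : ℕ := Fintype.card (Fin K ×
    ((Fin N → Fin ℓ) × Fin (N+1) × Fin (N+1)) × (Fin 3 ⊕ Fin ℓ) × Fin (m+1)) with hd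
  set e : (Fin K × ((Fin N → Fin ℓ) × Fin (N+1) × Fin (N+1)) × (Fin 3 ⊕ Fin ℓ) × Fin (m+1))
      ≃ Fin d := Fintype.equivFin _ with he
  set Ureal : (Fin n → Fin ℓ) → Fin n →
      (Fin K × ((Fin N → Fin ℓ) × Fin (N+1) × Fin (N+1)) × (Fin 3 ⊕ Fin ℓ) × Fin (m+1)) → ℝ :=
    fun x j p => (Real.sqrt K)⁻¹ *
      Ufun ((Fin N → Fin ℓ) × Fin (N+1) × Fin (N+1)) Mf (encK N q0) (t p.1) x j p.2
    with hUr
  set Wreal : (Fin n → Fin ℓ) → Fin n →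
      (Fin K × ((Fin N → Fin ℓ) × Fin (N+1) × Fin (N+1)) × (Fin 3 ⊕ Fin ℓ) × Fin (m+1)) → ℝ :=
    fun x j p => (Real.sqrt K)⁻¹ *
      Wfun ((Fin N → Fin ℓ) × Fin (N+1) × Fin (N+1)) Mf (encK N q0) (t p.1) x j p.2
    with hWr
  set u : (Fin n → Fin ℓ) → Fin n → EuclideanSpace ℂ (Fin d) :=
    fun x j => (WithLp.equiv 2 (Fin d → ℂ)).symm fun i => ((Ureal x j (e.symm i) : ℝ) : ℂ)
    with hu
  set w : (Fin n → Fin ℓ) → Fin n → EuclideanSpace ℂ (Fin d) :=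
    fun x j => (WithLp.equiv 2 (Fin d → ℂ)).symm fun i => ((Wreal x j (e.symm i) : ℝ) : ℂ)
    with hw
  have hsqK : (Real.sqrt K)⁻¹ * (Real.sqrt K)⁻¹ = (K:ℝ)⁻¹ := by
    rw [← mul_inv, Real.mul_self_sqrt hK0.le]
  -- per-coordinate inner product formula
  have hUW : ∀ x ∈ D, ∀ y ∈ D, ∀ j : Fin n,
      (∑ p : Fin K × ((Fin N → Fin ℓ) × Fin (N+1) × Fin (N+1)) × (Fin 3 ⊕ Fin ℓ) × Fin (m+1),
        Ureal x j p * Wreal y j p)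
      = (K:ℝ)⁻¹ * ∑ ζ, gdot Mf ((t ζ).output x) ((t ζ).output y)
          (qrec (t ζ) x [] 0 j) (qrec (t ζ) y [] 0 j) := by
    intro x hx y hy j
    rw [Fintype.sum_prod_type, Finset.mul_sum]
    apply Finset.sum_congr rfl
    intro ζ _
    have hinj : ∀ κ1 g1 c1 q1 κ2 g2 c2 q2, qrec (t ζ) x [] 0 j = some (κ1, g1, c1, q1) →
        qrec (t ζ) y [] 0 j = some (κ2, g2, c2, q2) →
        (encK N q0 κ1 g1 = encK N q0 κ2 g2 ↔ (κ1 = κ2 ∧ g1 = g2)) := by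
      intro κ1 g1 c1 q1 κ2 g2 c2 q2 h1 h2
      have b1 := qrec_bound h1
      have b2 := qrec_bound h2
      simp only [List.length_nil] at b1 b2
      have hb1 := hPL x hx ζ
      have hb2 := hPL y hy ζ
      exact encK_inj q0 (by omega) (by omega) (by omega) (by omega)
    have hmain := sum_Ufun_Wfun ((Fin N → Fin ℓ) × Fin (N+1) × Fin (N+1)) Mf (encK N q0)
      (t ζ) x y j hinj
    calc ∑ p2 : ((Fin N → Fin ℓ) × Fin (N+1) × Fin (N+1)) × (Fin 3 ⊕ Fin ℓ) × Fin (m+1),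
            Ureal x j (ζ, p2) * Wreal y j (ζ, p2)
        = ∑ p2 : ((Fin N → Fin ℓ) × Fin (N+1) × Fin (N+1)) × (Fin 3 ⊕ Fin ℓ) × Fin (m+1),
            (K:ℝ)⁻¹ *
            (Ufun ((Fin N → Fin ℓ) × Fin (N+1) × Fin (N+1)) Mf (encK N q0) (t ζ) x j p2 *
              Wfun ((Fin N → Fin ℓ) × Fin (N+1) × Fin (N+1)) Mf (encK N q0) (t ζ) y j p2) := by
          apply Finset.sum_congr rfl
          intro p2 _
          simp only [hUr, hWr]
          rw [← hsqK]
          ring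
      _ = (K:ℝ)⁻¹ * gdot Mf ((t ζ).output x) ((t ζ).output y)
            (qrec (t ζ) x [] 0 j) (qrec (t ζ) y [] 0 j) := by
          rw [← Finset.mul_sum, hmain]
  -- per-coordinate squared-norm formulas
  have hUsq : ∀ (x : Fin n → Fin ℓ) (j : Fin n),
      (∑ p : Fin K × ((Fin N → Fin ℓ) × Fin (N+1) × Fin (N+1)) × (Fin 3 ⊕ Fin ℓ) × Fin (m+1),
        Ureal x j p ^ 2)
      = (K:ℝ)⁻¹ * ∑ ζ, ucostR Mf (qrec (t ζ) x [] 0 j) := by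
    intro x j
    rw [Fintype.sum_prod_type, Finset.mul_sum]
    apply Finset.sum_congr rfl
    intro ζ _
    have hmain := sum_Ufun_sq ((Fin N → Fin ℓ) × Fin (N+1) × Fin (N+1)) Mf hMf (encK N q0)
      (t ζ) x j
    calc ∑ p2 : ((Fin N → Fin ℓ) × Fin (N+1) × Fin (N+1)) × (Fin 3 ⊕ Fin ℓ) × Fin (m+1),
            Ureal x j (ζ, p2) ^ 2
        = ∑ p2 : ((Fin N → Fin ℓ) × Fin (N+1) × Fin (N+1)) × (Fin 3 ⊕ Fin ℓ) × Fin (m+1),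
            (K:ℝ)⁻¹ *
            (Ufun ((Fin N → Fin ℓ) × Fin (N+1) × Fin (N+1)) Mf (encK N q0) (t ζ) x j p2 ^ 2) := by
          apply Finset.sum_congr rfl
          intro p2 _
          simp only [hUr]
          rw [← hsqK]
          ring
      _ = _ := by rw [← Finset.mul_sum, hmain]
  have hWsq : ∀ (x : Fin n → Fin ℓ) (j : Fin n),
      (∑ p : Fin K × ((Fin N → Fin ℓ) × Fin (N+1) × Fin (N+1)) × (Fin 3 ⊕ Fin ℓ) × Fin (m+1),
        Wreal x j p ^ 2)
      = (K:ℝ)⁻¹ * ∑ ζ, ucostR Mf (qrec (t ζ) x [] 0 j) := by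
    intro x j
    rw [Fintype.sum_prod_type, Finset.mul_sum]
    apply Finset.sum_congr rfl
    intro ζ _
    have hmain := sum_Wfun_sq ((Fin N → Fin ℓ) × Fin (N+1) × Fin (N+1)) Mf hMf (encK N q0)
      (t ζ) x j
    calc ∑ p2 : ((Fin N → Fin ℓ) × Fin (N+1) × Fin (N+1)) × (Fin 3 ⊕ Fin ℓ) × Fin (m+1),
            Wreal x j (ζ, p2) ^ 2
        = ∑ p2 : ((Fin N → Fin ℓ) × Fin (N+1) × Fin (N+1)) × (Fin 3 ⊕ Fin ℓ) × Fin (m+1),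
            (K:ℝ)⁻¹ *
            (Wfun ((Fin N → Fin ℓ) × Fin (N+1) × Fin (N+1)) Mf (encK N q0) (t ζ) x j p2 ^ 2) := by
          apply Finset.sum_congr rfl
          intro p2 _
          simp only [hWr]
          rw [← hsqK]
          ring
      _ = _ := by rw [← Finset.mul_sum, hmain]
  -- the norm-cost bound, shared by u and w
  have hcost : ∀ x ∈ D,
      (K:ℝ)⁻¹ * ∑ ζ, pcost Mf ((t ζ).pathColors x) 0
        ≤ 12 * ∑ g ∈ Finset.range (G + 1), (1 + Real.sqrt (Tg g)) := by
    intro x hx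
    apply cost_bound hK Tg hTnn _ (fun ζ i => segBlack ((t ζ).pathColors x) i)
    · intro ζ
      have hb := pcost_le Mf hMf G ((t ζ).pathColors x) 0 (by simpa using hRC x hx ζ)
      simp only [Nat.sub_zero, Nat.zero_add, hMfdef] at hb
      exact hb
    · intro i hi
      rw [hTg i hi]
      exact Finset.le_sup'
        (f := fun x => (∑ ζ, (segBlack ((t ζ).pathColors x) i : ℝ)) / K) hx
  have hsumcost : ∀ (V : (Fin n → Fin ℓ) → Fin n →
        (Fin K × ((Fin N → Fin ℓ) × Fin (N+1) × Fin (N+1)) × (Fin 3 ⊕ Fin ℓ) × Fin (m+1)) → ℝ),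
      (∀ x j, (∑ p, V x j p ^ 2) = (K:ℝ)⁻¹ * ∑ ζ, ucostR Mf (qrec (t ζ) x [] 0 j)) →
      ∀ x ∈ D, ∑ j, (∑ p, V x j p ^ 2)
        ≤ 12 * ∑ g ∈ Finset.range (G + 1), (1 + Real.sqrt (Tg g)) := by
    intro V hV x hx
    have : ∑ j, (∑ p, V x j p ^ 2) = (K:ℝ)⁻¹ * ∑ ζ, pcost Mf ((t ζ).pathColors x) 0 := by
      calc ∑ j, (∑ p, V x j p ^ 2)
          = ∑ j, (K:ℝ)⁻¹ * ∑ ζ, ucostR Mf (qrec (t ζ) x [] 0 j) := by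
            exact Finset.sum_congr rfl fun j _ => hV x j
        _ = (K:ℝ)⁻¹ * ∑ ζ, ∑ j, ucostR Mf (qrec (t ζ) x [] 0 j) := by
            rw [← Finset.mul_sum, Finset.sum_comm]
        _ = (K:ℝ)⁻¹ * ∑ ζ, pcost Mf ((t ζ).pathColors x) 0 := by
            congr 1
            exact Finset.sum_congr rfl fun ζ _ =>
              sum_ucostR Mf x (t ζ) (∅ : Finset (Fin n)) ([] : List (Fin ℓ)) 0 (hro ζ)
    rw [this]
    exact hcost x hx
  refine ⟨d, u, w, ?_, ?_, ?_⟩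
  · -- inner product identity
    intro x hx y hy
    have hterm : ∀ j : Fin n, (inner ℂ (u x j) (w y j) : ℂ)
        = (((K:ℝ)⁻¹ * ∑ ζ, gdot Mf ((t ζ).output x) ((t ζ).output y)
            (qrec (t ζ) x [] 0 j) (qrec (t ζ) y [] 0 j) : ℝ) : ℂ) := by
      intro j
      rw [hu, hw]
      rw [inner_ofReal]
      rw [show (∑ i : Fin d, Ureal x j (e.symm i) * Wreal y j (e.symm i))
          = ∑ p, Ureal x j p * Wreal y j p from
        Equiv.sum_comp e.symm fun p => Ureal x j p * Wreal y j p]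
      rw [hUW x hx y hy j]
    rw [Finset.sum_congr rfl fun j _ => hterm j]
    rw [← Complex.ofReal_sum]
    have hreal : ∑ j ∈ Finset.univ.filter (fun j => x j ≠ y j),
        ((K:ℝ)⁻¹ * ∑ ζ, gdot Mf ((t ζ).output x) ((t ζ).output y)
          (qrec (t ζ) x [] 0 j) (qrec (t ζ) y [] 0 j))
        = (K:ℝ)⁻¹ * ((K:ℝ) -
            ((Finset.univ.filter fun ζ : Fin K => f ζ x = f ζ y).card : ℝ)) := by
      rw [← Finset.mul_sum, Finset.sum_comm]
      congr 1
      have hz : ∀ ζ : Fin K, ∑ j ∈ Finset.univ.filter (fun j => x j ≠ y j),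
          gdot Mf ((t ζ).output x) ((t ζ).output y)
            (qrec (t ζ) x [] 0 j) (qrec (t ζ) y [] 0 j)
          = if f ζ x = f ζ y then (0:ℝ) else 1 := by
        intro ζ
        rw [core Mf hMf x y ((t ζ).output x) ((t ζ).output y) (t ζ)
          (∅ : Finset (Fin n)) ([] : List (Fin ℓ)) 0
          (htree ζ) (hcol ζ) (hro ζ) rfl rfl]
        rw [hdec ζ x hx, hdec ζ y hy]
      rw [Finset.sum_congr rfl fun ζ _ => hz ζ]
      have hone : ∀ ζ : Fin K, (if f ζ x = f ζ y then (0:ℝ) else 1)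
          = 1 - (if f ζ x = f ζ y then 1 else 0) := by
        intro ζ; split <;> norm_num
      rw [Finset.sum_congr rfl fun ζ _ => hone ζ, Finset.sum_sub_distrib,
        Finset.sum_const, Finset.sum_boole]
      simp [Finset.card_univ]
    rw [hreal]
    push_cast
    field_simp
  · -- norm bound for u
    intro x hx
    have hnorm : ∀ j : Fin n, ‖u x j‖ ^ 2 = ∑ p, Ureal x j p ^ 2 := by
      intro j
      rw [hu]
      rw [norm_sq_ofReal]
      exact Equiv.sum_comp e.symm fun p => Ureal x j p ^ 2
    rw [Finset.sum_congr rfl fun j _ => hnorm j]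
    exact hsumcost Ureal hUsq x hx
  · -- norm bound for w
    intro x hx
    have hnorm : ∀ j : Fin n, ‖w x j‖ ^ 2 = ∑ p, Wreal x j p ^ 2 := by
      intro j
      rw [hw]
      rw [norm_sq_ofReal]
      exact Equiv.sum_comp e.symm fun p => Wreal x j p ^ 2
    rw [Finset.sum_congr rfl fun j _ => hnorm j]
    exact hsumcost Wreal hWsq x hx
end

section
/- (Positive witness of the span program of Theorem 3.1.) Let 𝒯 be a binary decision tree with a G-coloring, read-once along paths, with positive weights W_black, W_red. For x ∈ {0,1}^n let P_x be its computation path, leaf(x) its endpoint, T_x the length of P_x and G_x the number of red edges on P_x. Let w_x ∈ ℂ^{E(𝒯)} be the vector whose entry at each path edge (v, N(v, x_{J(v)})), for v an internal vertex on P_x, equals 1/√(W_{C(v, x_{J(v)})}), and whose entries at all other edges are 0. Then w_x is supported only on edges whose input vectors are available for x, it satisfies A·w_x = e_r − e_{leaf(x)} where r is the root, and ‖w_x‖² = Σ_{v ∈ P_x internal} 1/W_{C(v, x_{J(v)})} ≤ G_x/W_red + T_x/W_black. -/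
open scoped InnerProductSpace

/-- A binary decision tree with input length `n`, with a coloring of its edges
(`true` = black, `false` = red): at `node J color child`, `J` is the query index,
`color q` the color of the outgoing edge labeled `q`, and `child q` the corresponding
child. -/
inductive BDT (n : ℕ) : Type where
  | leaf : BDT n
  | node (J : Fin n) (color : Bool → Bool) (child : Bool → BDT n) : BDT n

namespace BDT

variable {n : ℕ}

/-- G-coloring condition: every internal vertex has at most one black (`true`)
outgoing edge. -/
def ColorWF : BDT n → Prop
  | .leaf => True
  | .node _ color child =>
      ¬(color false = true ∧ color true = true) ∧ ∀ q, ColorWF (child q)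

/-- `t.ReadOnceFrom s`: no query index of `s` occurs in `t` and no query index is used
twice along a root-to-leaf path of `t`. -/
def ReadOnceFrom : BDT n → Finset (Fin n) → Prop
  | .leaf, _ => True
  | .node J _ child, s => J ∉ s ∧ ∀ q, ReadOnceFrom (child q) (insert J s)

/-- The tree is read-once along paths. -/
def ReadOnce (t : BDT n) : Prop := t.ReadOnceFrom ∅

/-- The vertex set `V(𝒯)`: vertices are identified with their addresses, i.e. the lists
of edge labels leading to them from the root `[]`. -/
def verts : BDT n → Finset (List Bool)
  | .leaf => {[]}
  | .node _ _ child =>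
      insert [] ((verts (child false)).image (false :: ·) ∪
        (verts (child true)).image (true :: ·))

/-- The set of (addresses of) internal vertices. -/
def internals : BDT n → Finset (List Bool)
  | .leaf => ∅
  | .node _ _ child =>
      insert [] ((internals (child false)).image (false :: ·) ∪
        (internals (child true)).image (true :: ·))

/-- The set of (addresses of) leaves. -/
def leaves : BDT n → Finset (List Bool)
  | .leaf => {[]}
  | .node _ _ child =>
      (leaves (child false)).image (false :: ·) ∪ (leaves (child true)).image (true :: ·)

/-- The query index at the vertex with address `v` (`none` if `v` is a leaf). -/
def queryAt : BDT n → List Bool → Option (Fin n)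
  | .leaf, _ => none
  | .node J _ _, [] => some J
  | .node _ _ child, q :: v => queryAt (child q) v

/-- `colorAt t v q` is the color `C(v, q)` of the outgoing edge of the vertex at address
`v` labeled `q` (junk value `true` if `v` is not an internal vertex). -/
def colorAt : BDT n → List Bool → Bool → Bool
  | .leaf, _, _ => true
  | .node _ color _, [], q => color q
  | .node _ _ child, p :: v, q => colorAt (child p) v q

/-- The address of the leaf reached by the computation path `P_x`. -/
def leafAddr : BDT n → (Fin n → Bool) → List Bool
  | .leaf, _ => []
  | .node J _ child, x => x J :: leafAddr (child (x J)) x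

/-- The list of addresses of the internal vertices on the computation path `P_x`. -/
def pathInternals : BDT n → (Fin n → Bool) → List (List Bool)
  | .leaf, _ => []
  | .node J _ child, x => [] :: (pathInternals (child (x J)) x).map (x J :: ·)

/-- The list of colors of the edges of the computation path `P_x`. -/
def pathColors : BDT n → (Fin n → Bool) → List Bool
  | .leaf, _ => []
  | .node J color child, x => color (x J) :: pathColors (child (x J)) x

/-- The standard basis vector `e_v` of `ℂ^{V(𝒯)}` (zero if `v` is not a vertex). -/
noncomputable def evec (t : BDT n) (v : List Bool) :
    EuclideanSpace ℂ {u // u ∈ t.verts} :=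
  if h : v ∈ t.verts then EuclideanSpace.single ⟨v, h⟩ 1 else 0

/-- The input vector `√(W_{C(v,q)})·(e_v − e_{N(v,q)})` of the edge `(v, N(v,q))`, with
weights `W : Bool → ℝ` (`W true = W_black`, `W false = W_red`). -/
noncomputable def inputVec (t : BDT n) (W : Bool → ℝ) (v : List Bool) (q : Bool) :
    EuclideanSpace ℂ {u // u ∈ t.verts} :=
  ((Real.sqrt (W (t.colorAt v q)) : ℝ) : ℂ) • (t.evec v - t.evec (v ++ [q]))

/-- The matrix `A : ℂ^{E(𝒯)} → ℂ^{V(𝒯)}` whose column at the edge `(v, N(v,q))` is the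
input vector of that edge. -/
noncomputable def spanMatrix (t : BDT n) (W : Bool → ℝ) :
    Matrix {u // u ∈ t.verts} ({v // v ∈ t.internals} × Bool) ℂ :=
  Matrix.of fun u e => t.inputVec W e.1.1 e.2 u

end BDT


namespace BDT

variable {n : ℕ}

lemma sum_internals_node {M : Type*} [AddCommMonoid M] (J : Fin n) (c : Bool → Bool)
    (ch : Bool → BDT n) (F : List Bool → M) :
    ∑ v ∈ (BDT.node J c ch).internals, F v
      = F [] + ((∑ v ∈ (ch false).internals, F (false :: v))
        + ∑ v ∈ (ch true).internals, F (true :: v)) := by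
  rw [internals, Finset.sum_insert, Finset.sum_union, Finset.sum_image, Finset.sum_image]
  · simp
  · simp
  · rw [Finset.disjoint_left]
    intro a ha hb
    simp only [Finset.mem_image] at ha hb
    obtain ⟨u, -, rfl⟩ := ha
    obtain ⟨w, -, h⟩ := hb
    simp at h
  · simp

lemma telescope {M : Type*} [AddCommGroup M] (t : BDT n) (x : Fin n → Bool) :
    ∀ g : List Bool → M,
      ∑ v ∈ t.internals, ∑ q : Bool,
        (if v ++ [q] <+: t.leafAddr x then g v - g (v ++ [q]) else 0)
      = g [] - g (t.leafAddr x) := by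
  induction t with
  | leaf => intro g; simp [internals, leafAddr]
  | node J c ch ih =>
    intro g
    rw [leafAddr]
    rw [sum_internals_node J c ch
      (fun v => ∑ q : Bool, (if v ++ [q] <+: x J :: (ch (x J)).leafAddr x
        then g v - g (v ++ [q]) else 0))]
    have h0 : ∑ q : Bool, (if [] ++ [q] <+: x J :: (ch (x J)).leafAddr x
        then g [] - g ([] ++ [q]) else 0) = g [] - g [x J] := by
      cases hx : x J <;> simp [Fintype.sum_bool, List.cons_prefix_cons, hx]
    have hb : ∀ b : Bool, (∑ v ∈ (ch b).internals, ∑ q : Bool,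
        (if (b :: v) ++ [q] <+: x J :: (ch (x J)).leafAddr x
          then g (b :: v) - g ((b :: v) ++ [q]) else 0))
        = if b = x J then g [x J] - g (x J :: (ch (x J)).leafAddr x) else 0 := by
      intro b
      by_cases hbx : b = x J
      · subst hbx
        rw [if_pos rfl]
        have := ih (x J) (fun v => g (x J :: v))
        simpa [List.cons_prefix_cons] using this
      · simp [List.cons_prefix_cons, hbx]
    rw [h0, hb false, hb true]
    cases hx : x J <;> simp

lemma pathSum (t : BDT n) (x : Fin n → Bool) (W : Bool → ℝ) :
    ∑ v ∈ t.internals, ∑ q : Bool,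
      (if v ++ [q] <+: t.leafAddr x then 1 / W (t.colorAt v q) else 0)
      = ((t.pathColors x).map fun c => 1 / W c).sum := by
  induction t with
  | leaf => simp [internals, pathColors]
  | node J c ch ih =>
    rw [leafAddr, pathColors, List.map_cons, List.sum_cons]
    rw [sum_internals_node J c ch
      (fun v => ∑ q : Bool, (if v ++ [q] <+: x J :: (ch (x J)).leafAddr x
        then 1 / W ((BDT.node J c ch).colorAt v q) else 0))]
    have h0 : ∑ q : Bool, (if [] ++ [q] <+: x J :: (ch (x J)).leafAddr x
        then 1 / W ((BDT.node J c ch).colorAt [] q) else 0) = 1 / W (c (x J)) := by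
      cases hx : x J <;> simp [Fintype.sum_bool, List.cons_prefix_cons, hx, colorAt]
    have hb : ∀ b : Bool, (∑ v ∈ (ch b).internals, ∑ q : Bool,
        (if (b :: v) ++ [q] <+: x J :: (ch (x J)).leafAddr x
          then 1 / W ((BDT.node J c ch).colorAt (b :: v) q) else 0))
        = if b = x J then ((((ch (x J)).pathColors x)).map fun d => 1 / W d).sum else 0 := by
      intro b
      by_cases hbx : b = x J
      · subst hbx
        rw [if_pos rfl]
        have := ih (x J)
        simpa [List.cons_prefix_cons, colorAt] using this
      · simp [List.cons_prefix_cons, hbx]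
    rw [h0, hb false, hb true]
    cases hx : x J <;> simp

lemma avail (t : BDT n) (x : Fin n → Bool) :
    ∀ v q, v ++ [q] <+: t.leafAddr x → ∃ J, t.queryAt v = some J ∧ q = x J := by
  induction t with
  | leaf => intro v q h; simp [leafAddr] at h
  | node J c ch ih =>
    rintro (_ | ⟨p, v⟩) q h
    · refine ⟨J, rfl, ?_⟩
      simpa [leafAddr, List.cons_prefix_cons] using h
    · simp only [leafAddr, List.cons_append, List.cons_prefix_cons] at h
      obtain ⟨rfl, h⟩ := h
      exact ih (x J) v q h

lemma length_pathColors (t : BDT n) (x : Fin n → Bool) :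
    (t.pathColors x).length = (t.leafAddr x).length := by
  induction t with
  | leaf => rfl
  | node J c ch ih => simp [pathColors, leafAddr, ih]

lemma list_bound (W : Bool → ℝ) (hb : 0 < W true) (hr : 0 < W false) (l : List Bool) :
    (l.map fun c => 1 / W c).sum ≤ (l.count false : ℝ) / W false + (l.length : ℝ) / W true := by
  induction l with
  | nil => simp
  | cons c l ih =>
    have h1 : 0 < 1 / W true := by positivity
    have h2 : 0 < 1 / W false := by positivity
    cases c
    · simp only [List.map_cons, List.sum_cons, List.count_cons, List.length_cons]
      norm_num
      rw [add_div, add_div]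
      simp only [one_div] at ih h1 h2 ⊢
      linarith [ih, h1.le]
    · simp only [List.map_cons, List.sum_cons, List.count_cons, List.length_cons]
      norm_num
      rw [add_div]
      simp only [one_div] at ih h1 h2 ⊢
      linarith [ih, h1.le]

end BDT

/-- **Positive witness of the span program of Theorem 3.1.**  Let `w_x ∈ ℂ^{E(𝒯)}` have
entry `1/√(W_{C(v, x_{J(v)})})` at each edge of the computation path `P_x` (an edge
`(v, q)` lies on `P_x` iff `v ++ [q]` is a prefix of the address of the leaf of `P_x`)
and entry `0` elsewhere.  Then `w_x` is supported on edges available for `x`, it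
satisfies `A·w_x = e_root − e_{leaf(x)}`, and
`‖w_x‖² = Σ_{v ∈ P_x internal} 1/W_{C(v, x_{J(v)})} ≤ G_x/W_red + T_x/W_black`. -/
theorem stmt7 {n : ℕ} (t : BDT n) (hcol : t.ColorWF) (hro : t.ReadOnce)
    (W : Bool → ℝ) (hWblack : 0 < W true) (hWred : 0 < W false)
    (x : Fin n → Bool)
    (wx : EuclideanSpace ℂ ({v // v ∈ t.internals} × Bool))
    (hwx : ∀ e : {v // v ∈ t.internals} × Bool,
      wx e = if (e.1.1 ++ [e.2]) <+: t.leafAddr x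
        then ((1 / Real.sqrt (W (t.colorAt e.1.1 e.2)) : ℝ) : ℂ) else 0) :
    (∀ e : {v // v ∈ t.internals} × Bool, wx e ≠ 0 →
        ∃ J, t.queryAt e.1.1 = some J ∧ e.2 = x J) ∧
    (∀ u : {u // u ∈ t.verts},
        (t.spanMatrix W).mulVec (fun e => wx e) u
          = (t.evec [] - t.evec (t.leafAddr x)) u) ∧
    ‖wx‖ ^ 2 = ((t.pathColors x).map fun c => 1 / W c).sum ∧
    ((t.pathColors x).map fun c => 1 / W c).sum
      ≤ ((t.pathColors x).count false : ℝ) / W false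
        + ((t.leafAddr x).length : ℝ) / W true := by
  have hne : ∀ c : Bool, Real.sqrt (W c) ≠ 0 := by
    intro c
    cases c
    · exact ne_of_gt (Real.sqrt_pos.2 hWred)
    · exact ne_of_gt (Real.sqrt_pos.2 hWblack)
  refine ⟨?_, ?_, ?_, ?_⟩
  · intro e he
    have hcond : (e.1.1 ++ [e.2]) <+: t.leafAddr x := by
      by_contra hc
      exact he ((hwx e).trans (if_neg hc))
    exact BDT.avail t x e.1.1 e.2 hcond
  · intro u
    have key : ∀ e : {v // v ∈ t.internals} × Bool,
        t.spanMatrix W u e * wx e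
          = if (e.1.1 ++ [e.2]) <+: t.leafAddr x
            then (t.evec e.1.1 u - t.evec (e.1.1 ++ [e.2]) u) else 0 := by
      intro e
      rw [hwx e, BDT.spanMatrix]
      simp only [Matrix.of_apply, BDT.inputVec, PiLp.smul_apply, PiLp.sub_apply,
        smul_eq_mul]
      split
      · have h : (Real.sqrt (W (t.colorAt e.1.1 e.2)) : ℂ) ≠ 0 := by
          exact_mod_cast Complex.ofReal_ne_zero.2 (hne _)
        push_cast
        field_simp
      · exact mul_zero _
    have hmv : (t.spanMatrix W).mulVec (fun e => wx e) u
        = ∑ e : {v // v ∈ t.internals} × Bool, t.spanMatrix W u e * wx e := rfl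
    rw [hmv, Finset.sum_congr rfl fun e _ => key e]
    rw [Fintype.sum_prod_type]
    rw [Finset.sum_coe_sort t.internals (fun v => ∑ q : Bool,
      (if v ++ [q] <+: t.leafAddr x
        then (t.evec v u - t.evec (v ++ [q]) u) else 0))]
    rw [BDT.telescope t x (fun v => t.evec v u)]
    simp [PiLp.sub_apply]
  · have hsq : ∀ e : {v // v ∈ t.internals} × Bool,
        ‖wx e‖ ^ 2 = if (e.1.1 ++ [e.2]) <+: t.leafAddr x
          then 1 / W (t.colorAt e.1.1 e.2) else 0 := by
      intro e
      rw [hwx e]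
      split
      · rw [Complex.norm_real, Real.norm_eq_abs, sq_abs, div_pow, one_pow,
          Real.sq_sqrt]
        cases h : t.colorAt e.1.1 e.2
        · exact hWred.le
        · exact hWblack.le
      · simp
    have hnorm : ‖wx‖ ^ 2 = ∑ e : {v // v ∈ t.internals} × Bool, ‖wx e‖ ^ 2 := by
      have h0 : (0:ℝ) ≤ ∑ e : {v // v ∈ t.internals} × Bool, ‖wx e‖ ^ 2 := by positivity
      rw [EuclideanSpace.norm_eq, Real.sq_sqrt h0]
    rw [hnorm, Finset.sum_congr rfl fun e _ => hsq e, Fintype.sum_prod_type,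
      Finset.sum_coe_sort t.internals (fun v => ∑ q : Bool,
        (if v ++ [q] <+: t.leafAddr x then 1 / W (t.colorAt v q) else 0)),
      BDT.pathSum t x W]
  · rw [← BDT.length_pathColors t x]
    exact BDT.list_bound W hWblack hWred (t.pathColors x)
end

section
/- (Negative witness of the span program of Theorem 3.1.) Let 𝒯 be a binary decision tree with a G-coloring, read-once along paths, with positive weights W_black, W_red. For x ∈ {0,1}^n let P_x be its computation path, leaf(x) its endpoint, T_x the length of P_x and G_x the number of red edges on P_x, and let w̄_x = Σ_{v ∈ P_x} e_v ∈ ℂ^{V(𝒯)}. Then: (a) w̄_x is orthogonal to every input vector that is available for x; (b) ⟨e_r − e_u, w̄_x⟩ = 1 for every leaf u ≠ leaf(x), where r is the root, while ⟨e_r − e_{leaf(x)}, w̄_x⟩ = 0; and (c) ‖A†·w̄_x‖² ≤ W_black·G_x + W_red·T_x, where A† denotes the conjugate transpose of A. -/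
open scoped InnerProductSpace

namespace BDT

variable {n : ℕ}

lemma prefix_mem_verts : ∀ (t : BDT n) (x : Fin n → Bool) (u : List Bool),
    u <+: t.leafAddr x → u ∈ t.verts
  | .leaf, x, u, h => by
      simp [leafAddr] at h; simp [h, verts]
  | .node J c ch, x, [], h => by simp [verts]
  | .node J c ch, x, q :: u, h => by
      rw [leafAddr, List.cons_prefix_cons] at h
      obtain ⟨rfl, h⟩ := h
      have hm := prefix_mem_verts (ch (x J)) x u h
      simp only [verts, Finset.mem_insert, Finset.mem_union, Finset.mem_image]
      cases hx : x J
      · rw [hx] at hm; exact Or.inr (Or.inl ⟨u, hm, rfl⟩)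
      · rw [hx] at hm; exact Or.inr (Or.inr ⟨u, hm, rfl⟩)

lemma pathVerts_eq_inits : ∀ (t : BDT n) (x : Fin n → Bool),
    t.pathInternals x ++ [t.leafAddr x] = (t.leafAddr x).inits
  | .leaf, x => by simp [pathInternals, leafAddr]
  | .node J c ch, x => by
      rw [pathInternals, leafAddr, List.inits_cons, ← pathVerts_eq_inits (ch (x J)) x]
      simp

lemma nodup_inits' {α : Type*} : ∀ l : List α, l.inits.Nodup
  | [] => by simp
  | a :: l => by
      rw [List.inits_cons, List.nodup_cons]
      refine ⟨by simp, (nodup_inits' l).map fun u v h => by injection h⟩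

lemma listSum_apply {ι : Type*} [Fintype ι] (l : List (EuclideanSpace ℂ ι)) (i : ι) :
    l.sum i = (l.map (fun f => f i)).sum := by
  induction l with
  | nil => rfl
  | cons a l ih => simp only [List.sum_cons, List.map_cons, ← ih]; rfl

lemma wbar_apply (t : BDT n) (x : Fin n → Bool) (u : List Bool) (hu : u ∈ t.verts) :
    (((t.pathInternals x).map t.evec).sum + t.evec (t.leafAddr x)) ⟨u, hu⟩
      = if u <+: t.leafAddr x then 1 else 0 := by
  have h1 : ((t.pathInternals x).map t.evec).sum + t.evec (t.leafAddr x)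
      = (((t.pathInternals x ++ [t.leafAddr x]).map t.evec)).sum := by simp
  rw [h1, pathVerts_eq_inits, listSum_apply, List.map_map,
    ← List.sum_toFinset _ (nodup_inits' _)]
  have hcong : ∀ v ∈ (t.leafAddr x).inits.toFinset,
      ((fun f : EuclideanSpace ℂ _ => f ⟨u, hu⟩) ∘ t.evec) v
        = if u = v then (1 : ℂ) else 0 := by
    intro v hv
    rw [List.mem_toFinset, List.mem_inits] at hv
    simp only [Function.comp_apply, evec, dif_pos (prefix_mem_verts t x v hv),
      EuclideanSpace.single_apply]
    simp [Subtype.ext_iff]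
  rw [Finset.sum_congr rfl hcong, Finset.sum_ite_eq]
  simp [List.mem_inits]

lemma inner_evec_wbar (t : BDT n) (x : Fin n → Bool)
    (wbar : EuclideanSpace ℂ {u // u ∈ t.verts})
    (hwbar : wbar = ((t.pathInternals x).map t.evec).sum + t.evec (t.leafAddr x))
    (u : List Bool) :
    ⟪t.evec u, wbar⟫_ℂ = if u <+: t.leafAddr x then 1 else 0 := by
  by_cases hu : u ∈ t.verts
  · rw [evec, dif_pos hu, EuclideanSpace.inner_single_left, map_one, one_mul, hwbar,
      wbar_apply]
  · rw [evec, dif_neg hu, inner_zero_left,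
      if_neg (fun h => hu (prefix_mem_verts t x u h))]

lemma queryAt_step : ∀ (t : BDT n) (x : Fin n → Bool) (v : List Bool) (J : Fin n),
    t.queryAt v = some J → v <+: t.leafAddr x → v ++ [x J] <+: t.leafAddr x
  | .leaf, _, v, J, h, _ => by simp [queryAt] at h
  | .node J0 c ch, x, [], J, h, _ => by
      rw [queryAt, Option.some_inj] at h
      subst h
      rw [leafAddr]
      exact ⟨_, rfl⟩
  | .node J0 c ch, x, q :: v, J, h, hp => by
      rw [queryAt] at h
      rw [leafAddr, List.cons_prefix_cons] at hp
      obtain ⟨rfl, hp⟩ := hp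
      rw [leafAddr, List.cons_append, List.cons_prefix_cons]
      exact ⟨rfl, queryAt_step (ch (x J0)) x v J h hp⟩

lemma leaf_prefix_eq : ∀ (t : BDT n) (x : Fin n → Bool) (u : List Bool),
    u ∈ t.leaves → u <+: t.leafAddr x → u = t.leafAddr x
  | .leaf, x, u, hu, hp => by
      simp [leaves] at hu; simp [hu, leafAddr]
  | .node J c ch, x, u, hu, hp => by
      simp only [leaves, Finset.mem_union, Finset.mem_image] at hu
      rw [leafAddr] at hp ⊢
      obtain ⟨u', hu', rfl⟩ | ⟨u', hu', rfl⟩ := hu <;>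
      · rw [List.cons_prefix_cons] at hp
        obtain ⟨h1, hp⟩ := hp
        rw [← h1] at hp ⊢
        rw [leaf_prefix_eq _ x u' hu' hp]

noncomputable def offPathW (W : Bool → ℝ) : BDT n → (Fin n → Bool) → List ℝ
  | .leaf, _ => []
  | .node J color child, x => W (color (!x J)) :: offPathW W (child (x J)) x

lemma offPathW_le (W : Bool → ℝ) (hb : 0 < W true) (hr : 0 < W false) :
    ∀ (t : BDT n) (x : Fin n → Bool), t.ColorWF →
    (offPathW W t x).sum
      ≤ W true * ((t.pathColors x).count false : ℝ)
        + W false * ((t.leafAddr x).length : ℝ)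
  | .leaf, x, _ => by simp [offPathW, pathColors, leafAddr]
  | .node J c ch, x, hwf => by
      obtain ⟨h1, h2⟩ := hwf
      have IH := offPathW_le W hb hr (ch (x J)) x (h2 (x J))
      rw [offPathW, pathColors, leafAddr, List.sum_cons, List.count_cons,
        List.length_cons]
      push_cast
      cases hct : c true <;> cases hcf : c false <;> cases hxJ : x J <;>
        simp_all <;> nlinarith [IH]

lemma sum_F (W : Bool → ℝ) : ∀ (t : BDT n) (x : Fin n → Bool),
    (∑ v ∈ t.internals, ∑ q : Bool,
        (if v <+: t.leafAddr x ∧ ¬(v ++ [q] <+: t.leafAddr x)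
          then W (t.colorAt v q) else 0))
      = (offPathW W t x).sum
  | .leaf, x => by simp [internals, offPathW]
  | .node J c ch, x => by
      rw [internals, offPathW, List.sum_cons]
      rw [Finset.sum_insert (by simp)]
      rw [Finset.sum_union (by
        simp only [Finset.disjoint_left, Finset.mem_image]
        rintro a ⟨u, _, rfl⟩ ⟨u', _, h⟩
        exact Bool.false_ne_true (List.head_eq_of_cons_eq h.symm ▸ rfl) )]
      have himg : ∀ b : Bool,
          ∑ v ∈ (internals (ch b)).image (b :: ·), ∑ q : Bool,
            (if v <+: leafAddr (node J c ch) x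
                ∧ ¬(v ++ [q] <+: leafAddr (node J c ch) x)
              then W (colorAt (node J c ch) v q) else 0)
          = if b = x J then (offPathW W (ch (x J)) x).sum else 0 := by
        intro b
        rw [Finset.sum_image (by intro a _ a' _ h; injection h)]
        by_cases hb : b = x J
        · subst hb
          rw [if_pos rfl, ← sum_F W (ch (x J)) x]
          apply Finset.sum_congr rfl
          intro v hv
          apply Finset.sum_congr rfl
          intro q _
          rw [leafAddr, colorAt]
          simp [List.cons_prefix_cons]
        · rw [if_neg hb]
          apply Finset.sum_eq_zero
          intro v hv
          apply Finset.sum_eq_zero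
          intro q _
          rw [if_neg]
          rintro ⟨hp, -⟩
          rw [leafAddr, List.cons_prefix_cons] at hp
          exact hb hp.1
      rw [himg false, himg true]
      have hhead : ∑ q : Bool,
          (if [] <+: leafAddr (node J c ch) x
              ∧ ¬([] ++ [q] <+: leafAddr (node J c ch) x)
            then W (colorAt (node J c ch) [] q) else 0)
          = W (c (!x J)) := by
        rw [Fintype.sum_bool]
        rw [leafAddr]
        cases hxJ : x J <;>
          simp [colorAt, List.cons_prefix_cons, List.nil_prefix, hxJ]
      rw [hhead]
      cases hxJ : x J <;> simp [hxJ]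

end BDT

/-- **Negative witness of the span program of Theorem 3.1.**  Let
`w̄_x = Σ_{v ∈ P_x} e_v ∈ ℂ^{V(𝒯)}` (sum over all vertices of the computation path `P_x`,
internal vertices and the leaf).  Then (a) `w̄_x` is orthogonal to every input vector
available for `x`; (b) `⟨e_root − e_u, w̄_x⟩ = 1` for every leaf `u ≠ leaf(x)`, while
`⟨e_root − e_{leaf(x)}, w̄_x⟩ = 0`; and (c)
`‖A†·w̄_x‖² ≤ W_black·G_x + W_red·T_x`. -/
theorem stmt8 {n : ℕ} (t : BDT n) (hcol : t.ColorWF) (hro : t.ReadOnce)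
    (W : Bool → ℝ) (hWblack : 0 < W true) (hWred : 0 < W false)
    (x : Fin n → Bool)
    (wbar : EuclideanSpace ℂ {u // u ∈ t.verts})
    (hwbar : wbar = ((t.pathInternals x).map t.evec).sum + t.evec (t.leafAddr x)) :
    (∀ v ∈ t.internals, ∀ J, t.queryAt v = some J →
        ⟪t.inputVec W v (x J), wbar⟫_ℂ = 0) ∧
    (∀ u ∈ t.leaves, u ≠ t.leafAddr x → ⟪t.evec [] - t.evec u, wbar⟫_ℂ = 1) ∧
    ⟪t.evec [] - t.evec (t.leafAddr x), wbar⟫_ℂ = 0 ∧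
    ∑ e : {v // v ∈ t.internals} × Bool,
        ‖(t.spanMatrix W).conjTranspose.mulVec (fun u => wbar u) e‖ ^ 2
      ≤ W true * ((t.pathColors x).count false : ℝ)
        + W false * ((t.leafAddr x).length : ℝ) := by
  have key : ∀ v q, ⟪t.inputVec W v q, wbar⟫_ℂ
      = ((Real.sqrt (W (t.colorAt v q)) : ℝ) : ℂ) *
        ((if v <+: t.leafAddr x then 1 else 0)
          - (if v ++ [q] <+: t.leafAddr x then 1 else 0)) := by
    intro v q
    rw [BDT.inputVec, inner_smul_left, inner_sub_left,
      BDT.inner_evec_wbar t x wbar hwbar, BDT.inner_evec_wbar t x wbar hwbar,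
      Complex.conj_ofReal]
  refine ⟨?_, ?_, ?_, ?_⟩
  · intro v hv J hJ
    rw [key]
    by_cases hp : v <+: t.leafAddr x
    · rw [if_pos hp, if_pos (BDT.queryAt_step t x v J hJ hp), sub_self, mul_zero]
    · rw [if_neg hp, if_neg (fun h => hp ((v.prefix_append [x J]).trans h)),
        sub_self, mul_zero]
  · intro u hu hne
    rw [inner_sub_left, BDT.inner_evec_wbar t x wbar hwbar,
      BDT.inner_evec_wbar t x wbar hwbar,
      if_pos List.nil_prefix,
      if_neg (fun h => hne (BDT.leaf_prefix_eq t x u hu h)), sub_zero]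
  · rw [inner_sub_left, BDT.inner_evec_wbar t x wbar hwbar,
      BDT.inner_evec_wbar t x wbar hwbar,
      if_pos List.nil_prefix, if_pos (List.prefix_refl _), sub_self]
  · have hW : ∀ b, (0:ℝ) ≤ W b := fun b => by
      cases b; exacts [hWred.le, hWblack.le]
    have hmv : ∀ (e : {v // v ∈ t.internals} × Bool),
        (t.spanMatrix W).conjTranspose.mulVec (fun u => wbar u) e
          = ⟪t.inputVec W e.1.1 e.2, wbar⟫_ℂ := by
      intro e
      rw [PiLp.inner_apply]
      simp only [Matrix.mulVec, dotProduct, Matrix.conjTranspose_apply,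
        BDT.spanMatrix, Matrix.of_apply, RCLike.inner_apply]
      exact Finset.sum_congr rfl fun _ _ => mul_comm _ _
    have hterm : ∀ (e : {v // v ∈ t.internals} × Bool),
        ‖(t.spanMatrix W).conjTranspose.mulVec (fun u => wbar u) e‖ ^ 2
          = (if e.1.1 <+: t.leafAddr x ∧ ¬(e.1.1 ++ [e.2] <+: t.leafAddr x)
              then W (t.colorAt e.1.1 e.2) else 0) := by
      intro e
      obtain ⟨⟨v, hv⟩, q⟩ := e
      rw [hmv, key]
      by_cases h2 : v ++ [q] <+: t.leafAddr x
      · rw [if_pos ((v.prefix_append [q]).trans h2), if_pos h2, sub_self, mul_zero,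
          if_neg (by simp [h2])]
        simp
      · by_cases h1 : v <+: t.leafAddr x
        · rw [if_pos h1, if_neg h2, sub_zero, mul_one, if_pos ⟨h1, h2⟩]
          simp [Complex.norm_real, abs_of_nonneg (Real.sqrt_nonneg _),
            Real.sq_sqrt (hW _)]
        · rw [if_neg h1, if_neg h2, sub_self, mul_zero, if_neg (by simp [h1])]
          simp
    calc ∑ e : {v // v ∈ t.internals} × Bool,
          ‖(t.spanMatrix W).conjTranspose.mulVec (fun u => wbar u) e‖ ^ 2
        = ∑ e : {v // v ∈ t.internals} × Bool,
            (if e.1.1 <+: t.leafAddr x ∧ ¬(e.1.1 ++ [e.2] <+: t.leafAddr x)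
              then W (t.colorAt e.1.1 e.2) else 0) :=
          Finset.sum_congr rfl (fun e _ => hterm e)
      _ = ∑ v : {v // v ∈ t.internals}, ∑ q : Bool,
            (if (v : List Bool) <+: t.leafAddr x
                ∧ ¬((v : List Bool) ++ [q] <+: t.leafAddr x)
              then W (t.colorAt v q) else 0) := by
          rw [Fintype.sum_prod_type]
      _ = ∑ v ∈ t.internals, ∑ q : Bool,
            (if v <+: t.leafAddr x ∧ ¬(v ++ [q] <+: t.leafAddr x)
              then W (t.colorAt v q) else 0) := by
          exact Finset.sum_coe_sort t.internals
            (fun v => ∑ q : Bool,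
              (if v <+: t.leafAddr x ∧ ¬(v ++ [q] <+: t.leafAddr x)
                then W (t.colorAt v q) else 0))
      _ = (BDT.offPathW W t x).sum := BDT.sum_F W t x
      _ ≤ _ := BDT.offPathW_le W hWblack hWred t x hcol
end
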